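/- arXiv:1501.03986 — 6 statements merged into one kernel-verified Lean document; each statement's English description precedes it below -/
import Mathlib

section
/- Let X be a perfect, compact plane set, let w ∈ X, and let f ∈ D¹(X) with f(w) = 0. Then there is a unique g ∈ D¹(X) with g(w) = 0 and g'(w) = 0 such that f(z)³ = (z − w)·g(z) for all z ∈ X. -/
open Complex Set

/-- The uniform norm of `f` on `X`. -/
noncomputable def UnifNorm (X : Set ℂ) (f : ℂ → ℂ) : ℝ :=
  sSup ((fun z => ‖f z‖) '' X)

/-- `f` is continuously differentiable on `X` with derivative `f'`
(derivative taken as a limit within `X`). -/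
def HasD1 (X : Set ℂ) (f f' : ℂ → ℂ) : Prop :=
  (∀ z ∈ X, HasDerivWithinAt f (f' z) X z) ∧ ContinuousOn f' X

/-- The `D¹`-norm `|f|_X + |f'|_X`. -/
noncomputable def DNorm (X : Set ℂ) (f f' : ℂ → ℂ) : ℝ :=
  UnifNorm X f + UnifNorm X f'

/-- If `f ∈ D¹(X)` vanishes at `w ∈ X`, then there is a unique `g ∈ D¹(X)` with
`g(w) = 0` and `g'(w) = 0` such that `f(z)³ = (z − w)·g(z)` on `X`. -/
theorem stmt3 (X : Set ℂ) (hXc : IsCompact X) (hXne : X.Nonempty) (hXp : Perfect X)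
    (w : ℂ) (hw : w ∈ X) (f f' : ℂ → ℂ) (hf : HasD1 X f f') (hfw : f w = 0) :
    ∃ g g' : ℂ → ℂ, HasD1 X g g' ∧ g w = 0 ∧ g' w = 0 ∧
      (∀ z ∈ X, f z ^ 3 = (z - w) * g z) ∧
      (∀ g₂ g₂' : ℂ → ℂ, HasD1 X g₂ g₂' → g₂ w = 0 → g₂' w = 0 →
        (∀ z ∈ X, f z ^ 3 = (z - w) * g₂ z) → ∀ z ∈ X, g₂ z = g z) := by
  classical
  set g : ℂ → ℂ := fun z => f z ^ 3 / (z - w) with hg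
  set g' : ℂ → ℂ := fun z => 3 * f z ^ 2 * f' z / (z - w) - f z ^ 3 / (z - w) ^ 2 with hg'
  have hgw : g w = 0 := by simp [hg, hfw]
  have hg'w : g' w = 0 := by simp [hg', hfw]
  have hfcont : ContinuousOn f X := fun a ha => (hf.1 a ha).continuousWithinAt
  -- slope of f at w tends to f' w
  have hq : Filter.Tendsto (slope f w) (nhdsWithin w (X \ {w})) (nhds (f' w)) :=
    hasDerivWithinAt_iff_tendsto_slope.mp (hf.1 w hw)
  have hfc0 : Filter.Tendsto f (nhdsWithin w (X \ {w})) (nhds 0) := by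
    have h := (hfcont w hw).tendsto
    rw [hfw] at h
    exact h.mono_left (nhdsWithin_mono _ diff_subset)
  have hf'c : Filter.Tendsto f' (nhdsWithin w (X \ {w})) (nhds (f' w)) :=
    ((hf.2 w hw).tendsto).mono_left (nhdsWithin_mono _ diff_subset)
  -- derivative of g at w is 0
  have hgder_w : HasDerivWithinAt g 0 X w := by
    rw [hasDerivWithinAt_iff_tendsto_slope]
    have h1 : Filter.Tendsto (fun z => slope f w z * slope f w z * f z)
        (nhdsWithin w (X \ {w})) (nhds (f' w * f' w * 0)) := (hq.mul hq).mul hfc0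
    rw [mul_zero] at h1
    refine Filter.Tendsto.congr' ?_ h1
    filter_upwards [self_mem_nhdsWithin] with z hz
    have hzw : z - w ≠ 0 := sub_ne_zero.mpr hz.2
    simp only [slope_def_field, hfw, hgw, sub_zero, hg]
    field_simp
    ring
  -- derivative of g elsewhere
  have hgder : ∀ z ∈ X, HasDerivWithinAt g (g' z) X z := by
    intro z hz
    by_cases hzw : z = w
    · subst hzw
      rw [hg'w]
      exact hgder_w
    · have hzw' : z - w ≠ 0 := sub_ne_zero.mpr hzw
      have h2 : HasDerivWithinAt (fun z' => z' - w) 1 X z :=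
        (hasDerivWithinAt_id z X).sub_const w
      have h3 := ((hf.1 z hz).pow 3).div h2 hzw'
      refine h3.congr_deriv ?_
      push_cast
      simp only [hg', Pi.pow_apply, Nat.add_one_sub_one]
      field_simp
  -- continuity of g'
  have hg'cont : ContinuousOn g' X := by
    intro z hz
    by_cases hzw : z = w
    · rw [hzw, ← continuousWithinAt_diff_self, ContinuousWithinAt, hg'w]
      have h1 : Filter.Tendsto
          (fun z => 3 * slope f w z * f z * f' z - slope f w z * slope f w z * f z)
          (nhdsWithin w (X \ {w}))
          (nhds (3 * f' w * 0 * f' w - f' w * f' w * 0)) :=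
        (((hq.const_mul 3).mul hfc0).mul hf'c).sub ((hq.mul hq).mul hfc0)
      simp only [mul_zero, zero_mul, sub_zero] at h1
      refine Filter.Tendsto.congr' ?_ h1
      filter_upwards [self_mem_nhdsWithin] with y hy
      have hyz : y - w ≠ 0 := sub_ne_zero.mpr hy.2
      simp only [slope_def_field, hfw, sub_zero, hg']
      field_simp
    · have hzw' : z - w ≠ 0 := sub_ne_zero.mpr hzw
      have hden : ContinuousWithinAt (fun z' : ℂ => z' - w) X z :=
        (continuous_id.sub continuous_const).continuousWithinAt
      exact ((((continuousWithinAt_const.mul ((hfcont z hz).pow 2)).mul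
        (hf.2 z hz)).div hden hzw').sub
        (((hfcont z hz).pow 3).div (hden.pow 2) (pow_ne_zero 2 hzw')))
  refine ⟨g, g', ⟨hgder, hg'cont⟩, hgw, hg'w, ?_, ?_⟩
  · intro z hz
    by_cases hzw : z = w
    · subst hzw; simp [hgw, hfw]
    · have hzw' : z - w ≠ 0 := sub_ne_zero.mpr hzw
      simp only [hg]
      field_simp
  · intro g₂ g₂' _ hg₂w _ hprod z hz
    by_cases hzw : z = w
    · subst hzw; rw [hg₂w, hgw]
    · have hzw' : z - w ≠ 0 := sub_ne_zero.mpr hzw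
      have := hprod z hz
      simp only [hg]; rw [eq_div_iff hzw']
      rw [this]
      ring
end

section
/- Let X be a semi-rectifiable compact plane set and let ℱ be an effective family of paths in X. Then ℱ-derivatives are unique: if g₁ and g₂ are both ℱ-derivatives of f ∈ C(X), then g₁ = g₂. -/
open Complex Set

/-- A rectifiable path in `X` : a continuous map of bounded variation on `[a,b]` into `X`. -/
structure RectPath (X : Set ℂ) where
  a : ℝ
  b : ℝ
  hab : a < b
  toFun : ℝ → ℂ
  cont : ContinuousOn toFun (Set.Icc a b)
  maps : Set.MapsTo toFun (Set.Icc a b) X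
  bv : BoundedVariationOn toFun (Set.Icc a b)

/-- `I` is the Riemann–Stieltjes integral `∫_γ g(z) dz` over `γ|_{[a,b]}`:
Riemann–Stieltjes sums over tagged partitions of sufficiently small mesh approximate `I`. -/
def IsRSIntegral (γ : ℝ → ℂ) (a b : ℝ) (g : ℂ → ℂ) (I : ℂ) : Prop :=
  ∀ ε > (0:ℝ), ∃ δ > (0:ℝ), ∀ n : ℕ, ∀ t s : ℕ → ℝ,
    t 0 = a → t n = b → (∀ i < n, t i ≤ t (i + 1)) → (∀ i < n, t (i + 1) - t i < δ) →
    (∀ i < n, s i ∈ Set.Icc (t i) (t (i + 1))) →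
    ‖(∑ i ∈ Finset.range n, g (γ (s i)) * (γ (t (i + 1)) - γ (t i))) - I‖ < ε

/-- `g` is an `ℱ`-derivative of `f`. -/
def IsFDerivOf {X : Set ℂ} (F : Set (RectPath X)) (f g : ℂ → ℂ) : Prop :=
  ∀ γ ∈ F, IsRSIntegral γ.toFun γ.a γ.b g (f (γ.toFun γ.b) - f (γ.toFun γ.a))

/-- `γ` has no constant subpaths. -/
def NoConstantSubpath {X : Set ℂ} (γ : RectPath X) : Prop :=
  ∀ c d, γ.a ≤ c → c < d → d ≤ γ.b → ∃ t ∈ Set.Icc c d, γ.toFun t ≠ γ.toFun c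

/-- `η` is a subpath of `γ` : the restriction of `γ` to a non-degenerate closed
subinterval of the parameter interval of `γ`. -/
def IsSubpathOf {X : Set ℂ} (η γ : RectPath X) : Prop :=
  γ.a ≤ η.a ∧ η.b ≤ γ.b ∧ ∀ t ∈ Set.Icc η.a η.b, η.toFun t = γ.toFun t

/-- A family `F` of paths in `X` is effective: each path is admissible (rectifiable with
no constant subpaths), `F` is closed under subpaths, and the union of the images of the
paths in `F` is dense in `X`. -/
def Effective {X : Set ℂ} (F : Set (RectPath X)) : Prop :=
  (∀ γ ∈ F, NoConstantSubpath γ) ∧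
  (∀ γ ∈ F, ∀ η : RectPath X, IsSubpathOf η γ → η ∈ F) ∧
  X ⊆ closure (⋃ γ ∈ F, γ.toFun '' Set.Icc γ.a γ.b)

/-- `X` is semi-rectifiable: the union of all rectifiable Jordan arcs in `X` is dense
in `X`. -/
def SemiRectifiable (X : Set ℂ) : Prop :=
  X ⊆ closure {z | ∃ γ : RectPath X, Set.InjOn γ.toFun (Set.Icc γ.a γ.b) ∧
    z ∈ γ.toFun '' Set.Icc γ.a γ.b}


/-- A uniform partition of `[u,v]` with mesh `< δ`. -/
lemma exists_fine_partition {u v δ : ℝ} (huv : u < v) (hδ : 0 < δ) :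
    ∃ n : ℕ, ∃ t : ℕ → ℝ, Monotone t ∧ t 0 = u ∧ t n = v ∧ (∀ i, t i ∈ Set.Icc u v) ∧
      (∀ i < n, t (i + 1) - t i < δ) ∧ (∀ i < n, t i ≤ t (i + 1)) := by
  obtain ⟨n₀, hn₀⟩ := exists_nat_gt ((v - u) / δ)
  refine ⟨n₀ + 1, ?_⟩
  set n : ℕ := n₀ + 1 with hndef
  clear_value n
  have hnpos : (0 : ℝ) < n := by rw [hndef]; positivity
  have hvu : (0 : ℝ) < v - u := by linarith
  have hmesh : (v - u) / n < δ := by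
    rw [div_lt_iff₀ hnpos]
    have h2 : (v - u) / δ < n := lt_of_lt_of_le hn₀ (by rw [hndef]; exact_mod_cast Nat.le_succ n₀)
    rw [div_lt_iff₀ hδ] at h2
    linarith
  set Δ : ℝ := (v - u) / n with hΔdef
  have hΔpos : 0 < Δ := div_pos hvu hnpos
  refine ⟨fun i => u + min (i : ℝ) (n : ℝ) * Δ, ?_, ?_, ?_, ?_, ?_, ?_⟩
  · intro i j hij
    have h : min (i : ℝ) (n : ℝ) ≤ min (j : ℝ) (n : ℝ) :=
      min_le_min (by exact_mod_cast hij) le_rfl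
    have := mul_le_mul_of_nonneg_right h hΔpos.le
    simpa using add_le_add_left this u
  · dsimp only
    rw [Nat.cast_zero, min_eq_left hnpos.le, zero_mul, add_zero]
  · dsimp only
    rw [min_self, hΔdef]
    field_simp
    ring
  · intro i
    dsimp only
    constructor
    · have h0 : (0 : ℝ) ≤ min (i : ℝ) (n : ℝ) := le_min (by positivity) hnpos.le
      nlinarith
    · have h0 : min (i : ℝ) (n : ℝ) ≤ (n : ℝ) := min_le_right _ _
      have := mul_le_mul_of_nonneg_right h0 hΔpos.le
      have hnv : (n : ℝ) * Δ = v - u := by rw [hΔdef]; field_simp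
      nlinarith
  · intro i hi
    dsimp only
    have h2 : ((i + 1 : ℕ) : ℝ) ≤ (n : ℝ) := by exact_mod_cast hi
    have h1 : ((i : ℕ) : ℝ) ≤ (n : ℝ) := by exact_mod_cast hi.le
    rw [min_eq_left h2, min_eq_left h1]
    have hstep : u + ((i + 1 : ℕ) : ℝ) * Δ - (u + (i : ℝ) * Δ) = Δ := by push_cast; ring
    rw [hstep]
    exact hmesh
  · intro i hi
    dsimp only
    have h2 : ((i + 1 : ℕ) : ℝ) ≤ (n : ℝ) := by exact_mod_cast hi
    have h1 : ((i : ℕ) : ℝ) ≤ (n : ℝ) := by exact_mod_cast hi.le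
    rw [min_eq_left h2, min_eq_left h1]
    have : ((i : ℕ) : ℝ) ≤ ((i + 1 : ℕ) : ℝ) := by exact_mod_cast Nat.le_succ i
    nlinarith

lemma evar_sum_Icc (f : ℝ → ℂ) (x : ℕ → ℝ) (hx : Monotone x) (n : ℕ) :
    ∑ i ∈ Finset.range n, eVariationOn f (Set.Icc (x i) (x (i + 1)))
      ≤ eVariationOn f (Set.Icc (x 0) (x n)) := by
  induction n with
  | zero => simp
  | succ n ih =>
    rw [Finset.sum_range_succ]
    have h := eVariationOn.Icc_add_Icc f (s := (univ : Set ℝ)) (hx (Nat.zero_le n))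
      (hx n.le_succ) (mem_univ _)
    simp only [univ_inter] at h
    calc ∑ i ∈ Finset.range n, eVariationOn f (Set.Icc (x i) (x (i + 1)))
          + eVariationOn f (Set.Icc (x n) (x (n + 1)))
        ≤ eVariationOn f (Set.Icc (x 0) (x n)) + eVariationOn f (Set.Icc (x n) (x (n + 1))) :=
          add_le_add_left ih _
      _ = _ := h

/-- `ℱ`-derivatives are unique when `X` is semi-rectifiable and `ℱ` is effective. -/
theorem stmt5 (X : Set ℂ) (hXc : IsCompact X) (hXne : X.Nonempty)
    (hsr : SemiRectifiable X) (F : Set (RectPath X)) (hF : Effective F)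
    (f g₁ g₂ : ℂ → ℂ) (hf : ContinuousOn f X)
    (hg₁ : ContinuousOn g₁ X) (hg₂ : ContinuousOn g₂ X)
    (h1 : IsFDerivOf F f g₁) (h2 : IsFDerivOf F f g₂) :
    Set.EqOn g₁ g₂ X := by
  classical
  set S : Set ℂ := ⋃ γ ∈ F, γ.toFun '' Set.Icc γ.a γ.b with hSdef
  have hmain : ∀ γ ∈ F, ∀ t₀ ∈ Set.Icc γ.a γ.b, g₁ (γ.toFun t₀) = g₂ (γ.toFun t₀) := by
    intro γ hγ t₀ ht₀
    by_contra hne0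
    set z₀ : ℂ := γ.toFun t₀ with hz₀def
    set m : ℝ := ‖g₁ z₀ - g₂ z₀‖ with hmdef
    have hm : 0 < m := by
      rw [hmdef]
      exact norm_pos_iff.mpr (sub_ne_zero.mpr hne0)
    have hz₀X : z₀ ∈ X := γ.maps ht₀
    obtain ⟨r, hr, hrball⟩ :=
      Metric.continuousWithinAt_iff.mp ((hg₁.sub hg₂) z₀ hz₀X) (m / 2) (half_pos hm)
    obtain ⟨ρ, hρ, hρball⟩ := Metric.continuousWithinAt_iff.mp (γ.cont t₀ ht₀) r hr
    set c : ℝ := max γ.a (t₀ - ρ / 2) with hcdef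
    set d : ℝ := min γ.b (t₀ + ρ / 2) with hddef
    have hac : γ.a ≤ c := le_max_left _ _
    have hdb : d ≤ γ.b := min_le_left _ _
    have hcd : c < d := by
      have h1' := ht₀.1
      have h2' := ht₀.2
      exact max_lt (lt_min γ.hab (by linarith)) (lt_min (by linarith) (by linarith))
    have hballX : ∀ t ∈ Set.Icc c d, γ.toFun t ∈ X := fun t ht =>
      γ.maps (Icc_subset_Icc hac hdb ht)
    have hsmall : ∀ t ∈ Set.Icc c d,
        ‖g₁ z₀ - g₂ z₀ - (g₁ (γ.toFun t) - g₂ (γ.toFun t))‖ ≤ m / 2 := by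
      intro t ht
      have htab : t ∈ Set.Icc γ.a γ.b := Icc_subset_Icc hac hdb ht
      have htρ : dist t t₀ < ρ := by
        have hc' : t₀ - ρ / 2 ≤ c := le_max_right _ _
        have hd' : d ≤ t₀ + ρ / 2 := min_le_right _ _
        rw [Real.dist_eq, abs_lt]
        constructor
        · linarith [ht.1]
        · linarith [ht.2]
      have hdγ : dist (γ.toFun t) z₀ < r := hρball htab htρ
      have hd2 : dist (g₁ (γ.toFun t) - g₂ (γ.toFun t)) (g₁ z₀ - g₂ z₀) < m / 2 :=
        hrball (hballX t ht) hdγ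
      rw [Complex.dist_eq] at hd2
      calc ‖g₁ z₀ - g₂ z₀ - (g₁ (γ.toFun t) - g₂ (γ.toFun t))‖
          = ‖g₁ (γ.toFun t) - g₂ (γ.toFun t) - (g₁ z₀ - g₂ z₀)‖ :=
            norm_sub_rev _ _
        _ ≤ m / 2 := hd2.le
    have hB : ∀ u v : ℝ, c ≤ u → u < v → v ≤ d →
        ‖γ.toFun v - γ.toFun u‖
          ≤ (eVariationOn γ.toFun (Set.Icc u v)).toReal / 2 := by
      intro u v hcu huv hvd
      have hau : γ.a ≤ u := le_trans hac hcu
      have hvb : v ≤ γ.b := le_trans hvd hdb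
      have hsub : Set.Icc u v ⊆ Set.Icc γ.a γ.b := Icc_subset_Icc hau hvb
      have hsubcd : Set.Icc u v ⊆ Set.Icc c d := Icc_subset_Icc hcu hvd
      have hfin : eVariationOn γ.toFun (Set.Icc u v) ≠ ⊤ := γ.bv.mono hsub
      have key : ∀ ε > (0:ℝ), m * ‖γ.toFun v - γ.toFun u‖
          ≤ m / 2 * (eVariationOn γ.toFun (Set.Icc u v)).toReal + ε := by
        intro ε hε
        have hηF : (⟨u, v, huv, γ.toFun, γ.cont.mono hsub, γ.maps.mono_left hsub,
            γ.bv.mono hsub⟩ : RectPath X) ∈ F :=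
          hF.2.1 γ hγ _ ⟨hau, hvb, fun t _ => rfl⟩
        obtain ⟨δ₁, hδ₁, H₁⟩ := h1 _ hηF (ε / 2) (half_pos hε)
        obtain ⟨δ₂, hδ₂, H₂⟩ := h2 _ hηF (ε / 2) (half_pos hε)
        obtain ⟨n, t, htmono, ht0, htn, htmem, htδ, htle⟩ :=
          exists_fine_partition huv (lt_min hδ₁ hδ₂)
        have hS₁ : ‖(∑ i ∈ Finset.range n,
            g₁ (γ.toFun (t i)) * (γ.toFun (t (i + 1)) - γ.toFun (t i)))
              - (f (γ.toFun v) - f (γ.toFun u))‖ < ε / 2 :=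
          H₁ n t t ht0 htn htle (fun i hi => (htδ i hi).trans_le (min_le_left _ _))
            (fun i hi => ⟨le_rfl, htle i hi⟩)
        have hS₂ : ‖(∑ i ∈ Finset.range n,
            g₂ (γ.toFun (t i)) * (γ.toFun (t (i + 1)) - γ.toFun (t i)))
              - (f (γ.toFun v) - f (γ.toFun u))‖ < ε / 2 :=
          H₂ n t t ht0 htn htle (fun i hi => (htδ i hi).trans_le (min_le_right _ _))
            (fun i hi => ⟨le_rfl, htle i hi⟩)
        set I : ℂ := f (γ.toFun v) - f (γ.toFun u) with hIdef
        set Sh : ℂ := ∑ i ∈ Finset.range n,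
          (g₁ (γ.toFun (t i)) - g₂ (γ.toFun (t i)))
            * (γ.toFun (t (i + 1)) - γ.toFun (t i)) with hShdef
        have hdiff : ‖Sh‖ < ε := by
          have hsplit : Sh = ((∑ i ∈ Finset.range n,
              g₁ (γ.toFun (t i)) * (γ.toFun (t (i + 1)) - γ.toFun (t i))) - I)
                - ((∑ i ∈ Finset.range n,
              g₂ (γ.toFun (t i)) * (γ.toFun (t (i + 1)) - γ.toFun (t i))) - I) := by
            rw [hShdef]
            simp only [sub_mul]
            rw [Finset.sum_sub_distrib]
            ring
          rw [hsplit]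
          calc ‖((∑ i ∈ Finset.range n,
              g₁ (γ.toFun (t i)) * (γ.toFun (t (i + 1)) - γ.toFun (t i))) - I)
                - ((∑ i ∈ Finset.range n,
              g₂ (γ.toFun (t i)) * (γ.toFun (t (i + 1)) - γ.toFun (t i))) - I)‖
              ≤ ‖(∑ i ∈ Finset.range n,
                  g₁ (γ.toFun (t i)) * (γ.toFun (t (i + 1)) - γ.toFun (t i))) - I‖
                + ‖(∑ i ∈ Finset.range n,
                  g₂ (γ.toFun (t i)) * (γ.toFun (t (i + 1)) - γ.toFun (t i))) - I‖ :=
              norm_sub_le _ _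
            _ < ε / 2 + ε / 2 := by
              refine add_lt_add ?_ ?_
              · exact hS₁
              · exact hS₂
            _ = ε := add_halves ε
        have htel : (∑ i ∈ Finset.range n, (γ.toFun (t (i + 1)) - γ.toFun (t i)))
            = γ.toFun v - γ.toFun u := by
          rw [Finset.sum_range_sub (fun i => γ.toFun (t i)) n, ht0, htn]
        have hsum_abs : ∑ i ∈ Finset.range n,
            ‖γ.toFun (t (i + 1)) - γ.toFun (t i)‖
              ≤ (eVariationOn γ.toFun (Set.Icc u v)).toReal := by
          have hle := eVariationOn.sum_le (f := γ.toFun) (n := n) htmono htmem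
          calc ∑ i ∈ Finset.range n, ‖γ.toFun (t (i + 1)) - γ.toFun (t i)‖
              = ∑ i ∈ Finset.range n, (edist (γ.toFun (t (i + 1))) (γ.toFun (t i))).toReal := by
                refine Finset.sum_congr rfl fun i _ => ?_
                rw [edist_dist, ENNReal.toReal_ofReal dist_nonneg, Complex.dist_eq]
            _ = (∑ i ∈ Finset.range n, edist (γ.toFun (t (i + 1))) (γ.toFun (t i))).toReal :=
                (ENNReal.toReal_sum fun i _ => edist_ne_top _ _).symm
            _ ≤ _ := ENNReal.toReal_mono hfin hle
        calc m * ‖γ.toFun v - γ.toFun u‖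
            = ‖∑ i ∈ Finset.range n,
                (g₁ z₀ - g₂ z₀) * (γ.toFun (t (i + 1)) - γ.toFun (t i))‖ := by
              rw [hmdef, ← Finset.mul_sum, htel, norm_mul]
          _ ≤ ‖∑ i ∈ Finset.range n,
                ((g₁ z₀ - g₂ z₀) - (g₁ (γ.toFun (t i)) - g₂ (γ.toFun (t i))))
                  * (γ.toFun (t (i + 1)) - γ.toFun (t i))‖ + ‖Sh‖ := by
              have hsplit2 : (∑ i ∈ Finset.range n,
                  (g₁ z₀ - g₂ z₀) * (γ.toFun (t (i + 1)) - γ.toFun (t i)))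
                    = (∑ i ∈ Finset.range n,
                  ((g₁ z₀ - g₂ z₀) - (g₁ (γ.toFun (t i)) - g₂ (γ.toFun (t i))))
                    * (γ.toFun (t (i + 1)) - γ.toFun (t i))) + Sh := by
                rw [hShdef, ← Finset.sum_add_distrib]
                refine Finset.sum_congr rfl fun i _ => by ring
              rw [hsplit2]
              exact norm_add_le _ _
          _ ≤ (∑ i ∈ Finset.range n,
                m / 2 * ‖γ.toFun (t (i + 1)) - γ.toFun (t i)‖) + ε := by
              refine add_le_add ?_ hdiff.le
              refine le_trans (norm_sum_le _ _) (Finset.sum_le_sum fun i _ => ?_)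
              rw [norm_mul]
              exact mul_le_mul_of_nonneg_right (hsmall (t i) (hsubcd (htmem i)))
                (norm_nonneg _)
          _ = m / 2 * (∑ i ∈ Finset.range n,
                ‖γ.toFun (t (i + 1)) - γ.toFun (t i)‖) + ε := by
              rw [Finset.mul_sum]
          _ ≤ m / 2 * (eVariationOn γ.toFun (Set.Icc u v)).toReal + ε := by
              have := mul_le_mul_of_nonneg_left hsum_abs (by positivity : (0:ℝ) ≤ m / 2)
              linarith
      have hfinal : m * ‖γ.toFun v - γ.toFun u‖
          ≤ m / 2 * (eVariationOn γ.toFun (Set.Icc u v)).toReal :=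
        le_of_forall_pos_le_add key
      have h' : m * ‖γ.toFun v - γ.toFun u‖
          ≤ m * ((eVariationOn γ.toFun (Set.Icc u v)).toReal / 2) := by linarith
      exact le_of_mul_le_mul_left h' hm
    have hB' : ∀ u v : ℝ, u ∈ Set.Icc c d → v ∈ Set.Icc c d → u ≤ v →
        edist (γ.toFun v) (γ.toFun u) ≤ 2⁻¹ * eVariationOn γ.toFun (Set.Icc u v) := by
      intro u v hu hv huv
      rcases eq_or_lt_of_le huv with rfl | hlt
      · simp
      · have hfin : eVariationOn γ.toFun (Set.Icc u v) ≠ ⊤ :=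
          γ.bv.mono (Icc_subset_Icc (le_trans hac hu.1) (le_trans hv.2 hdb))
        have hb := hB u v hu.1 hlt hv.2
        calc edist (γ.toFun v) (γ.toFun u)
            = ENNReal.ofReal (‖γ.toFun v - γ.toFun u‖) := by
              rw [edist_dist, Complex.dist_eq]
          _ ≤ ENNReal.ofReal ((eVariationOn γ.toFun (Set.Icc u v)).toReal / 2) :=
              ENNReal.ofReal_le_ofReal hb
          _ = 2⁻¹ * eVariationOn γ.toFun (Set.Icc u v) := by
              rw [ENNReal.ofReal_div_of_pos (by norm_num : (0:ℝ) < 2),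
                ENNReal.ofReal_toReal hfin, ENNReal.div_eq_inv_mul]
              norm_num
    have hVfin : eVariationOn γ.toFun (Set.Icc c d) ≠ ⊤ := γ.bv.mono (Icc_subset_Icc hac hdb)
    have hC : eVariationOn γ.toFun (Set.Icc c d)
        ≤ 2⁻¹ * eVariationOn γ.toFun (Set.Icc c d) := by
      refine iSup_le fun p => ?_
      obtain ⟨n, x, hx⟩ := p
      obtain ⟨hxmono, hxmem⟩ := hx
      show (∑ i ∈ Finset.range n, edist (γ.toFun (x (i + 1))) (γ.toFun (x i))) ≤ _
      calc (∑ i ∈ Finset.range n, edist (γ.toFun (x (i + 1))) (γ.toFun (x i)))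
          ≤ ∑ i ∈ Finset.range n, 2⁻¹ * eVariationOn γ.toFun (Set.Icc (x i) (x (i + 1))) :=
            Finset.sum_le_sum fun i _ =>
              hB' (x i) (x (i + 1)) (hxmem i) (hxmem (i + 1)) (hxmono (Nat.le_succ i))
        _ = 2⁻¹ * ∑ i ∈ Finset.range n, eVariationOn γ.toFun (Set.Icc (x i) (x (i + 1))) :=
            (Finset.mul_sum _ _ _).symm
        _ ≤ 2⁻¹ * eVariationOn γ.toFun (Set.Icc (x 0) (x n)) :=
            mul_le_mul_right (evar_sum_Icc γ.toFun x hxmono n) _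
        _ ≤ 2⁻¹ * eVariationOn γ.toFun (Set.Icc c d) :=
            mul_le_mul_right (eVariationOn.mono _ (Icc_subset_Icc (hxmem 0).1 (hxmem n).2)) _
    have hV0 : eVariationOn γ.toFun (Set.Icc c d) = 0 := by
      by_contra h0
      have hhalf : 2⁻¹ * eVariationOn γ.toFun (Set.Icc c d)
          < eVariationOn γ.toFun (Set.Icc c d) := by
        rw [← ENNReal.div_eq_inv_mul]
        exact ENNReal.half_lt_self h0 hVfin
      exact absurd hC (not_le.mpr hhalf)
    obtain ⟨t, htm, hne'⟩ := hF.1 γ hγ c d hac hcd hdb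
    refine hne' ?_
    have hle := eVariationOn.edist_le γ.toFun htm (⟨le_rfl, hcd.le⟩ : c ∈ Set.Icc c d)
    rw [hV0, nonpos_iff_eq_zero, edist_eq_zero] at hle
    exact hle
  intro z hz
  have hdense : z ∈ closure S := hF.2.2 hz
  have hSX : S ⊆ X := by
    rw [hSdef]
    refine iUnion₂_subset fun γ hγ => ?_
    exact γ.maps.image_subset
  have hS0 : ∀ w ∈ S, g₁ w = g₂ w := by
    intro w hw
    rw [hSdef] at hw
    simp only [mem_iUnion] at hw
    obtain ⟨γ, hγ, t₀, ht₀, rfl⟩ := hw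
    exact hmain γ hγ t₀ ht₀
  have hnb : (nhdsWithin z S).NeBot := mem_closure_iff_nhdsWithin_neBot.mp hdense
  have ht₁ : Filter.Tendsto g₁ (nhdsWithin z S) (nhds (g₁ z)) := (hg₁ z hz).mono hSX
  have ht₂ : Filter.Tendsto g₂ (nhdsWithin z S) (nhds (g₂ z)) := (hg₂ z hz).mono hSX
  have heq : g₁ =ᶠ[nhdsWithin z S] g₂ := eventually_nhdsWithin_of_forall hS0
  exact tendsto_nhds_unique ht₁ (ht₂.congr' heq.symm)
end

section
/- Let X be a uniformly regular compact plane set. Then D¹(X) is a subalgebra of the Lipschitz algebra Lip(X): every f ∈ D¹(X) satisfies |f(z) − f(w)| ≤ k·|f'|_X·|z − w| for all z, w ∈ X, where k is the uniform regularity constant. -/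
open Complex Set

/-- The length of a rectifiable path. -/
noncomputable def pathLength {X : Set ℂ} (γ : RectPath X) : ℝ :=
  (eVariationOn γ.toFun (Set.Icc γ.a γ.b)).toReal

/-- `γ` joins `z` to `w`. -/
def JoinsIn {X : Set ℂ} (γ : RectPath X) (z w : ℂ) : Prop :=
  γ.toFun γ.a = z ∧ γ.toFun γ.b = w

/-- The geodesic distance in `X`. -/
noncomputable def geodDist (X : Set ℂ) (z w : ℂ) : ℝ :=
  sInf {r | ∃ γ : RectPath X, JoinsIn γ z w ∧ pathLength γ = r}

lemma key {X : Set ℂ} (f f' : ℂ → ℂ) (hf : HasD1 X f f')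
    (M : ℝ) (hM : ∀ x ∈ X, ‖f' x‖ ≤ M) (γ : RectPath X) :
    dist (f (γ.toFun γ.b)) (f (γ.toFun γ.a)) ≤ M * pathLength γ := by
  set a := γ.a with ha
  set b := γ.b with hb
  set g := γ.toFun with hg
  set s := Set.Icc a b with hs
  have hab : a ≤ b := γ.hab.le
  have has : a ∈ s := ⟨le_refl a, hab⟩
  have hbs : b ∈ s := ⟨hab, le_refl b⟩
  have hlbv : LocallyBoundedVariationOn g s := γ.bv.locallyBoundedVariationOn
  set φ : ℝ → ℝ := variationOnFromTo g s a with hφ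
  have hφmono : MonotoneOn φ s := variationOnFromTo.monotoneOn hlbv has
  have hφa : φ a = 0 := variationOnFromTo.self g s a
  -- dist estimate along path
  have hdistvar : ∀ c ∈ s, ∀ u ∈ s, c ≤ u → dist (g u) (g c) ≤ φ u - φ c := by
    intro c hc u hu hcu
    have hadd := variationOnFromTo.add hlbv has hc hu
    have h3 : variationOnFromTo g s c u = φ u - φ c := by
      rw [hφ]; linarith [hadd]
    rw [← h3, variationOnFromTo.eq_of_le g s hcu, dist_edist]
    have h1 : edist (g u) (g c) ≤ eVariationOn g (s ∩ Icc c u) :=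
      eVariationOn.edist_le g ⟨hu, hcu, le_refl u⟩ ⟨hc, le_refl c, hcu⟩
    have h2 : eVariationOn g (s ∩ Icc c u) ≠ ⊤ :=
      ne_top_of_le_ne_top γ.bv (eVariationOn.mono g inter_subset_left)
    exact ENNReal.toReal_mono h2 h1
  -- continuity of f ∘ g on s
  have hfg : ContinuousOn (fun t => f (g t)) s := by
    apply ContinuousOn.comp (t := X) _ γ.cont γ.maps
    exact fun x hx => (hf.1 x hx).continuousWithinAt
  -- main ε-argument
  have main : ∀ ε > (0:ℝ), dist (f (g b)) (f (g a)) ≤ (M + ε) * φ b + ε * (b - a) := by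
    intro ε hε
    set S := {t ∈ s | dist (f (g t)) (f (g a)) ≤ (M + ε) * φ t + ε * (t - a)} with hS
    have haS : a ∈ S := by
      refine ⟨has, ?_⟩
      simp [hφa]
    have hSne : S.Nonempty := ⟨a, haS⟩
    have hSbdd : BddAbove S := ⟨b, fun t ht => ht.1.2⟩
    set c := sSup S with hc
    have hcs : c ∈ s := ⟨le_csSup hSbdd haS, csSup_le hSne fun t ht => ht.1.2⟩
    have hcS : c ∈ S := by
      refine ⟨hcs, ?_⟩
      have hclos : c ∈ closure S := csSup_mem_closure hSne hSbdd
      have hT : IsClosed {t ∈ s | dist (f (g t)) (f (g a)) ≤ (M + ε) * φ c + ε * (c - a)} := by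
        have : ContinuousOn (fun t => dist (f (g t)) (f (g a))) s :=
          (continuous_id.dist continuous_const).comp_continuousOn hfg
        exact this.preimage_isClosed_of_isClosed isClosed_Icc isClosed_Iic
      have hsub : S ⊆ {t ∈ s | dist (f (g t)) (f (g a)) ≤ (M + ε) * φ c + ε * (c - a)} := by
        intro t ht
        refine ⟨ht.1, le_trans ht.2 ?_⟩
        have htc : t ≤ c := le_csSup hSbdd ht
        have hMε : 0 ≤ M + ε := by
          rcases γ.maps has with hx
          have := hM _ hx
          have : 0 ≤ M := le_trans (norm_nonneg _) this
          linarith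
        have := hφmono ht.1 hcs htc
        nlinarith
      have := hT.closure_subset (closure_mono hsub (by exact hclos))
      exact this.2
    -- show c = b
    have hMnonneg : 0 ≤ M := le_trans (norm_nonneg _) (hM _ (γ.maps has))
    by_cases hcb : c = b
    · rw [hcb] at hcS; exact hcS.2
    · exfalso
      have hclt : c < b := lt_of_le_of_ne hcs.2 hcb
      -- derivative estimate at g c
      have hgcX : g c ∈ X := γ.maps hcs
      have hd := hf.1 (g c) hgcX
      have hlo := hd.isLittleO.bound hε
      rw [Filter.eventually_iff, Metric.mem_nhdsWithin_iff] at hlo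
      obtain ⟨δ, hδpos, hδ⟩ := hlo
      have hgc := γ.cont c hcs
      rw [Metric.continuousWithinAt_iff] at hgc
      obtain ⟨δ', hδ'pos, hδ'⟩ := hgc (δ) hδpos
      set u := min b (c + δ' / 2) with hu
      have hcu : c < u := lt_min hclt (by linarith)
      have hus : u ∈ s := ⟨le_trans hcs.1 hcu.le, min_le_left _ _⟩
      have hucδ : dist u c < δ' := by
        rw [Real.dist_eq, _root_.abs_of_nonneg (by linarith)]
        have : u ≤ c + δ' / 2 := min_le_right _ _
        linarith
      have hguc : dist (g u) (g c) < δ := hδ' hus hucδ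
      have hguX : g u ∈ X := γ.maps hus
      have hest : ‖f (g u) - f (g c)‖ ≤ (M + ε) * ‖g u - g c‖ := by
        have := hδ ⟨Metric.mem_ball.mpr hguc, hguX⟩
        simp only [ContinuousLinearMap.smulRight_apply, ContinuousLinearMap.one_apply,
          smul_eq_mul, one_mul] at this
        have h2 : ‖(g u - g c) * f' (g c)‖ ≤ M * ‖g u - g c‖ := by
          rw [norm_mul, mul_comm]
          exact mul_le_mul_of_nonneg_right (hM _ hgcX) (norm_nonneg _)
        calc ‖f (g u) - f (g c)‖
            = ‖(f (g u) - f (g c) - (g u - g c) * f' (g c)) + (g u - g c) * f' (g c)‖ := by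
              ring_nf
          _ ≤ ‖f (g u) - f (g c) - (g u - g c) * f' (g c)‖ + ‖(g u - g c) * f' (g c)‖ :=
              norm_add_le _ _
          _ ≤ ε * ‖g u - g c‖ + M * ‖g u - g c‖ := add_le_add this h2
          _ = (M + ε) * ‖g u - g c‖ := by ring
      have hdist_gu : ‖g u - g c‖ ≤ φ u - φ c := by
        have := hdistvar c hcs u hus hcu.le
        rwa [dist_eq_norm] at this
      have huS : u ∈ S := by
        refine ⟨hus, ?_⟩
        calc dist (f (g u)) (f (g a))
            ≤ dist (f (g u)) (f (g c)) + dist (f (g c)) (f (g a)) := dist_triangle _ _ _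
          _ ≤ (M + ε) * ‖g u - g c‖ + ((M + ε) * φ c + ε * (c - a)) := by
              rw [dist_eq_norm]; exact add_le_add hest hcS.2
          _ ≤ (M + ε) * (φ u - φ c) + ((M + ε) * φ c + ε * (c - a)) := by
              gcongr
          _ = (M + ε) * φ u + ε * (c - a) := by ring
          _ ≤ (M + ε) * φ u + ε * (u - a) := by
              have : c ≤ u := hcu.le
              gcongr
      exact absurd (le_csSup hSbdd huS) (not_le.mpr hcu)
  -- conclude
  have hφb : φ b = pathLength γ := by
    rw [hφ, variationOnFromTo.eq_of_le g s hab, pathLength]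
    congr 1
    rw [inter_eq_self_of_subset_left (le_refl s)]
  have hφbnn : 0 ≤ φ b := variationOnFromTo.nonneg_of_le g s hab
  rw [← hφb]
  have hC : (0:ℝ) ≤ φ b + (b - a) := by
    have := γ.hab
    linarith
  by_contra hcon
  push_neg at hcon
  set d := dist (f (g b)) (f (g a)) - M * φ b with hd
  have hdpos : 0 < d := by simp [hd]; linarith
  have hεc : 0 < d / (φ b + (b - a) + 1) := by positivity
  have := main _ hεc
  have h1 : d / (φ b + (b - a) + 1) * (φ b + (b - a)) < d := by
    rw [div_mul_eq_mul_div, div_lt_iff₀ (by linarith)]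
    nlinarith
  nlinarith [this]

/-- For a uniformly regular compact plane set `X` (with constant `k`), every
`f ∈ D¹(X)` is Lipschitz: `|f(z) − f(w)| ≤ k·|f'|_X·|z − w|` for all `z, w ∈ X`. -/
theorem stmt9 (X : Set ℂ) (hXc : IsCompact X) (hXne : X.Nonempty)
    (k : ℝ) (hk : 0 < k)
    (hreg : ∀ z ∈ X, ∀ w ∈ X, ∃ γ : RectPath X, JoinsIn γ z w ∧
      pathLength γ ≤ k * ‖z - w‖)
    (f f' : ℂ → ℂ) (hf : HasD1 X f f') :
    ∀ z ∈ X, ∀ w ∈ X,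
      ‖f z - f w‖ ≤ k * UnifNorm X f' * ‖z - w‖ := by
  have hcont : ContinuousOn (fun z => ‖f' z‖) X :=
    continuous_norm.comp_continuousOn hf.2
  have hbdd : BddAbove ((fun z => ‖f' z‖) '' X) :=
    (hXc.image_of_continuousOn hcont).bddAbove
  have hM : ∀ x ∈ X, ‖f' x‖ ≤ UnifNorm X f' := fun x hx =>
    le_csSup hbdd ⟨x, hx, rfl⟩
  intro z hz w hw
  obtain ⟨γ, ⟨hga, hgb⟩, hlen⟩ := hreg z hz w hw
  have hkey := key f f' hf (UnifNorm X f') hM γ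
  rw [hga, hgb] at hkey
  have hM0 : 0 ≤ UnifNorm X f' := le_trans (norm_nonneg _) (hM z hz)
  calc ‖f z - f w‖ = dist (f w) (f z) := by
        rw [dist_eq_norm, norm_sub_rev]
    _ ≤ UnifNorm X f' * pathLength γ := hkey
    _ ≤ UnifNorm X f' * (k * ‖z - w‖) := by gcongr
    _ = k * UnifNorm X f' * ‖z - w‖ := by ring
end

section
/- Let Γ : [a,b] → ℂ be a rectifiable path, let f, g ∈ C(Γ([a,b])), let 𝓘 be the set of all non-degenerate closed subintervals J of [a,b] such that ∫_γ g = f(γ⁺) − f(γ⁻) for every subpath γ of Γ|_J, and let E = ⋃𝓘. If I, J ∈ 𝓘 with I ∩ J ≠ ∅, then I ∪ J ∈ 𝓘; moreover every J ∈ 𝓘 is contained in a unique maximal element of 𝓘, and the maximal elements of 𝓘 partition E. -/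
open Complex Set

/-- `J` is a non-degenerate closed subinterval `[c,d]` of `[a,b]` such that
`∫_γ g = f(γ⁺) − f(γ⁻)` for every subpath `γ` of `Γ|_J`. -/
def GoodInterval (Γ : ℝ → ℂ) (f g : ℂ → ℂ) (a b : ℝ) (J : Set ℝ) : Prop :=
  ∃ c d : ℝ, a ≤ c ∧ c < d ∧ d ≤ b ∧ J = Set.Icc c d ∧
    ∀ c' d' : ℝ, c ≤ c' → c' < d' → d' ≤ d →
      IsRSIntegral Γ c' d' g (f (Γ d') - f (Γ c'))

/-- `M` is a maximal element of the family of good intervals. -/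
def MaximalGood (Γ : ℝ → ℂ) (f g : ℂ → ℂ) (a b : ℝ) (M : Set ℝ) : Prop :=
  GoodInterval Γ f g a b M ∧ ∀ K, GoodInterval Γ f g a b K → M ⊆ K → K = M

lemma part_mono {t : ℕ → ℝ} {n : ℕ} (h : ∀ i < n, t i ≤ t (i + 1)) :
    ∀ i j, i ≤ j → j ≤ n → t i ≤ t j := by
  intro i j hij hjn
  induction j with
  | zero =>
    have : i = 0 := Nat.le_zero.mp hij
    rw [this]
  | succ m ih =>
    rcases Nat.eq_or_lt_of_le hij with rfl | hij'
    · exact le_rfl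
    · exact le_trans (ih (Nat.lt_succ_iff.mp hij') (le_trans (Nat.le_succ m) hjn))
        (h m (by omega))

lemma exists_split {t : ℕ → ℝ} {n : ℕ} (hmono : ∀ i < n, t i ≤ t (i + 1))
    (hn : 0 < n) {m : ℝ} (h0 : t 0 ≤ m) (h1 : m ≤ t n) :
    ∃ k, k < n ∧ t k ≤ m ∧ m ≤ t (k + 1) := by
  classical
  set k := Nat.findGreatest (fun i => t i ≤ m) n with hk
  have hkn : k ≤ n := Nat.findGreatest_le n
  have hPk : t k ≤ m := Nat.findGreatest_spec (P := fun i => t i ≤ m) (Nat.zero_le n) h0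
  by_cases hkn' : k = n
  · refine ⟨n - 1, by omega, ?_, ?_⟩
    · exact le_trans (part_mono hmono (n-1) n (by omega) le_rfl) (hkn' ▸ hPk)
    · have h2 : n - 1 + 1 = n := by omega
      rw [h2]; exact h1
  · refine ⟨k, lt_of_le_of_ne hkn hkn', hPk, ?_⟩
    have := Nat.findGreatest_is_greatest (P := fun i => t i ≤ m) (Nat.lt_succ_self k) (by omega : k + 1 ≤ n)
    exact (not_le.mp this).le

lemma abs_sub_le2 (x y : ℂ) : ‖x - y‖ ≤ ‖x‖ + ‖y‖ := by
  simpa using norm_sub_le x y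

lemma abs_comb (E1 E2 E3 E4 E5 : ℂ) :
    ‖E1 - E2 + E3 + E4 + E5‖
      ≤ ‖E1‖ + ‖E2‖ + ‖E3‖ + ‖E4‖ + ‖E5‖ := by
  have h45 := norm_add_le (E1 - E2 + E3 + E4) E5
  have h34 := norm_add_le (E1 - E2 + E3) E4
  have h23 := norm_add_le (E1 - E2) E3
  have h12 := abs_sub_le2 E1 E2
  linarith

lemma arith1 {e V : ℝ} (he : 0 < e) (hV : 0 ≤ V) : e/5/(V+1) * V < e/5 := by
  rw [div_mul_eq_mul_div, div_lt_iff₀ (by positivity : (0:ℝ) < V+1)]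
  nlinarith

lemma arith2 {e Bg : ℝ} (he : 0 < e) (hBg : 0 ≤ Bg) :
    (2*Bg) * (e/5/(3*(Bg+1))) + Bg * (e/5/(3*(Bg+1))) < e/5 := by
  have hx : 0 < e/5/(3*(Bg+1)) := by positivity
  have hxe : (e/5/(3*(Bg+1))) * (3*(Bg+1)) = e/5 := by field_simp
  nlinarith

lemma abs_comb5 (E1 E2 E3 E4 E5 : ℂ) :
    ‖E1 + E2 + E3 + E4 + E5‖
      ≤ ‖E1‖ + ‖E2‖ + ‖E3‖ + ‖E4‖ + ‖E5‖ := by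
  have h45 := norm_add_le (E1 + E2 + E3 + E4) E5
  have h34 := norm_add_le (E1 + E2 + E3) E4
  have h23 := norm_add_le (E1 + E2) E3
  have h12 := norm_add_le E1 E2
  linarith

lemma sum_abs_le_var {γ : ℝ → ℂ} {a b : ℝ} (hbv : BoundedVariationOn γ (Icc a b))
    {N : ℕ} {u : ℕ → ℝ} (hmono : ∀ i < N, u i ≤ u (i + 1)) (hmem : ∀ i ≤ N, u i ∈ Icc a b) :
    ∑ i ∈ Finset.range N, ‖γ (u (i + 1)) - γ (u i)‖
      ≤ (eVariationOn γ (Icc a b)).toReal := by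
  classical
  set v : ℕ → ℝ := fun i => u (min i N) with hv
  have hvmono : Monotone v := by
    intro i j hij
    exact part_mono hmono _ _ (min_le_min hij le_rfl) (min_le_right _ _)
  have hvmem : ∀ i, v i ∈ Icc a b := fun i => hmem _ (min_le_right _ _)
  have key := eVariationOn.sum_le (f := γ) (n := N) hvmono hvmem
  have h2 : ∑ i ∈ Finset.range N, ‖γ (u (i + 1)) - γ (u i)‖
      = (∑ i ∈ Finset.range N, edist (γ (v (i + 1))) (γ (v i))).toReal := by
    rw [ENNReal.toReal_sum (fun i _ => edist_ne_top _ _)]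
    refine Finset.sum_congr rfl fun i hi => ?_
    rw [Finset.mem_range] at hi
    have e1 : v i = u i := by simp [hv, min_eq_left hi.le]
    have e2 : v (i + 1) = u (i + 1) := by simp [hv, min_eq_left (by omega : i + 1 ≤ N)]
    rw [e1, e2, edist_dist, ENNReal.toReal_ofReal dist_nonneg, Complex.dist_eq]
  rw [h2]
  exact ENNReal.toReal_mono hbv key

set_option maxHeartbeats 1000000 in
lemma rs_add {Γ : ℝ → ℂ} {g : ℂ → ℂ} {a b p m q : ℝ} {A B : ℂ} {CΓ : ℝ}
    (hap : a ≤ p) (hpm : p < m) (hmq : m < q) (hqb : q ≤ b)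
    (hCΓ : ∀ x ∈ Icc a b, ‖Γ x‖ ≤ CΓ)
    (hgu : ∀ ε > (0:ℝ), ∃ δ > (0:ℝ), ∀ x ∈ Icc a b, ∀ y ∈ Icc a b,
      |x - y| < δ → ‖g (Γ x) - g (Γ y)‖ < ε)
    (hA : IsRSIntegral Γ p m g A) (hB : IsRSIntegral Γ m q g B) :
    IsRSIntegral Γ p q g (A + B) := by
  intro ε hε
  have hpq : p < q := lt_trans hpm hmq
  have hCΓ0 : 0 ≤ CΓ :=
    le_trans (norm_nonneg _) (hCΓ p ⟨hap, le_trans hpq.le hqb⟩)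
  obtain ⟨δ1, hδ1, H1⟩ := hA (ε/3) (by linarith)
  obtain ⟨δ2, hδ2, H2⟩ := hB (ε/3) (by linarith)
  obtain ⟨δ3, hδ3, H3⟩ := hgu (ε/(3*(4*CΓ+1))) (by positivity)
  refine ⟨min δ1 (min δ2 δ3), by positivity, ?_⟩
  intro n t s ht0 htn hmono hmesh htag
  have hδa : min δ1 (min δ2 δ3) ≤ δ1 := min_le_left _ _
  have hδb : min δ1 (min δ2 δ3) ≤ δ2 := le_trans (min_le_right _ _) (min_le_left _ _)
  have hδc : min δ1 (min δ2 δ3) ≤ δ3 := le_trans (min_le_right _ _) (min_le_right _ _)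
  have htab : ∀ i ≤ n, t i ∈ Icc a b := by
    intro i hi
    have h0i : t 0 ≤ t i := part_mono hmono 0 i (Nat.zero_le _) hi
    have hin : t i ≤ t n := part_mono hmono i n hi le_rfl
    rw [ht0] at h0i; rw [htn] at hin
    exact ⟨le_trans hap h0i, le_trans hin hqb⟩
  have hn : 0 < n := by
    rcases Nat.eq_zero_or_pos n with rfl | h
    · exfalso; rw [ht0] at htn; exact absurd htn (by linarith)
    · exact h
  have hm0 : t 0 ≤ m := by rw [ht0]; exact hpm.le
  have hmn : m ≤ t n := by rw [htn]; exact hmq.le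
  obtain ⟨k, hkn, hk1, hk2⟩ := exists_split hmono hn hm0 hmn
  set t1 : ℕ → ℝ := fun i => if i ≤ k then t i else m with ht1
  set s1 : ℕ → ℝ := fun i => if i < k then s i else min (s k) m with hs1
  set t2 : ℕ → ℝ := fun i => if i = 0 then m else t (k + i) with ht2
  set s2 : ℕ → ℝ := fun i => if i = 0 then max (s k) m else s (k + i) with hs2
  -- apply H1
  have hS1 := H1 (k+1) t1 s1 (by simp [ht1, ht0]) (by simp [ht1]) ?mono1 ?mesh1 ?tag1
  case mono1 =>
    intro i hi
    by_cases hik : i < k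
    · simp only [ht1, if_pos hik.le, if_pos (by omega : i + 1 ≤ k)]
      exact hmono i (by omega)
    · have : i = k := by omega
      subst this
      simp only [ht1, if_pos le_rfl, if_neg (by omega : ¬ i + 1 ≤ i)]
      exact hk1
  case mesh1 =>
    intro i hi
    by_cases hik : i < k
    · simp only [ht1, if_pos hik.le, if_pos (by omega : i + 1 ≤ k)]
      exact lt_of_lt_of_le (hmesh i (by omega)) hδa
    · have : i = k := by omega
      subst this
      simp only [ht1, if_pos le_rfl, if_neg (by omega : ¬ i + 1 ≤ i)]
      have := hmesh i (by omega)
      have : m - t i ≤ t (i+1) - t i := by linarith [hk2]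
      linarith [lt_of_lt_of_le (hmesh i (by omega)) hδa]
  case tag1 =>
    intro i hi
    by_cases hik : i < k
    · simp only [ht1, hs1, if_pos hik.le, if_pos (by omega : i + 1 ≤ k), if_pos hik]
      exact htag i (by omega)
    · have : i = k := by omega
      subst this
      simp only [ht1, hs1, if_pos le_rfl, if_neg (by omega : ¬ i + 1 ≤ i), if_neg (by omega : ¬ i < i)]
      exact ⟨le_min (htag i (by omega)).1 hk1, min_le_right _ _⟩
  -- apply H2
  have hnk : n - k = (n - (k+1)) + 1 := by omega
  have hS2 := H2 (n - k) t2 s2 (by simp [ht2]) ?endpt2 ?mono2 ?mesh2 ?tag2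
  case endpt2 =>
    have h1 : n - k ≠ 0 := by omega
    simp only [ht2, if_neg h1]
    rw [(by omega : k + (n - k) = n)]
    exact htn
  case mono2 =>
    intro i hi
    rcases Nat.eq_zero_or_pos i with rfl | hipos
    · simp only [ht2, if_pos rfl, if_neg (by omega : ¬ (0:ℕ) + 1 = 0)]
      exact hk2
    · simp only [ht2, if_neg (by omega : ¬ i = 0), if_neg (by omega : ¬ i + 1 = 0)]
      rw [(by omega : k + (i + 1) = (k + i) + 1)]
      exact hmono (k + i) (by omega)
  case mesh2 =>
    intro i hi
    rcases Nat.eq_zero_or_pos i with rfl | hipos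
    · simp only [ht2, if_pos rfl, if_neg (by omega : ¬ (0:ℕ) + 1 = 0)]
      have := hmesh k hkn
      have h2 : t (k + 1) - m ≤ t (k+1) - t k := by linarith [hk1]
      simp only [(by omega : k + 1 = k + 1)]
      calc t (k + (0+1)) - m ≤ t (k+1) - t k := by
            rw [(by omega : k + (0+1) = k + 1)]; linarith [hk1]
        _ < δ2 := lt_of_lt_of_le (hmesh k hkn) hδb
    · simp only [ht2, if_neg (by omega : ¬ i = 0), if_neg (by omega : ¬ i + 1 = 0)]
      rw [(by omega : k + (i + 1) = (k + i) + 1)]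
      exact lt_of_lt_of_le (hmesh (k + i) (by omega)) hδb
  case tag2 =>
    intro i hi
    rcases Nat.eq_zero_or_pos i with rfl | hipos
    · simp only [ht2, hs2, if_pos rfl, if_neg (by omega : ¬ (0:ℕ) + 1 = 0)]
      rw [(by omega : k + (0 + 1) = k + 1)]
      exact ⟨le_max_right _ _, max_le (htag k hkn).2 hk2⟩
    · simp only [ht2, hs2, if_neg (by omega : ¬ i = 0), if_neg (by omega : ¬ i + 1 = 0)]
      rw [(by omega : k + (i + 1) = (k + i) + 1)]
      exact htag (k + i) (by omega)
  -- sum identity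
  set F : ℕ → ℂ := fun i => g (Γ (s i)) * (Γ (t (i + 1)) - Γ (t i)) with hF
  have hsplit : ∑ i ∈ Finset.range n, F i
      = ∑ i ∈ Finset.range (k+1), F i + ∑ i ∈ Finset.range (n - (k+1)), F (k+1+i) := by
    have e : (k+1) + (n - (k+1)) = n := by omega
    calc ∑ i ∈ Finset.range n, F i = ∑ i ∈ Finset.range ((k+1) + (n-(k+1))), F i := by rw [e]
      _ = _ := Finset.sum_range_add F (k+1) (n-(k+1))
  have hS1eq : ∑ i ∈ Finset.range (k+1), (fun i => g (Γ (s1 i)) * (Γ (t1 (i + 1)) - Γ (t1 i))) i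
      = ∑ i ∈ Finset.range k, F i + g (Γ (min (s k) m)) * (Γ m - Γ (t k)) := by
    rw [Finset.sum_range_succ]
    congr 1
    · refine Finset.sum_congr rfl fun i hi => ?_
      rw [Finset.mem_range] at hi
      simp only [ht1, hs1, hF, if_pos hi.le, if_pos (by omega : i + 1 ≤ k), if_pos hi]
    · simp only [ht1, hs1, if_pos le_rfl, if_neg (by omega : ¬ k + 1 ≤ k), if_neg (lt_irrefl k)]
  have hS2eq : ∑ i ∈ Finset.range (n - k), (fun i => g (Γ (s2 i)) * (Γ (t2 (i + 1)) - Γ (t2 i))) i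
      = g (Γ (max (s k) m)) * (Γ (t (k+1)) - Γ m) + ∑ i ∈ Finset.range (n - (k+1)), F (k+1+i) := by
    have hA0 : g (Γ (s2 0)) * (Γ (t2 (0 + 1)) - Γ (t2 0)) = g (Γ (max (s k) m)) * (Γ (t (k+1)) - Γ m) := by
      simp only [ht2, hs2, if_pos rfl, if_neg (by omega : ¬ (0:ℕ) + 1 = 0)]
      try rw [(by omega : k + (0 + 1) = k + 1)]
    have hAi : ∀ i ∈ Finset.range (n-(k+1)), g (Γ (s2 (i+1))) * (Γ (t2 (i + 1 + 1)) - Γ (t2 (i+1))) = F (k+1+i) := by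
      intro i hi
      simp only [ht2, hs2, hF, if_neg (by omega : ¬ i + 1 = 0), if_neg (by omega : ¬ i + 1 + 1 = 0)]
      rw [(by omega : k + (i + 1) = k + 1 + i), (by omega : k + (i + 1 + 1) = k + 1 + i + 1)]
    rw [hnk, Finset.sum_range_succ', Finset.sum_congr rfl hAi, hA0, add_comm]
  rw [hS1eq] at hS1
  rw [hS2eq] at hS2
  -- final estimate
  have hE1 : ‖(g (Γ (s k)) - g (Γ (min (s k) m))) * (Γ m - Γ (t k))‖ ≤ (ε/(3*(4*CΓ+1))) * (2*CΓ) := by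
    rw [norm_mul]
    have hska : s k ∈ Icc a b := by
      have := htag k hkn
      exact ⟨le_trans (htab k hkn.le).1 this.1, le_trans this.2 (htab (k+1) hkn).2⟩
    have hminab : min (s k) m ∈ Icc a b := by
      constructor
      · exact le_min hska.1 (le_trans (htab k hkn.le).1 hk1)
      · exact le_trans (min_le_right _ _) (le_trans hk2 (htab (k+1) hkn).2)
    have hclose : |s k - min (s k) m| < δ3 := by
      have h1 := (htag k hkn).1
      have h2 := (htag k hkn).2
      have := lt_of_lt_of_le (hmesh k hkn) hδc
      rw [abs_sub_lt_iff]
      constructor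
      · rcases min_le_iff.mpr (Or.inl (le_refl (s k))) with h
        cases le_total (s k) m with
        | inl h' => rw [min_eq_left h']; linarith
        | inr h' => rw [min_eq_right h']; linarith [hk1]
      · cases le_total (s k) m with
        | inl h' => rw [min_eq_left h']; linarith
        | inr h' => rw [min_eq_right h']; linarith [hk1]
    have hg1 := H3 (s k) hska (min (s k) m) hminab hclose
    have hΓ1 : ‖Γ m - Γ (t k)‖ ≤ 2*CΓ := by
      have := abs_sub_le2 (Γ m) (Γ (t k))
      have hmab : m ∈ Icc a b := ⟨le_trans hap hpm.le, le_trans (le_trans hmq.le le_rfl) hqb⟩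
      linarith [hCΓ m hmab, hCΓ (t k) (htab k hkn.le)]
    calc ‖g (Γ (s k)) - g (Γ (min (s k) m))‖ * ‖Γ m - Γ (t k)‖
        ≤ (ε/(3*(4*CΓ+1))) * ‖Γ m - Γ (t k)‖ := by
          apply mul_le_mul_of_nonneg_right hg1.le (norm_nonneg _)
      _ ≤ (ε/(3*(4*CΓ+1))) * (2*CΓ) := by
          apply mul_le_mul_of_nonneg_left hΓ1 (by positivity)
  have hE2 : ‖(g (Γ (s k)) - g (Γ (max (s k) m))) * (Γ (t (k+1)) - Γ m)‖ ≤ (ε/(3*(4*CΓ+1))) * (2*CΓ) := by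
    rw [norm_mul]
    have hska : s k ∈ Icc a b := by
      have := htag k hkn
      exact ⟨le_trans (htab k hkn.le).1 this.1, le_trans this.2 (htab (k+1) hkn).2⟩
    have hmaxab : max (s k) m ∈ Icc a b := by
      constructor
      · exact le_trans (le_trans hap hpm.le) (le_max_right _ _)
      · exact max_le hska.2 (le_trans hk2 (htab (k+1) hkn).2)
    have hclose : |s k - max (s k) m| < δ3 := by
      have h1 := (htag k hkn).1
      have h2 := (htag k hkn).2
      have := lt_of_lt_of_le (hmesh k hkn) hδc
      rw [abs_sub_lt_iff]
      cases le_total (s k) m with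
      | inl h' => rw [max_eq_right h']; constructor <;> linarith [hk1, hk2]
      | inr h' => rw [max_eq_left h']; constructor <;> linarith
    have hg1 := H3 (s k) hska (max (s k) m) hmaxab hclose
    have hΓ1 : ‖Γ (t (k+1)) - Γ m‖ ≤ 2*CΓ := by
      have := abs_sub_le2 (Γ (t (k+1))) (Γ m)
      have hmab : m ∈ Icc a b := ⟨le_trans hap hpm.le, le_trans hmq.le hqb⟩
      linarith [hCΓ (t (k+1)) (htab (k+1) hkn), hCΓ m hmab]
    calc ‖g (Γ (s k)) - g (Γ (max (s k) m))‖ * ‖Γ (t (k+1)) - Γ m‖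
        ≤ (ε/(3*(4*CΓ+1))) * ‖Γ (t (k+1)) - Γ m‖ := by
          apply mul_le_mul_of_nonneg_right hg1.le (norm_nonneg _)
      _ ≤ (ε/(3*(4*CΓ+1))) * (2*CΓ) := by
          apply mul_le_mul_of_nonneg_left hΓ1 (by positivity)
  have hkey : (∑ i ∈ Finset.range n, F i) - (A + B)
      = ((∑ i ∈ Finset.range k, F i + g (Γ (min (s k) m)) * (Γ m - Γ (t k))) - A)
        + ((g (Γ (max (s k) m)) * (Γ (t (k+1)) - Γ m) + ∑ i ∈ Finset.range (n - (k+1)), F (k+1+i)) - B)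
        + ((g (Γ (s k)) - g (Γ (min (s k) m))) * (Γ m - Γ (t k))
          + (g (Γ (s k)) - g (Γ (max (s k) m))) * (Γ (t (k+1)) - Γ m)) := by
    rw [hsplit, Finset.sum_range_succ]
    simp only [hF]
    ring
  have hfin : ‖(∑ i ∈ Finset.range n, F i) - (A + B)‖ < ε := by
    rw [hkey]
    have t1 := norm_add_le
      (((∑ i ∈ Finset.range k, F i + g (Γ (min (s k) m)) * (Γ m - Γ (t k))) - A)
        + ((g (Γ (max (s k) m)) * (Γ (t (k+1)) - Γ m) + ∑ i ∈ Finset.range (n - (k+1)), F (k+1+i)) - B))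
      ((g (Γ (s k)) - g (Γ (min (s k) m))) * (Γ m - Γ (t k))
          + (g (Γ (s k)) - g (Γ (max (s k) m))) * (Γ (t (k+1)) - Γ m))
    have t2 := norm_add_le
      (((∑ i ∈ Finset.range k, F i + g (Γ (min (s k) m)) * (Γ m - Γ (t k))) - A))
      (((g (Γ (max (s k) m)) * (Γ (t (k+1)) - Γ m) + ∑ i ∈ Finset.range (n - (k+1)), F (k+1+i)) - B))
    have t3 := norm_add_le
      ((g (Γ (s k)) - g (Γ (min (s k) m))) * (Γ m - Γ (t k)))
      ((g (Γ (s k)) - g (Γ (max (s k) m))) * (Γ (t (k+1)) - Γ m))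
    have hEsmall : (ε/(3*(4*CΓ+1))) * (2*CΓ) + (ε/(3*(4*CΓ+1))) * (2*CΓ) < ε/3 := by
      have hx : 0 < ε/(3*(4*CΓ+1)) := by positivity
      have hxe : (ε/(3*(4*CΓ+1))) * (3*(4*CΓ+1)) = ε := by field_simp
      nlinarith [hx, hxe]
    linarith [hS1, hS2, hE1, hE2]
  exact hfin

set_option maxHeartbeats 1000000 in
lemma rs_left {Γ : ℝ → ℂ} {f g : ℂ → ℂ} {a b C q : ℝ} {Bg V : ℝ}
    (haC : a ≤ C) (hCq : C < q) (hqb : q ≤ b)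
    (hBg : ∀ x ∈ Icc a b, ‖g (Γ x)‖ ≤ Bg)
    (hV : ∀ (N : ℕ) (u : ℕ → ℝ), (∀ i < N, u i ≤ u (i + 1)) → (∀ i ≤ N, u i ∈ Icc a b) →
      ∑ i ∈ Finset.range N, ‖Γ (u (i + 1)) - Γ (u i)‖ ≤ V)
    (hgu : ∀ ε > (0:ℝ), ∃ δ > (0:ℝ), ∀ x ∈ Icc a b, ∀ y ∈ Icc a b,
      |x - y| < δ → ‖g (Γ x) - g (Γ y)‖ < ε)
    (hfu : ∀ ε > (0:ℝ), ∃ δ > (0:ℝ), ∀ x ∈ Icc a b, ∀ y ∈ Icc a b,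
      |x - y| < δ → ‖f (Γ x) - f (Γ y)‖ < ε)
    (hΓu : ∀ ε > (0:ℝ), ∃ δ > (0:ℝ), ∀ x ∈ Icc a b, ∀ y ∈ Icc a b,
      |x - y| < δ → ‖Γ x - Γ y‖ < ε)
    (hyp : ∀ p', C < p' → p' < q → IsRSIntegral Γ p' q g (f (Γ q) - f (Γ p'))) :
    IsRSIntegral Γ C q g (f (Γ q) - f (Γ C)) := by
  intro ε hε
  have hCab : C ∈ Icc a b := ⟨haC, le_trans hCq.le hqb⟩
  have hV0 : 0 ≤ V := by
    have := hV 0 (fun _ => C) (by omega) (fun i _ => hCab)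
    simpa using this
  have hBg0 : 0 ≤ Bg := le_trans (norm_nonneg _) (hBg C hCab)
  obtain ⟨δg, hδg, Hg⟩ := hgu (ε/5/(V+1)) (by positivity)
  obtain ⟨δΓ, hδΓ, HΓ⟩ := hΓu (ε/5/(3*(Bg+1))) (by positivity)
  obtain ⟨δf, hδf, Hf⟩ := hfu (ε/5) (by linarith)
  set η := min (min δg δΓ) (min δf (q - C)) / 3 with hηdef
  have hη0 : 0 < η := by
    have : 0 < min (min δg δΓ) (min δf (q - C)) := by
      apply lt_min (lt_min hδg hδΓ) (lt_min hδf (by linarith))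
    positivity
  have hηg : 2 * η < δg := by
    have h1 : min (min δg δΓ) (min δf (q - C)) ≤ δg := le_trans (min_le_left _ _) (min_le_left _ _)
    rw [hηdef]; linarith
  have hηΓ : 2 * η < δΓ := by
    have h1 : min (min δg δΓ) (min δf (q - C)) ≤ δΓ := le_trans (min_le_left _ _) (min_le_right _ _)
    rw [hηdef]; linarith
  have hηf : 2 * η < δf := by
    have h1 : min (min δg δΓ) (min δf (q - C)) ≤ δf := le_trans (min_le_right _ _) (min_le_left _ _)
    rw [hηdef]; linarith
  have hηq : η < q - C := by
    have h1 : min (min δg δΓ) (min δf (q - C)) ≤ q - C := le_trans (min_le_right _ _) (min_le_right _ _)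
    rw [hηdef]; linarith
  set cm := C + η with hcm
  have hCcm : C < cm := by rw [hcm]; linarith
  have hcmq : cm < q := by rw [hcm]; linarith
  have hcmab : cm ∈ Icc a b := ⟨by rw [hcm]; linarith, le_trans hcmq.le hqb⟩
  obtain ⟨δ0, hδ0, H0⟩ := hyp cm hCcm hcmq (ε/5) (by linarith)
  refine ⟨min δ0 η, lt_min hδ0 hη0, ?_⟩
  intro n t s ht0 htn hmono hmesh htag
  have hδa : min δ0 η ≤ δ0 := min_le_left _ _
  have hδb : min δ0 η ≤ η := min_le_right _ _
  have htab : ∀ i ≤ n, t i ∈ Icc a b := by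
    intro i hi
    have h0i : t 0 ≤ t i := part_mono hmono 0 i (Nat.zero_le _) hi
    have hin : t i ≤ t n := part_mono hmono i n hi le_rfl
    rw [ht0] at h0i; rw [htn] at hin
    exact ⟨le_trans haC h0i, le_trans hin hqb⟩
  have hn : 0 < n := by
    rcases Nat.eq_zero_or_pos n with rfl | h
    · exfalso; rw [ht0] at htn; exact absurd htn (by linarith)
    · exact h
  have hm0 : t 0 ≤ cm := by rw [ht0]; exact hCcm.le
  have hmn : cm ≤ t n := by rw [htn]; exact hcmq.le
  obtain ⟨k, hkn, hk1, hk2⟩ := exists_split hmono hn hm0 hmn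
  set t2 : ℕ → ℝ := fun i => if i = 0 then cm else t (k + i) with ht2
  set s2 : ℕ → ℝ := fun i => if i = 0 then max (s k) cm else s (k + i) with hs2
  have hnk : n - k = (n - (k+1)) + 1 := by omega
  have hS2 := H0 (n - k) t2 s2 (by simp [ht2]) ?endpt2 ?mono2 ?mesh2 ?tag2
  case endpt2 =>
    have h1 : n - k ≠ 0 := by omega
    simp only [ht2, if_neg h1]
    rw [(by omega : k + (n - k) = n)]
    exact htn
  case mono2 =>
    intro i hi
    rcases Nat.eq_zero_or_pos i with rfl | hipos
    · simp only [ht2, if_pos rfl, if_neg (by omega : ¬ (0:ℕ) + 1 = 0)]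
      try rw [(by omega : k + (0 + 1) = k + 1)]
      exact hk2
    · simp only [ht2, if_neg (by omega : ¬ i = 0), if_neg (by omega : ¬ i + 1 = 0)]
      rw [(by omega : k + (i + 1) = (k + i) + 1)]
      exact hmono (k + i) (by omega)
  case mesh2 =>
    intro i hi
    rcases Nat.eq_zero_or_pos i with rfl | hipos
    · simp only [ht2, if_pos rfl, if_neg (by omega : ¬ (0:ℕ) + 1 = 0)]
      have h2 := hmesh k hkn
      calc t (k + (0+1)) - cm ≤ t (k+1) - t k := by
            rw [(by omega : k + (0+1) = k + 1)]; linarith [hk1]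
        _ < δ0 := lt_of_lt_of_le h2 hδa
    · simp only [ht2, if_neg (by omega : ¬ i = 0), if_neg (by omega : ¬ i + 1 = 0)]
      rw [(by omega : k + (i + 1) = (k + i) + 1)]
      exact lt_of_lt_of_le (hmesh (k + i) (by omega)) hδa
  case tag2 =>
    intro i hi
    rcases Nat.eq_zero_or_pos i with rfl | hipos
    · simp only [ht2, hs2, if_pos rfl, if_neg (by omega : ¬ (0:ℕ) + 1 = 0)]
      rw [(by omega : k + (0 + 1) = k + 1)]
      exact ⟨le_max_right _ _, max_le (htag k hkn).2 hk2⟩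
    · simp only [ht2, hs2, if_neg (by omega : ¬ i = 0), if_neg (by omega : ¬ i + 1 = 0)]
      rw [(by omega : k + (i + 1) = (k + i) + 1)]
      exact htag (k + i) (by omega)
  -- sums
  set F : ℕ → ℂ := fun i => g (Γ (s i)) * (Γ (t (i + 1)) - Γ (t i)) with hF
  set R : ℂ := ∑ i ∈ Finset.range (n - (k+1)), F (k+1+i) with hR
  have hsplit : ∑ i ∈ Finset.range n, F i = ∑ i ∈ Finset.range (k+1), F i + R := by
    have e : (k+1) + (n - (k+1)) = n := by omega
    calc ∑ i ∈ Finset.range n, F i = ∑ i ∈ Finset.range ((k+1) + (n-(k+1))), F i := by rw [e]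
      _ = _ := Finset.sum_range_add F (k+1) (n-(k+1))
  have hS2eq : ∑ i ∈ Finset.range (n - k), (fun i => g (Γ (s2 i)) * (Γ (t2 (i + 1)) - Γ (t2 i))) i
      = g (Γ (max (s k) cm)) * (Γ (t (k+1)) - Γ cm) + R := by
    have hA0 : g (Γ (s2 0)) * (Γ (t2 (0 + 1)) - Γ (t2 0)) = g (Γ (max (s k) cm)) * (Γ (t (k+1)) - Γ cm) := by
      simp only [ht2, hs2, if_pos rfl, if_neg (by omega : ¬ (0:ℕ) + 1 = 0)]
      try rw [(by omega : k + (0 + 1) = k + 1)]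
    have hAi : ∀ i ∈ Finset.range (n-(k+1)), g (Γ (s2 (i+1))) * (Γ (t2 (i + 1 + 1)) - Γ (t2 (i+1))) = F (k+1+i) := by
      intro i hi
      simp only [ht2, hs2, hF, if_neg (by omega : ¬ i + 1 = 0), if_neg (by omega : ¬ i + 1 + 1 = 0)]
      rw [(by omega : k + (i + 1) = k + 1 + i), (by omega : k + (i + 1 + 1) = k + 1 + i + 1)]
    rw [hnk, Finset.sum_range_succ', Finset.sum_congr rfl hAi, hA0, add_comm]
  rw [hS2eq] at hS2
  -- telescoping head
  have htel : ∑ i ∈ Finset.range (k+1), F i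
      = ∑ i ∈ Finset.range (k+1), (g (Γ (s i)) - g (Γ C)) * (Γ (t (i + 1)) - Γ (t i))
        + g (Γ C) * (Γ (t (k+1)) - Γ C) := by
    have e1 : ∑ i ∈ Finset.range (k+1), (Γ (t (i+1)) - Γ (t i)) = Γ (t (k+1)) - Γ (t 0) :=
      Finset.sum_range_sub (fun i => Γ (t i)) (k+1)
    have e2 : ∑ i ∈ Finset.range (k+1), F i
        = ∑ i ∈ Finset.range (k+1), ((g (Γ (s i)) - g (Γ C)) * (Γ (t (i + 1)) - Γ (t i))
            + g (Γ C) * (Γ (t (i+1)) - Γ (t i))) := by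
      refine Finset.sum_congr rfl fun i hi => ?_
      simp only [hF]; ring
    rw [e2, Finset.sum_add_distrib, ← Finset.mul_sum, e1, ht0]
  -- key identity
  have hkey : (∑ i ∈ Finset.range n, F i) - (f (Γ q) - f (Γ C))
      = (∑ i ∈ Finset.range (k+1), (g (Γ (s i)) - g (Γ C)) * (Γ (t (i + 1)) - Γ (t i)))
        - (g (Γ (max (s k) cm)) - g (Γ C)) * (Γ (t (k+1)) - Γ cm)
        + g (Γ C) * (Γ cm - Γ C)
        + ((g (Γ (max (s k) cm)) * (Γ (t (k+1)) - Γ cm) + R) - (f (Γ q) - f (Γ cm)))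
        + (f (Γ C) - f (Γ cm)) := by
    rw [hsplit, htel]; ring
  -- bounds
  have hT1 : ‖∑ i ∈ Finset.range (k+1), (g (Γ (s i)) - g (Γ C)) * (Γ (t (i + 1)) - Γ (t i))‖
      ≤ (ε/5/(V+1)) * V := by
    calc ‖∑ i ∈ Finset.range (k+1), (g (Γ (s i)) - g (Γ C)) * (Γ (t (i + 1)) - Γ (t i))‖
        ≤ ∑ i ∈ Finset.range (k+1), ‖(g (Γ (s i)) - g (Γ C)) * (Γ (t (i + 1)) - Γ (t i))‖ :=
          norm_sum_le _ _
      _ ≤ ∑ i ∈ Finset.range (k+1), (ε/5/(V+1)) * ‖Γ (t (i + 1)) - Γ (t i)‖ := by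
          refine Finset.sum_le_sum fun i hi => ?_
          rw [Finset.mem_range] at hi
          rw [norm_mul]
          have hsab : s i ∈ Icc a b := by
            have h1 := htag i (by omega)
            exact ⟨le_trans (htab i (by omega)).1 h1.1, le_trans h1.2 (htab (i+1) (by omega)).2⟩
          have hsC : |s i - C| < δg := by
            have h1 := (htag i (by omega)).1
            have h2 := (htag i (by omega)).2
            have h3 : t i ≥ t 0 := part_mono hmono 0 i (by omega) (by omega)
            have h4 : t (i+1) ≤ t (k+1) := part_mono hmono (i+1) (k+1) (by omega) (by omega)
            have h5 : t (k+1) ≤ cm + (min δ0 η) := by linarith [hmesh k hkn, hk1]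
            rw [ht0] at h3
            rw [abs_sub_lt_iff]
            constructor
            · have : s i ≤ C + 2*η := by
                have : cm + (min δ0 η) ≤ C + 2*η := by rw [hcm]; linarith [hδb]
                linarith
              linarith
            · linarith
          exact mul_le_mul_of_nonneg_right (Hg (s i) hsab C hCab hsC).le (norm_nonneg _)
      _ = (ε/5/(V+1)) * ∑ i ∈ Finset.range (k+1), ‖Γ (t (i + 1)) - Γ (t i)‖ := by
          rw [Finset.mul_sum]
      _ ≤ (ε/5/(V+1)) * V := by
          apply mul_le_mul_of_nonneg_left _ (by positivity)
          exact hV (k+1) t (fun i hi => hmono i (by omega)) (fun i hi => htab i (by omega))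
  have hT2 : ‖(g (Γ (max (s k) cm)) - g (Γ C)) * (Γ (t (k+1)) - Γ cm)‖
      ≤ (2*Bg) * (ε/5/(3*(Bg+1))) := by
    rw [norm_mul]
    have hv0ab : max (s k) cm ∈ Icc a b := by
      constructor
      · exact le_trans hcmab.1 (le_max_right _ _)
      · apply max_le _ hcmab.2
        exact le_trans (htag k hkn).2 (htab (k+1) hkn).2
    have h1 : ‖g (Γ (max (s k) cm)) - g (Γ C)‖ ≤ 2*Bg := by
      have := abs_sub_le2 (g (Γ (max (s k) cm))) (g (Γ C))
      linarith [hBg _ hv0ab, hBg C hCab]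
    have h2 : ‖Γ (t (k+1)) - Γ cm‖ < ε/5/(3*(Bg+1)) := by
      apply HΓ _ (htab (k+1) hkn) _ hcmab
      have h3 := hmesh k hkn
      rw [abs_sub_lt_iff]
      constructor
      · linarith [hk1, hδb, hηΓ]
      · linarith [hk2, hδΓ]
    exact mul_le_mul h1 h2.le (norm_nonneg _) (by positivity)
  have hT3 : ‖g (Γ C) * (Γ cm - Γ C)‖ ≤ Bg * (ε/5/(3*(Bg+1))) := by
    rw [norm_mul]
    have h2 : ‖Γ cm - Γ C‖ < ε/5/(3*(Bg+1)) := by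
      apply HΓ _ hcmab _ hCab
      rw [hcm, abs_sub_lt_iff]
      constructor <;> linarith
    exact mul_le_mul (hBg C hCab) h2.le (norm_nonneg _) hBg0
  have hD3 : ‖f (Γ C) - f (Γ cm)‖ < ε/5 := by
    apply Hf C hCab cm hcmab
    rw [hcm, abs_sub_lt_iff]
    constructor <;> linarith
  -- combine
  have hb1 : (ε/5/(V+1)) * V < ε/5 := arith1 hε hV0
  have hb2 : (2*Bg) * (ε/5/(3*(Bg+1))) + Bg * (ε/5/(3*(Bg+1))) < ε/5 := arith2 hε hBg0
  rw [hkey]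
  refine lt_of_le_of_lt (abs_comb _ _ _ _ _) ?_
  linarith only [hε, hT1, hT2, hT3, hS2, hD3, hb1, hb2]

set_option maxHeartbeats 1000000 in
lemma rs_right {Γ : ℝ → ℂ} {f g : ℂ → ℂ} {a b p D : ℝ} {Bg V : ℝ}
    (hap : a ≤ p) (hpD : p < D) (hDb : D ≤ b)
    (hBg : ∀ x ∈ Icc a b, ‖g (Γ x)‖ ≤ Bg)
    (hV : ∀ (N : ℕ) (u : ℕ → ℝ), (∀ i < N, u i ≤ u (i + 1)) → (∀ i ≤ N, u i ∈ Icc a b) →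
      ∑ i ∈ Finset.range N, ‖Γ (u (i + 1)) - Γ (u i)‖ ≤ V)
    (hgu : ∀ ε > (0:ℝ), ∃ δ > (0:ℝ), ∀ x ∈ Icc a b, ∀ y ∈ Icc a b,
      |x - y| < δ → ‖g (Γ x) - g (Γ y)‖ < ε)
    (hfu : ∀ ε > (0:ℝ), ∃ δ > (0:ℝ), ∀ x ∈ Icc a b, ∀ y ∈ Icc a b,
      |x - y| < δ → ‖f (Γ x) - f (Γ y)‖ < ε)
    (hΓu : ∀ ε > (0:ℝ), ∃ δ > (0:ℝ), ∀ x ∈ Icc a b, ∀ y ∈ Icc a b,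
      |x - y| < δ → ‖Γ x - Γ y‖ < ε)
    (hyp : ∀ q', p < q' → q' < D → IsRSIntegral Γ p q' g (f (Γ q') - f (Γ p))) :
    IsRSIntegral Γ p D g (f (Γ D) - f (Γ p)) := by
  intro ε hε
  have hDab : D ∈ Icc a b := ⟨le_trans hap hpD.le, hDb⟩
  have hpab : p ∈ Icc a b := ⟨hap, le_trans hpD.le hDb⟩
  have hV0 : 0 ≤ V := by
    have := hV 0 (fun _ => D) (by omega) (fun i _ => hDab)
    simpa using this
  have hBg0 : 0 ≤ Bg := le_trans (norm_nonneg _) (hBg D hDab)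
  obtain ⟨δg, hδg, Hg⟩ := hgu (ε/5/(V+1)) (by positivity)
  obtain ⟨δΓ, hδΓ, HΓ⟩ := hΓu (ε/5/(3*(Bg+1))) (by positivity)
  obtain ⟨δf, hδf, Hf⟩ := hfu (ε/5) (by linarith)
  set η := min (min δg δΓ) (min δf (D - p)) / 3 with hηdef
  have hη0 : 0 < η := by
    have : 0 < min (min δg δΓ) (min δf (D - p)) := by
      apply lt_min (lt_min hδg hδΓ) (lt_min hδf (by linarith))
    positivity
  have hηg : 2 * η < δg := by
    have h1 : min (min δg δΓ) (min δf (D - p)) ≤ δg := le_trans (min_le_left _ _) (min_le_left _ _)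
    rw [hηdef]; linarith
  have hηΓ : 2 * η < δΓ := by
    have h1 : min (min δg δΓ) (min δf (D - p)) ≤ δΓ := le_trans (min_le_left _ _) (min_le_right _ _)
    rw [hηdef]; linarith
  have hηf : 2 * η < δf := by
    have h1 : min (min δg δΓ) (min δf (D - p)) ≤ δf := le_trans (min_le_right _ _) (min_le_left _ _)
    rw [hηdef]; linarith
  have hηq : η < D - p := by
    have h1 : min (min δg δΓ) (min δf (D - p)) ≤ D - p := le_trans (min_le_right _ _) (min_le_right _ _)
    rw [hηdef]; linarith
  set dm := D - η with hdm
  have hpdm : p < dm := by rw [hdm]; linarith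
  have hdmD : dm < D := by rw [hdm]; linarith
  have hdmab : dm ∈ Icc a b := ⟨le_trans hap hpdm.le, le_trans hdmD.le hDb⟩
  obtain ⟨δ0, hδ0, H0⟩ := hyp dm hpdm hdmD (ε/5) (by linarith)
  refine ⟨min δ0 η, lt_min hδ0 hη0, ?_⟩
  intro n t s ht0 htn hmono hmesh htag
  have hδa : min δ0 η ≤ δ0 := min_le_left _ _
  have hδb : min δ0 η ≤ η := min_le_right _ _
  have htab : ∀ i ≤ n, t i ∈ Icc a b := by
    intro i hi
    have h0i : t 0 ≤ t i := part_mono hmono 0 i (Nat.zero_le _) hi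
    have hin : t i ≤ t n := part_mono hmono i n hi le_rfl
    rw [ht0] at h0i; rw [htn] at hin
    exact ⟨le_trans hap h0i, le_trans hin hDb⟩
  have hn : 0 < n := by
    rcases Nat.eq_zero_or_pos n with rfl | h
    · exfalso; rw [ht0] at htn; exact absurd htn (by linarith)
    · exact h
  have hm0 : t 0 ≤ dm := by rw [ht0]; exact hpdm.le
  have hmn : dm ≤ t n := by rw [htn]; exact hdmD.le
  obtain ⟨k, hkn, hk1, hk2⟩ := exists_split hmono hn hm0 hmn
  set t1 : ℕ → ℝ := fun i => if i ≤ k then t i else dm with ht1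
  set s1 : ℕ → ℝ := fun i => if i < k then s i else min (s k) dm with hs1
  have hS1 := H0 (k+1) t1 s1 (by simp [ht1, ht0]) (by simp [ht1]) ?mono1 ?mesh1 ?tag1
  case mono1 =>
    intro i hi
    by_cases hik : i < k
    · simp only [ht1, if_pos hik.le, if_pos (by omega : i + 1 ≤ k)]
      exact hmono i (by omega)
    · have : i = k := by omega
      subst this
      simp only [ht1, if_pos le_rfl, if_neg (by omega : ¬ i + 1 ≤ i)]
      exact hk1
  case mesh1 =>
    intro i hi
    by_cases hik : i < k
    · simp only [ht1, if_pos hik.le, if_pos (by omega : i + 1 ≤ k)]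
      exact lt_of_lt_of_le (hmesh i (by omega)) hδa
    · have : i = k := by omega
      subst this
      simp only [ht1, if_pos le_rfl, if_neg (by omega : ¬ i + 1 ≤ i)]
      have h2 := hmesh i (by omega)
      have h3 : dm - t i ≤ t (i+1) - t i := by linarith [hk2]
      linarith [lt_of_lt_of_le h2 hδa]
  case tag1 =>
    intro i hi
    by_cases hik : i < k
    · simp only [ht1, hs1, if_pos hik.le, if_pos (by omega : i + 1 ≤ k), if_pos hik]
      exact htag i (by omega)
    · have : i = k := by omega
      subst this
      simp only [ht1, hs1, if_pos le_rfl, if_neg (by omega : ¬ i + 1 ≤ i), if_neg (by omega : ¬ i < i)]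
      exact ⟨le_min (htag i (by omega)).1 hk1, min_le_right _ _⟩
  -- sums
  set F : ℕ → ℂ := fun i => g (Γ (s i)) * (Γ (t (i + 1)) - Γ (t i)) with hF
  set R : ℂ := ∑ i ∈ Finset.range (n - (k+1)), F (k+1+i) with hR
  have hnk : n - k = (n - (k+1)) + 1 := by omega
  have hsplit : ∑ i ∈ Finset.range n, F i = ∑ i ∈ Finset.range (k+1), F i + R := by
    have e : (k+1) + (n - (k+1)) = n := by omega
    calc ∑ i ∈ Finset.range n, F i = ∑ i ∈ Finset.range ((k+1) + (n-(k+1))), F i := by rw [e]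
      _ = _ := Finset.sum_range_add F (k+1) (n-(k+1))
  have hS1eq : ∑ i ∈ Finset.range (k+1), (fun i => g (Γ (s1 i)) * (Γ (t1 (i + 1)) - Γ (t1 i))) i
      = ∑ i ∈ Finset.range k, F i + g (Γ (min (s k) dm)) * (Γ dm - Γ (t k)) := by
    rw [Finset.sum_range_succ]
    congr 1
    · refine Finset.sum_congr rfl fun i hi => ?_
      rw [Finset.mem_range] at hi
      simp only [ht1, hs1, hF, if_pos hi.le, if_pos (by omega : i + 1 ≤ k), if_pos hi]
    · simp only [ht1, hs1, if_pos le_rfl, if_neg (by omega : ¬ k + 1 ≤ k), if_neg (lt_irrefl k)]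
  rw [hS1eq] at hS1
  -- tail telescope
  have hsum2 : ∑ i ∈ Finset.range (n - k), F (k + i) = R + F k := by
    rw [hnk, Finset.sum_range_succ']
    have e : ∀ i ∈ Finset.range (n - (k+1)), F (k + (i + 1)) = F (k + 1 + i) :=
      fun i _ => by rw [(by omega : k + (i + 1) = k + 1 + i)]
    rw [Finset.sum_congr rfl e, (by omega : k + 0 = k)]
  have htel : ∑ i ∈ Finset.range (n - k), F (k + i)
      = ∑ i ∈ Finset.range (n - k), (g (Γ (s (k + i))) - g (Γ D)) * (Γ (t (k + (i + 1))) - Γ (t (k + i)))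
        + g (Γ D) * (Γ D - Γ (t k)) := by
    have e1 : ∑ i ∈ Finset.range (n - k), (Γ (t (k + (i + 1))) - Γ (t (k + i)))
        = Γ (t (k + (n - k))) - Γ (t (k + 0)) :=
      Finset.sum_range_sub (fun i => Γ (t (k + i))) (n - k)
    have e2 : ∑ i ∈ Finset.range (n - k), F (k + i)
        = ∑ i ∈ Finset.range (n - k), ((g (Γ (s (k + i))) - g (Γ D)) * (Γ (t (k + (i + 1))) - Γ (t (k + i)))
            + g (Γ D) * (Γ (t (k + (i + 1))) - Γ (t (k + i)))) := by
      refine Finset.sum_congr rfl fun i hi => ?_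
      simp only [hF]
      rw [(by omega : k + i + 1 = k + (i + 1))]
      ring
    rw [e2, Finset.sum_add_distrib, ← Finset.mul_sum, e1, (by omega : k + (n - k) = n),
      (by omega : k + 0 = k), htn]
  -- key identity
  have hkey : (∑ i ∈ Finset.range n, F i) - (f (Γ D) - f (Γ p))
      = ((∑ i ∈ Finset.range k, F i + g (Γ (min (s k) dm)) * (Γ dm - Γ (t k))) - (f (Γ dm) - f (Γ p)))
        + (∑ i ∈ Finset.range (n - k), (g (Γ (s (k + i))) - g (Γ D)) * (Γ (t (k + (i + 1))) - Γ (t (k + i))))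
        + (g (Γ D) - g (Γ (min (s k) dm))) * (Γ dm - Γ (t k))
        + g (Γ D) * (Γ D - Γ dm)
        + (f (Γ dm) - f (Γ D)) := by
    have h1 : ∑ i ∈ Finset.range n, F i = ∑ i ∈ Finset.range k, F i + (R + F k) := by
      rw [hsplit, Finset.sum_range_succ]; ring
    rw [h1, ← hsum2, htel]
    simp only [hF]
    ring
  -- bounds
  have hT1 : ‖∑ i ∈ Finset.range (n - k), (g (Γ (s (k + i))) - g (Γ D)) * (Γ (t (k + (i + 1))) - Γ (t (k + i)))‖
      ≤ (ε/5/(V+1)) * V := by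
    calc ‖∑ i ∈ Finset.range (n - k), (g (Γ (s (k + i))) - g (Γ D)) * (Γ (t (k + (i + 1))) - Γ (t (k + i)))‖
        ≤ ∑ i ∈ Finset.range (n - k), ‖(g (Γ (s (k + i))) - g (Γ D)) * (Γ (t (k + (i + 1))) - Γ (t (k + i)))‖ :=
          norm_sum_le _ _
      _ ≤ ∑ i ∈ Finset.range (n - k), (ε/5/(V+1)) * ‖Γ (t (k + (i + 1))) - Γ (t (k + i))‖ := by
          refine Finset.sum_le_sum fun i hi => ?_
          rw [Finset.mem_range] at hi
          rw [norm_mul]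
          have hki : k + i < n := by omega
          have h1 := (htag (k + i) hki).1
          have h2 := (htag (k + i) hki).2
          have hsab : s (k + i) ∈ Icc a b :=
            ⟨le_trans (htab (k + i) hki.le).1 h1, le_trans h2 (htab (k + i + 1) hki).2⟩
          have hsD : |s (k + i) - D| < δg := by
            have h3 : t (k + i) ≥ t k := part_mono hmono k (k + i) (by omega) (by omega)
            have h4 : t (k + i + 1) ≤ t n := part_mono hmono (k + i + 1) n (by omega) le_rfl
            have h5 : t k ≥ dm - min δ0 η := by linarith [hmesh k hkn, hk2]
            rw [htn] at h4
            rw [abs_sub_lt_iff]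
            constructor
            · linarith
            · have : dm - min δ0 η ≥ D - 2*η := by rw [hdm]; linarith [hδb]
              linarith
          rw [(by omega : k + (i + 1) = k + i + 1)]
          exact mul_le_mul_of_nonneg_right (Hg (s (k + i)) hsab D hDab hsD).le (norm_nonneg _)
      _ = (ε/5/(V+1)) * ∑ i ∈ Finset.range (n - k), ‖Γ (t (k + (i + 1))) - Γ (t (k + i))‖ := by
          rw [Finset.mul_sum]
      _ ≤ (ε/5/(V+1)) * V := by
          apply mul_le_mul_of_nonneg_left _ (by positivity)
          have := hV (n - k) (fun i => t (k + i)) (fun i hi => by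
              show t (k + i) ≤ t (k + (i + 1))
              rw [(by omega : k + (i + 1) = k + i + 1)]
              exact hmono (k + i) (by omega))
            (fun i hi => htab (k + i) (by omega))
          exact this
  have hw0ab : min (s k) dm ∈ Icc a b := by
    constructor
    · exact le_min (le_trans (htab k hkn.le).1 (htag k hkn).1) hdmab.1
    · exact le_trans (min_le_right _ _) hdmab.2
  have hT2 : ‖(g (Γ D) - g (Γ (min (s k) dm))) * (Γ dm - Γ (t k))‖
      ≤ (2*Bg) * (ε/5/(3*(Bg+1))) := by
    rw [norm_mul]
    have h1 : ‖g (Γ D) - g (Γ (min (s k) dm))‖ ≤ 2*Bg := by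
      have := abs_sub_le2 (g (Γ D)) (g (Γ (min (s k) dm)))
      linarith [hBg D hDab, hBg _ hw0ab]
    have h2 : ‖Γ dm - Γ (t k)‖ < ε/5/(3*(Bg+1)) := by
      apply HΓ _ hdmab _ (htab k hkn.le)
      have h3 := hmesh k hkn
      rw [abs_sub_lt_iff]
      constructor
      · linarith [hk2, hδa]
      · linarith [hk1]
    exact mul_le_mul h1 h2.le (norm_nonneg _) (by positivity)
  have hT3 : ‖g (Γ D) * (Γ D - Γ dm)‖ ≤ Bg * (ε/5/(3*(Bg+1))) := by
    rw [norm_mul]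
    have h2 : ‖Γ D - Γ dm‖ < ε/5/(3*(Bg+1)) := by
      apply HΓ _ hDab _ hdmab
      rw [hdm, abs_sub_lt_iff]
      constructor <;> linarith
    exact mul_le_mul (hBg D hDab) h2.le (norm_nonneg _) hBg0
  have hD3 : ‖f (Γ dm) - f (Γ D)‖ < ε/5 := by
    apply Hf dm hdmab D hDab
    rw [hdm, abs_sub_lt_iff]
    constructor <;> linarith
  have hb1 : (ε/5/(V+1)) * V < ε/5 := arith1 hε hV0
  have hb2 : (2*Bg) * (ε/5/(3*(Bg+1))) + Bg * (ε/5/(3*(Bg+1))) < ε/5 := arith2 hε hBg0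
  rw [hkey]
  refine lt_of_le_of_lt (abs_comb5 _ _ _ _ _) ?_
  linarith only [hε, hS1, hT1, hT2, hT3, hD3, hb1, hb2]

/-- Endpoint form of `GoodInterval`. -/
def GIprop (Γ : ℝ → ℂ) (f g : ℂ → ℂ) (a b x y : ℝ) : Prop :=
  a ≤ x ∧ x < y ∧ y ≤ b ∧ ∀ c' d' : ℝ, x ≤ c' → c' < d' → d' ≤ y →
    IsRSIntegral Γ c' d' g (f (Γ d') - f (Γ c'))

lemma merge_aux {Γ : ℝ → ℂ} {f g : ℂ → ℂ} {a b : ℝ} {CΓ : ℝ}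
    (hCΓ : ∀ x ∈ Icc a b, ‖Γ x‖ ≤ CΓ)
    (hgu : ∀ ε > (0:ℝ), ∃ δ > (0:ℝ), ∀ x ∈ Icc a b, ∀ y ∈ Icc a b,
      |x - y| < δ → ‖g (Γ x) - g (Γ y)‖ < ε)
    {x1 y1 x2 y2 : ℝ} (h1 : GIprop Γ f g a b x1 y1) (h2 : GIprop Γ f g a b x2 y2)
    (hx : x1 ≤ x2) (hxy : x2 ≤ y1) : GIprop Γ f g a b x1 (max y1 y2) := by
  refine ⟨h1.1, lt_of_lt_of_le h1.2.1 (le_max_left _ _), max_le h1.2.2.1 h2.2.2.1, ?_⟩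
  intro c' d' hc hcd hd
  by_cases hd1 : d' ≤ y1
  · exact h1.2.2.2 c' d' hc hcd hd1
  push_neg at hd1
  have hd2 : d' ≤ y2 := by
    rcases le_total y1 y2 with h | h
    · rwa [max_eq_right h] at hd
    · rw [max_eq_left h] at hd
      exact absurd hd (not_le.mpr hd1)
  by_cases hc2 : x2 ≤ c'
  · exact h2.2.2.2 c' d' hc2 hcd hd2
  push_neg at hc2
  have hA := h1.2.2.2 c' x2 hc hc2 hxy
  have hB := h2.2.2.2 x2 d' le_rfl (lt_of_le_of_lt hxy hd1) hd2
  have hsum := rs_add (le_trans h1.1 hc) hc2 (lt_of_le_of_lt hxy hd1)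
    (le_trans hd2 h2.2.2.1) hCΓ hgu hA hB
  have e : f (Γ d') - f (Γ c') = (f (Γ x2) - f (Γ c')) + (f (Γ d') - f (Γ x2)) := by ring
  rw [e]
  exact hsum

lemma merge_gi {Γ : ℝ → ℂ} {f g : ℂ → ℂ} {a b : ℝ} {CΓ : ℝ}
    (hCΓ : ∀ x ∈ Icc a b, ‖Γ x‖ ≤ CΓ)
    (hgu : ∀ ε > (0:ℝ), ∃ δ > (0:ℝ), ∀ x ∈ Icc a b, ∀ y ∈ Icc a b,
      |x - y| < δ → ‖g (Γ x) - g (Γ y)‖ < ε)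
    {x1 y1 x2 y2 : ℝ} (h1 : GIprop Γ f g a b x1 y1) (h2 : GIprop Γ f g a b x2 y2)
    (h21 : x2 ≤ y1) (h12 : x1 ≤ y2) : GIprop Γ f g a b (min x1 x2) (max y1 y2) := by
  rcases le_total x1 x2 with h | h
  · rw [min_eq_left h]
    exact merge_aux hCΓ hgu h1 h2 h h21
  · rw [min_eq_right h, max_comm]
    exact merge_aux hCΓ hgu h2 h1 h h12

/-- Properties of the family `𝓘` of good intervals: it is closed under unions of
intersecting members, every member lies in a unique maximal member, and the maximal
members partition `E = ⋃𝓘`. -/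
theorem stmt10 (a b : ℝ) (hab : a < b) (Γ : ℝ → ℂ)
    (hΓc : ContinuousOn Γ (Set.Icc a b)) (hΓbv : BoundedVariationOn Γ (Set.Icc a b))
    (f g : ℂ → ℂ) (hf : ContinuousOn f (Γ '' Set.Icc a b))
    (hg : ContinuousOn g (Γ '' Set.Icc a b)) :
    (∀ I J : Set ℝ, GoodInterval Γ f g a b I → GoodInterval Γ f g a b J →
      (I ∩ J).Nonempty → GoodInterval Γ f g a b (I ∪ J)) ∧
    (∀ J : Set ℝ, GoodInterval Γ f g a b J →
      ∃! M : Set ℝ, MaximalGood Γ f g a b M ∧ J ⊆ M) ∧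
    (∀ M N : Set ℝ, MaximalGood Γ f g a b M → MaximalGood Γ f g a b N → M ≠ N →
      Disjoint M N) ∧
    ⋃₀ {M | MaximalGood Γ f g a b M} = ⋃₀ {J | GoodInterval Γ f g a b J} := by
  classical
  -- analytic preliminaries
  obtain ⟨CΓ, hCΓ'⟩ := isCompact_Icc.exists_bound_of_continuousOn hΓc
  have hCΓ : ∀ x ∈ Set.Icc a b, ‖Γ x‖ ≤ CΓ := fun x hx => by
    simpa using hCΓ' x hx
  have mku : ∀ h : ℝ → ℂ, ContinuousOn h (Set.Icc a b) →
      ∀ ε > (0:ℝ), ∃ δ > (0:ℝ), ∀ x ∈ Set.Icc a b, ∀ y ∈ Set.Icc a b,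
        |x - y| < δ → ‖h x - h y‖ < ε := by
    intro h hc ε hε
    have huc := isCompact_Icc.uniformContinuousOn_of_continuous hc
    rw [Metric.uniformContinuousOn_iff] at huc
    obtain ⟨δ, hδ, H⟩ := huc ε hε
    refine ⟨δ, hδ, fun x hx y hy hxy => ?_⟩
    have := H x hx y hy (by rwa [Real.dist_eq])
    rwa [Complex.dist_eq] at this
  have hgΓc : ContinuousOn (fun x => g (Γ x)) (Set.Icc a b) :=
    hg.comp hΓc (mapsTo_image _ _)
  have hfΓc : ContinuousOn (fun x => f (Γ x)) (Set.Icc a b) :=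
    hf.comp hΓc (mapsTo_image _ _)
  have hgu := mku _ hgΓc
  have hfu := mku _ hfΓc
  have hΓu := mku _ hΓc
  obtain ⟨Bg, hBg'⟩ := isCompact_Icc.exists_bound_of_continuousOn hgΓc
  have hBg : ∀ x ∈ Set.Icc a b, ‖g (Γ x)‖ ≤ Bg := fun x hx => by
    simpa using hBg' x hx
  have hV : ∀ (N : ℕ) (u : ℕ → ℝ), (∀ i < N, u i ≤ u (i + 1)) →
      (∀ i ≤ N, u i ∈ Set.Icc a b) →
      ∑ i ∈ Finset.range N, ‖Γ (u (i + 1)) - Γ (u i)‖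
        ≤ (eVariationOn Γ (Set.Icc a b)).toReal :=
    fun N u h1 h2 => sum_abs_le_var hΓbv h1 h2
  have mergeP : ∀ x1 y1 x2 y2 : ℝ, GIprop Γ f g a b x1 y1 → GIprop Γ f g a b x2 y2 →
      x2 ≤ y1 → x1 ≤ y2 → GIprop Γ f g a b (min x1 x2) (max y1 y2) :=
    fun x1 y1 x2 y2 h1 h2 h21 h12 => merge_gi hCΓ hgu h1 h2 h21 h12
  have B' : ∀ p q : ℝ, a ≤ p → p < q → q ≤ b →
      (∀ p' q' : ℝ, p < p' → p' < q' → q' < q → IsRSIntegral Γ p' q' g (f (Γ q') - f (Γ p'))) →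
      IsRSIntegral Γ p q g (f (Γ q) - f (Γ p)) := by
    intro p q h1 h2 h3 hyp
    apply rs_left h1 h2 h3 hBg hV hgu hfu hΓu
    intro p' hp1 hp2
    apply rs_right (le_trans h1 hp1.le) hp2 h3 hBg hV hgu hfu hΓu
    intro q' hq1 hq2
    exact hyp p' q' hp1 hq1 hq2
  -- part 1
  have part1 : ∀ I J : Set ℝ, GoodInterval Γ f g a b I → GoodInterval Γ f g a b J →
      (I ∩ J).Nonempty → GoodInterval Γ f g a b (I ∪ J) := by
    intro I J hI hJ hIJ
    obtain ⟨x1, y1, ha1, h1', hb1, rfl, hp1⟩ := hI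
    obtain ⟨x2, y2, ha2, h2', hb2, rfl, hp2⟩ := hJ
    obtain ⟨z, hz1, hz2⟩ := hIJ
    have h21 : x2 ≤ y1 := le_trans hz2.1 hz1.2
    have h12 : x1 ≤ y2 := le_trans hz1.1 hz2.2
    have hm := mergeP x1 y1 x2 y2 ⟨ha1, h1', hb1, hp1⟩ ⟨ha2, h2', hb2, hp2⟩ h21 h12
    refine ⟨min x1 x2, max y1 y2, hm.1, hm.2.1, hm.2.2.1, ?_, hm.2.2.2⟩
    rw [Set.Icc_union_Icc' h21 h12]
  -- part 2
  have part2 : ∀ J : Set ℝ, GoodInterval Γ f g a b J →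
      ∃! M : Set ℝ, MaximalGood Γ f g a b M ∧ J ⊆ M := by
    intro J hJ
    obtain ⟨c, d, hac, hcd, hdb, rfl, hprop⟩ := hJ
    set L : Set ℝ := {x | ∃ y, GIprop Γ f g a b x y ∧ x ≤ c ∧ d ≤ y} with hLdef
    set Rs : Set ℝ := {y | ∃ x, GIprop Γ f g a b x y ∧ x ≤ c ∧ d ≤ y} with hRdef
    have hcL : c ∈ L := ⟨d, ⟨hac, hcd, hdb, hprop⟩, le_rfl, le_rfl⟩
    have hdR : d ∈ Rs := ⟨c, ⟨hac, hcd, hdb, hprop⟩, le_rfl, le_rfl⟩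
    have hLb : BddBelow L := ⟨a, fun x hx => hx.choose_spec.1.1⟩
    have hRb : BddAbove Rs := ⟨b, fun y hy => hy.choose_spec.1.2.2.1⟩
    set C := sInf L with hCdef
    set D := sSup Rs with hDdef
    have haC : a ≤ C := le_csInf ⟨c, hcL⟩ (fun x hx => hx.choose_spec.1.1)
    have hCc : C ≤ c := csInf_le hLb hcL
    have hdD : d ≤ D := le_csSup hRb hdR
    have hDb : D ≤ b := csSup_le ⟨d, hdR⟩ (fun y hy => hy.choose_spec.1.2.2.1)
    have hCD : C < D := lt_of_le_of_lt hCc (lt_of_lt_of_le hcd hdD)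
    have hMGI : GIprop Γ f g a b C D := by
      refine ⟨haC, hCD, hDb, ?_⟩
      intro c' d' h1 h2 h3
      apply B' c' d' (le_trans haC h1) h2 (le_trans h3 hDb)
      intro p' q' hp1 hp2 hp3
      obtain ⟨x1, hx1L, hx1⟩ := exists_lt_of_csInf_lt ⟨c, hcL⟩ (lt_of_le_of_lt h1 hp1)
      obtain ⟨y1, hGI1, hx1c, hdy1⟩ := hx1L
      obtain ⟨y2, hy2R, hy2⟩ := exists_lt_of_lt_csSup ⟨d, hdR⟩
        (lt_of_lt_of_le (lt_of_lt_of_le hp3 h3) le_rfl)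
      obtain ⟨x2, hGI2, hx2c, hdy2⟩ := hy2R
      have hm := mergeP x1 y1 x2 y2 hGI1 hGI2
        (le_trans hx2c (le_trans hcd.le hdy1)) (le_trans hx1c (le_trans hcd.le hdy2))
      refine hm.2.2.2 p' q' ?_ hp2 ?_
      · exact le_trans (min_le_left _ _) hx1.le
      · exact le_trans hy2.le (le_max_right _ _)
    have hMgood : GoodInterval Γ f g a b (Set.Icc C D) :=
      ⟨C, D, hMGI.1, hMGI.2.1, hMGI.2.2.1, rfl, hMGI.2.2.2⟩
    have hJM : Set.Icc c d ⊆ Set.Icc C D := Set.Icc_subset_Icc hCc hdD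
    have hMmax : ∀ K, GoodInterval Γ f g a b K → Set.Icc C D ⊆ K → K = Set.Icc C D := by
      intro K hK hMK
      obtain ⟨x, y, hax, hxy, hyb, rfl, hKp⟩ := hK
      have hCmem : C ∈ Set.Icc x y := hMK ⟨le_rfl, hCD.le⟩
      have hDmem : D ∈ Set.Icc x y := hMK ⟨hCD.le, le_rfl⟩
      have hxL : x ∈ L := ⟨y, ⟨hax, hxy, hyb, hKp⟩, le_trans hCmem.1 hCc, le_trans hdD hDmem.2⟩
      have hyR : y ∈ Rs := ⟨x, ⟨hax, hxy, hyb, hKp⟩, le_trans hCmem.1 hCc, le_trans hdD hDmem.2⟩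
      have hx : x = C := le_antisymm hCmem.1 (csInf_le hLb hxL)
      have hy : y = D := le_antisymm (le_csSup hRb hyR) hDmem.2
      rw [hx, hy]
    refine ⟨Set.Icc C D, ⟨⟨hMgood, hMmax⟩, hJM⟩, ?_⟩
    rintro M' ⟨⟨hM'good, hM'max⟩, hJM'⟩
    obtain ⟨x', y', hax', hxy', hyb', rfl, hp'⟩ := hM'good
    have hcmem : c ∈ Set.Icc x' y' := hJM' ⟨le_rfl, hcd.le⟩
    have hdmem : d ∈ Set.Icc x' y' := hJM' ⟨hcd.le, le_rfl⟩
    have hm := mergeP C D x' y' hMGI ⟨hax', hxy', hyb', hp'⟩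
      (le_trans hcmem.1 (le_trans hcd.le hdD))
      (le_trans hCc (le_trans hcd.le hdmem.2))
    have hK0good : GoodInterval Γ f g a b (Set.Icc (min C x') (max D y')) :=
      ⟨_, _, hm.1, hm.2.1, hm.2.2.1, rfl, hm.2.2.2⟩
    have e1 : Set.Icc (min C x') (max D y') = Set.Icc x' y' :=
      hM'max _ hK0good (Set.Icc_subset_Icc (min_le_right _ _) (le_max_right _ _))
    have e2 : Set.Icc (min C x') (max D y') = Set.Icc C D :=
      hMmax _ hK0good (Set.Icc_subset_Icc (min_le_left _ _) (le_max_left _ _))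
    rw [← e1, e2]
  -- part 3
  have part3 : ∀ M N : Set ℝ, MaximalGood Γ f g a b M → MaximalGood Γ f g a b N → M ≠ N →
      Disjoint M N := by
    intro M N hM hN hMN
    by_contra hdis
    obtain ⟨z, hzM, hzN⟩ := Set.not_disjoint_iff.mp hdis
    obtain ⟨x1, y1, hax1, hxy1, hyb1, heq1, hp1⟩ := hM.1
    obtain ⟨x2, y2, hax2, hxy2, hyb2, heq2, hp2⟩ := hN.1
    rw [heq1] at hzM
    rw [heq2] at hzN
    have hm := mergeP x1 y1 x2 y2 ⟨hax1, hxy1, hyb1, hp1⟩ ⟨hax2, hxy2, hyb2, hp2⟩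
      (le_trans hzN.1 hzM.2) (le_trans hzM.1 hzN.2)
    have hK0good : GoodInterval Γ f g a b (Set.Icc (min x1 x2) (max y1 y2)) :=
      ⟨_, _, hm.1, hm.2.1, hm.2.2.1, rfl, hm.2.2.2⟩
    have e1 : Set.Icc (min x1 x2) (max y1 y2) = M := hM.2 _ hK0good
      (by rw [heq1]; exact Set.Icc_subset_Icc (min_le_left _ _) (le_max_left _ _))
    have e2 : Set.Icc (min x1 x2) (max y1 y2) = N := hN.2 _ hK0good
      (by rw [heq2]; exact Set.Icc_subset_Icc (min_le_right _ _) (le_max_right _ _))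
    exact hMN (by rw [← e1, ← e2])
  refine ⟨part1, part2, part3, ?_⟩
  ext z
  simp only [Set.mem_sUnion, Set.mem_setOf_eq]
  constructor
  · rintro ⟨M, hM, hz⟩
    exact ⟨M, hM.1, hz⟩
  · rintro ⟨J, hJ, hz⟩
    obtain ⟨M, ⟨hMmax', hJM⟩, -⟩ := part2 J hJ
    exact ⟨M, hMmax', hJM hz⟩
end

section
/- Let Γ : [a,b] → ℂ be a rectifiable path, f, g ∈ C(Γ([a,b])), let 𝓘 be the set of non-degenerate closed subintervals J of [a,b] such that ∫_γ g = f(γ⁺) − f(γ⁻) for every subpath γ of Γ|_J, and let E = ⋃𝓘. Then either E = [a,b] or [a,b] \ E is uncountable. -/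
open Complex Set

namespace Stmt11Aux


noncomputable def RSsum (Γ : ℝ → ℂ) (g : ℂ → ℂ) (t s : ℕ → ℝ) (n : ℕ) : ℂ :=
  ∑ i ∈ Finset.range n, g (Γ (s i)) * (Γ (t (i + 1)) - Γ (t i))

lemma ptmono {t : ℕ → ℝ} {n : ℕ} (h : ∀ i < n, t i ≤ t (i + 1)) :
    ∀ i j, i ≤ j → j ≤ n → t i ≤ t j := by
  intro i j hij hjn
  induction j with
  | zero => simp_all
  | succ m ih =>
    rcases Nat.eq_or_lt_of_le hij with rfl | hlt
    · exact le_refl _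
    · exact le_trans (ih (Nat.lt_succ_iff.mp hlt) (le_trans (Nat.le_succ m) hjn))
        (h m (lt_of_lt_of_le (Nat.lt_succ_self m) hjn))

lemma exists_split (Γ : ℝ → ℂ) (g : ℂ → ℂ) {c d m δ : ℝ} (hcm : c ≤ m) (hmd : m < d) 
    {n : ℕ} {t s : ℕ → ℝ} (ht0 : t 0 = c) (htn : t n = d)
    (hmono : ∀ i < n, t i ≤ t (i + 1)) (hmesh : ∀ i < n, t (i + 1) - t i < δ)
    (htag : ∀ i < n, s i ∈ Icc (t i) (t (i + 1))) :
    ∃ k : ℕ, k < n ∧ t k ≤ m ∧ m < t (k + 1) ∧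
    ∃ t₁ s₁ t₂ s₂ : ℕ → ℝ,
      (t₁ 0 = c ∧ t₁ (k + 1) = m ∧ (∀ i < k + 1, t₁ i ≤ t₁ (i + 1)) ∧
        (∀ i < k + 1, t₁ (i + 1) - t₁ i < δ) ∧ (∀ i < k + 1, s₁ i ∈ Icc (t₁ i) (t₁ (i + 1)))) ∧
      (t₂ 0 = m ∧ t₂ (n - k) = d ∧ (∀ i < n - k, t₂ i ≤ t₂ (i + 1)) ∧
        (∀ i < n - k, t₂ (i + 1) - t₂ i < δ) ∧ (∀ i < n - k, s₂ i ∈ Icc (t₂ i) (t₂ (i + 1)))) ∧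
      s₁ k ∈ Icc (t k) (t (k + 1)) ∧ s₂ 0 ∈ Icc (t k) (t (k + 1)) ∧
      (∀ i ≤ n - k, t₂ i ∈ Icc m d) ∧ (∀ i < n - k, s₂ i ∈ Icc m d) ∧
      (∀ i ≤ k + 1, t₁ i ∈ Icc c m) ∧ (∀ i < k + 1, s₁ i ∈ Icc c m) ∧
      RSsum Γ g t s n = RSsum Γ g t₁ s₁ (k + 1) + RSsum Γ g t₂ s₂ (n - k)
        + (g (Γ (s k)) - g (Γ (s₁ k))) * (Γ m - Γ (t k))
        + (g (Γ (s k)) - g (Γ (s₂ 0))) * (Γ (t (k + 1)) - Γ m) := by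
  classical
  have hn : 1 ≤ n := by
    rcases Nat.eq_zero_or_pos n with rfl | h
    · exfalso; rw [ht0] at htn; linarith
    · exact h
  set k := Nat.findGreatest (fun i => t i ≤ m) (n - 1) with hk
  have hk1 : t k ≤ m := by
    have := Nat.findGreatest_spec (P := fun i => t i ≤ m) (m := 0) (n := n - 1)
      (Nat.zero_le _) (by simpa [ht0] using hcm)
    exact this
  have hkle : k ≤ n - 1 := Nat.findGreatest_le (P := fun i => t i ≤ m) (n - 1)
  have hkn : k < n := lt_of_le_of_lt hkle (Nat.sub_lt hn one_pos)
  have hk2 : m < t (k + 1) := by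
    rcases Nat.lt_or_ge (k + 1) n with h | h
    · by_contra hle
      exact Nat.findGreatest_is_greatest (Nat.lt_succ_self k) (by omega) (not_lt.mp hle)
    · have : k + 1 = n := by omega
      rw [this, htn]; exact hmd
  refine ⟨k, hkn, hk1, hk2, ?_⟩
  set t₁ : ℕ → ℝ := fun i => if i ≤ k then t i else m with ht₁
  set s₁ : ℕ → ℝ := fun i => if i < k then s i else min (s k) m with hs₁
  set t₂ : ℕ → ℝ := fun i => if i = 0 then m else t (k + i) with ht₂
  set s₂ : ℕ → ℝ := fun i => if i = 0 then max (s k) m else s (k + i) with hs₂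
  have htagk := htag k hkn
  have ht₁k1 : t₁ (k + 1) = m := by simp [ht₁]
  have hs₁k : s₁ k = min (s k) m := by simp [hs₁]
  have hs₂0 : s₂ 0 = max (s k) m := by simp [hs₂]
  have hP1 : t₁ 0 = c ∧ t₁ (k + 1) = m ∧ (∀ i < k + 1, t₁ i ≤ t₁ (i + 1)) ∧
      (∀ i < k + 1, t₁ (i + 1) - t₁ i < δ) ∧ (∀ i < k + 1, s₁ i ∈ Icc (t₁ i) (t₁ (i + 1))) := by
    refine ⟨by simp [ht₁, ht0], ht₁k1, ?_, ?_, ?_⟩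
    · intro i hi
      rcases Nat.lt_or_ge i k with h | h
      · simp only [ht₁]
        rw [if_pos h.le, if_pos (Nat.succ_le_of_lt h)]
        exact hmono i (h.trans hkn)
      · have hik : i = k := by omega
        rw [hik]
        simp only [ht₁]
        rw [if_pos (le_refl k), if_neg (by omega : ¬ k + 1 ≤ k)]
        exact hk1
    · intro i hi
      rcases Nat.lt_or_ge i k with h | h
      · simp only [ht₁]
        rw [if_pos h.le, if_pos (Nat.succ_le_of_lt h)]
        exact hmesh i (h.trans hkn)
      · have hik : i = k := by omega
        rw [hik]
        simp only [ht₁]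
        rw [if_pos (le_refl k), if_neg (by omega : ¬ k + 1 ≤ k)]
        have := hmesh k hkn; linarith [hk2]
    · intro i hi
      rcases Nat.lt_or_ge i k with h | h
      · simp only [ht₁, hs₁]
        rw [if_pos h.le, if_pos (Nat.succ_le_of_lt h), if_pos h]
        exact htag i (h.trans hkn)
      · have hik : i = k := by omega
        rw [hik]
        simp only [ht₁, hs₁]
        rw [if_pos (le_refl k), if_neg (by omega : ¬ k + 1 ≤ k), if_neg (lt_irrefl k)]
        exact ⟨le_min htagk.1 hk1, min_le_right _ _⟩
  have hP2 : t₂ 0 = m ∧ t₂ (n - k) = d ∧ (∀ i < n - k, t₂ i ≤ t₂ (i + 1)) ∧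
      (∀ i < n - k, t₂ (i + 1) - t₂ i < δ) ∧ (∀ i < n - k, s₂ i ∈ Icc (t₂ i) (t₂ (i + 1))) := by
    refine ⟨by simp [ht₂], ?_, ?_, ?_, ?_⟩
    · have : n - k ≠ 0 := by omega
      simp only [ht₂, if_neg this]
      rw [show k + (n - k) = n by omega, htn]
    · intro i hi
      rcases Nat.eq_zero_or_pos i with rfl | h
      · simp only [ht₂, if_pos rfl, if_neg (Nat.one_ne_zero)]
        exact hk2.le
      · simp only [ht₂, if_neg (by omega : ¬ i = 0), if_neg (by omega : ¬ i + 1 = 0)]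
        rw [show k + (i + 1) = (k + i) + 1 by omega]
        exact hmono (k + i) (by omega)
    · intro i hi
      rcases Nat.eq_zero_or_pos i with rfl | h
      · simp only [ht₂, if_pos rfl, if_neg (Nat.one_ne_zero)]
        have := hmesh k hkn; linarith [hk1]
      · simp only [ht₂, if_neg (by omega : ¬ i = 0), if_neg (by omega : ¬ i + 1 = 0)]
        rw [show k + (i + 1) = (k + i) + 1 by omega]
        exact hmesh (k + i) (by omega)
    · intro i hi
      rcases Nat.eq_zero_or_pos i with rfl | h
      · simp only [ht₂, hs₂, if_pos rfl, if_neg (Nat.one_ne_zero)]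
        exact ⟨le_max_right _ _, max_le htagk.2 hk2.le⟩
      · simp only [ht₂, hs₂, if_neg (by omega : ¬ i = 0), if_neg (by omega : ¬ i + 1 = 0)]
        rw [show k + (i + 1) = (k + i) + 1 by omega]
        exact htag (k + i) (by omega)
  have ht₂mem : ∀ i ≤ n - k, t₂ i ∈ Icc m d := by
    intro i hi
    constructor
    · rw [← hP2.1]; exact ptmono hP2.2.2.1 0 i (Nat.zero_le _) hi
    · rw [← hP2.2.1]; exact ptmono hP2.2.2.1 i (n - k) hi (le_refl _)
  have hs₂mem : ∀ i < n - k, s₂ i ∈ Icc m d := by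
    intro i hi
    have := hP2.2.2.2.2 i hi
    exact ⟨le_trans (ht₂mem i hi.le).1 this.1, le_trans this.2 (ht₂mem (i+1) hi).2⟩
  have ht₁mem : ∀ i ≤ k + 1, t₁ i ∈ Icc c m := by
    intro i hi
    constructor
    · rw [← hP1.1]; exact ptmono hP1.2.2.1 0 i (Nat.zero_le _) hi
    · rw [← hP1.2.1]; exact ptmono hP1.2.2.1 i (k + 1) hi (le_refl _)
  have hs₁mem : ∀ i < k + 1, s₁ i ∈ Icc c m := by
    intro i hi
    have := hP1.2.2.2.2 i hi
    exact ⟨le_trans (ht₁mem i hi.le).1 this.1, le_trans this.2 (ht₁mem (i+1) hi).2⟩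
  refine ⟨t₁, s₁, t₂, s₂, hP1, hP2, ?_, ?_, ht₂mem, hs₂mem, ht₁mem, hs₁mem, ?_⟩
  · rw [hs₁k]; exact ⟨le_min htagk.1 hk1, le_trans (min_le_left _ _) htagk.2⟩
  · rw [hs₂0]; exact ⟨le_trans htagk.1 (le_max_left _ _), max_le htagk.2 hk2.le⟩
  · -- sum identity
    have e1 : RSsum Γ g t₁ s₁ (k + 1)
        = (∑ i ∈ Finset.range k, g (Γ (s i)) * (Γ (t (i + 1)) - Γ (t i)))
          + g (Γ (s₁ k)) * (Γ m - Γ (t k)) := by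
      rw [RSsum, Finset.sum_range_succ]
      congr 1
      · apply Finset.sum_congr rfl
        intro i hi
        have hik : i < k := Finset.mem_range.mp hi
        simp only [ht₁, hs₁, if_pos hik.le, if_pos (Nat.succ_le_of_lt hik), if_pos hik]
      · simp only [ht₁, if_pos (le_refl k), if_neg (by omega : ¬ k + 1 ≤ k)]
    have key : ∀ x ∈ Finset.range (n - k - 1),
        g (Γ (s₂ (x + 1))) * (Γ (t₂ (x + 1 + 1)) - Γ (t₂ (x + 1)))
          = g (Γ (s (k + 1 + x))) * (Γ (t (k + 1 + x + 1)) - Γ (t (k + 1 + x))) := by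
      intro x _
      simp only [ht₂, hs₂]
      rw [if_neg (by omega : ¬ x + 1 = 0), if_neg (by omega : ¬ x + 1 + 1 = 0),
        if_neg (by omega : ¬ x + 1 = 0),
        show k + (x + 1) = k + 1 + x by omega, show k + (x + 1 + 1) = k + 1 + x + 1 by omega]
    have h0 : t₂ 1 = t (k + 1) := by
      simp only [ht₂]; rw [if_neg Nat.one_ne_zero]
    have h00 : t₂ 0 = m := by simp [ht₂]
    have e2 : RSsum Γ g t₂ s₂ (n - k)
        = g (Γ (s₂ 0)) * (Γ (t (k + 1)) - Γ m)
          + ∑ i ∈ Finset.Ico (k + 1) n, g (Γ (s i)) * (Γ (t (i + 1)) - Γ (t i)) := by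
      rw [RSsum, show n - k = (n - k - 1) + 1 by omega, Finset.sum_range_succ',
        Finset.sum_congr rfl key, Finset.sum_Ico_eq_sum_range,
        show n - (k + 1) = n - k - 1 by omega, show (0:ℕ) + 1 = 1 by omega, h0, h00]
      ring
    have e0 : RSsum Γ g t s n
        = (∑ i ∈ Finset.range k, g (Γ (s i)) * (Γ (t (i + 1)) - Γ (t i)))
          + g (Γ (s k)) * (Γ (t (k + 1)) - Γ (t k))
          + ∑ i ∈ Finset.Ico (k + 1) n, g (Γ (s i)) * (Γ (t (i + 1)) - Γ (t i)) := by
      rw [RSsum, Finset.range_eq_Ico, ← Finset.sum_Ico_consecutive _ (Nat.zero_le (k+1)) hkn,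
        ← Finset.range_eq_Ico, Finset.sum_range_succ]
    rw [e0, e1, e2]; ring

lemma abs_sub_le' (z w : ℂ) : ‖z - w‖ ≤ ‖z‖ + ‖w‖ := by
  exact norm_sub_le z w

lemma concat {a b : ℝ} {Γ : ℝ → ℂ} {g : ℂ → ℂ} {Bnd : ℝ} (hBnd0 : 0 ≤ Bnd)
    (hBnd : ∀ y ∈ Icc a b, ‖Γ y‖ ≤ Bnd)
    (hUC : ∀ ε > (0:ℝ), ∃ η > (0:ℝ), ∀ x ∈ Icc a b, ∀ y ∈ Icc a b,
      |x - y| < η → ‖g (Γ x) - g (Γ y)‖ < ε)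
    {c m d : ℝ} (hac : a ≤ c) (hdb : d ≤ b) (hcm : c ≤ m) (hmd : m < d)
    {I₁ I₂ : ℂ} (h₁ : IsRSIntegral Γ c m g I₁) (h₂ : IsRSIntegral Γ m d g I₂) :
    IsRSIntegral Γ c d g (I₁ + I₂) := by
  intro ε hε
  obtain ⟨δ₁, hδ₁, H₁⟩ := h₁ (ε/4) (by positivity)
  obtain ⟨δ₂, hδ₂, H₂⟩ := h₂ (ε/4) (by positivity)
  have hD : (0:ℝ) < 4 * Bnd + 1 := by linarith
  set ε' := ε / (2 * (4 * Bnd + 1)) with hε'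
  have hε'pos : 0 < ε' := by
    apply div_pos hε; linarith
  obtain ⟨η, hηpos, hUC'⟩ := hUC ε' hε'pos
  refine ⟨min δ₁ (min δ₂ η), by positivity, ?_⟩
  intro n t s ht0 htn hmono hmesh htag
  obtain ⟨k, hkn, hk1, hk2, t₁, s₁, t₂, s₂, hP1, hP2, hs₁k, hs₂0, _, _, _, _, hsum⟩ :=
    exists_split Γ g hcm hmd ht0 htn hmono hmesh htag
  have htin : ∀ i ≤ n, t i ∈ Icc c d := fun i hi =>
    ⟨ht0 ▸ ptmono hmono 0 i (Nat.zero_le _) hi, htn ▸ ptmono hmono i n hi le_rfl⟩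
  have hsub : Icc c d ⊆ Icc a b := Icc_subset_Icc hac hdb
  have hS₁ : ‖RSsum Γ g t₁ s₁ (k + 1) - I₁‖ < ε/4 :=
    H₁ (k+1) t₁ s₁ hP1.1 hP1.2.1 hP1.2.2.1
      (fun i hi => lt_of_lt_of_le (hP1.2.2.2.1 i hi) (min_le_left _ _)) hP1.2.2.2.2
  have hS₂ : ‖RSsum Γ g t₂ s₂ (n - k) - I₂‖ < ε/4 :=
    H₂ (n-k) t₂ s₂ hP2.1 hP2.2.1 hP2.2.2.1
      (fun i hi => lt_of_lt_of_le (hP2.2.2.2.1 i hi)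
        (le_trans (min_le_right _ _) (min_le_left _ _))) hP2.2.2.2.2
  have hskmem := htag k hkn
  have htk : t k ∈ Icc a b := hsub (htin k hkn.le)
  have htk1 : t (k+1) ∈ Icc a b := hsub (htin (k+1) hkn)
  have hmm : m ∈ Icc a b := ⟨le_trans hac hcm, le_trans hmd.le hdb⟩
  have hIcc : Icc (t k) (t (k+1)) ⊆ Icc a b := Icc_subset_Icc htk.1 htk1.2
  have hmesh' : t (k+1) - t k < η :=
    lt_of_lt_of_le (hmesh k hkn) (le_trans (min_le_right _ _) (min_le_right _ _))
  have hg1 : ‖g (Γ (s k)) - g (Γ (s₁ k))‖ < ε' := by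
    apply hUC' _ (hIcc hskmem) _ (hIcc hs₁k)
    rw [abs_lt]
    constructor <;>
      [linarith [hskmem.1, hskmem.2, hs₁k.1, hs₁k.2];
       linarith [hskmem.1, hskmem.2, hs₁k.1, hs₁k.2]]
  have hg2 : ‖g (Γ (s k)) - g (Γ (s₂ 0))‖ < ε' := by
    apply hUC' _ (hIcc hskmem) _ (hIcc hs₂0)
    rw [abs_lt]
    constructor <;>
      [linarith [hskmem.1, hskmem.2, hs₂0.1, hs₂0.2];
       linarith [hskmem.1, hskmem.2, hs₂0.1, hs₂0.2]]
  have hM1 : ‖Γ m - Γ (t k)‖ ≤ 2 * Bnd := by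
    have := abs_sub_le' (Γ m) (Γ (t k))
    have h1 := hBnd m hmm; have h2 := hBnd (t k) htk; linarith
  have hM2 : ‖Γ (t (k+1)) - Γ m‖ ≤ 2 * Bnd := by
    have := abs_sub_le' (Γ (t (k+1))) (Γ m)
    have h1 := hBnd (t (k+1)) htk1; have h2 := hBnd m hmm; linarith
  have hre : RSsum Γ g t s n - (I₁ + I₂)
      = (RSsum Γ g t₁ s₁ (k+1) - I₁) + (RSsum Γ g t₂ s₂ (n-k) - I₂)
        + (g (Γ (s k)) - g (Γ (s₁ k))) * (Γ m - Γ (t k))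
        + (g (Γ (s k)) - g (Γ (s₂ 0))) * (Γ (t (k+1)) - Γ m) := by
    rw [hsum]; ring
  show ‖RSsum Γ g t s n - (I₁ + I₂)‖ < ε
  rw [hre]
  have tri : ∀ w x y z : ℂ, ‖w + x + y + z‖
      ≤ ‖w‖ + ‖x‖ + ‖y‖ + ‖z‖ := by
    intro w x y z
    calc ‖w + x + y + z‖ ≤ ‖w + x + y‖ + ‖z‖ :=
          norm_add_le _ _
      _ ≤ ‖w + x‖ + ‖y‖ + ‖z‖ := by
          linarith [norm_add_le (w + x) y]
      _ ≤ ‖w‖ + ‖x‖ + ‖y‖ + ‖z‖ := by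
          linarith [norm_add_le w x]
  have h3 : ‖(g (Γ (s k)) - g (Γ (s₁ k))) * (Γ m - Γ (t k))‖ ≤ ε' * (2 * Bnd) := by
    rw [norm_mul]
    exact mul_le_mul hg1.le hM1 (by positivity) hε'pos.le
  have h4 : ‖(g (Γ (s k)) - g (Γ (s₂ 0))) * (Γ (t (k+1)) - Γ m)‖ ≤ ε' * (2 * Bnd) := by
    rw [norm_mul]
    exact mul_le_mul hg2.le hM2 (by positivity) hε'pos.le
  have hkey : ε' * (4 * Bnd + 1) = ε / 2 := by
    rw [hε']; field_simp
  have hkey2 : ε' * (2 * Bnd) + ε' * (2 * Bnd) < ε / 2 := by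
    have : ε' * (4 * Bnd) < ε' * (4 * Bnd + 1) := by
      apply mul_lt_mul_of_pos_left (by linarith) hε'pos
    nlinarith
  calc ‖_‖ ≤ _ := tri _ _ _ _
    _ < ε := by linarith [hS₁, hS₂, h3, h4]
lemma abs_add6 (u v w x y z : ℂ) : ‖u + v + w + x + y + z‖
    ≤ ‖u‖ + ‖v‖ + ‖w‖ + ‖x‖
      + ‖y‖ + ‖z‖ := by
  calc ‖u + v + w + x + y + z‖
      ≤ ‖u + v + w + x + y‖ + ‖z‖ := norm_add_le _ _
    _ ≤ ‖u + v + w + x‖ + ‖y‖ + ‖z‖ := by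
        linarith [norm_add_le (u + v + w + x) y]
    _ ≤ ‖u + v + w‖ + ‖x‖ + ‖y‖ + ‖z‖ := by
        linarith [norm_add_le (u + v + w) x]
    _ ≤ ‖u + v‖ + ‖w‖ + ‖x‖ + ‖y‖ + ‖z‖ := by
        linarith [norm_add_le (u + v) w]
    _ ≤ _ := by linarith [norm_add_le u v]

set_option maxHeartbeats 1000000 in
lemma rlimit {a b : ℝ} {Γ : ℝ → ℂ} {f g : ℂ → ℂ} {Gb Bnd Vb : ℝ}
    (hGb0 : 0 ≤ Gb) (hBnd0 : 0 ≤ Bnd) (hVb0 : 0 ≤ Vb)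
    (hGb : ∀ y ∈ Icc a b, ‖g (Γ y)‖ ≤ Gb)
    (hBnd : ∀ y ∈ Icc a b, ‖Γ y‖ ≤ Bnd)
    (hVar : ∀ (n : ℕ) (t : ℕ → ℝ), (∀ i < n, t i ≤ t (i+1)) → (∀ i ≤ n, t i ∈ Icc a b) →
      ∑ i ∈ Finset.range n, ‖Γ (t (i+1)) - Γ (t i)‖ ≤ Vb)
    (hUC : ∀ ε > (0:ℝ), ∃ η > (0:ℝ), ∀ x ∈ Icc a b, ∀ y ∈ Icc a b,
      |x - y| < η → ‖g (Γ x) - g (Γ y)‖ < ε)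
    {c x : ℝ} (hac : a ≤ c) (hxb : x ≤ b) (hcx : c < x)
    (hfx : ∀ ε > (0:ℝ), ∃ θ > (0:ℝ), ∀ y ∈ Icc a b, |y - x| < θ →
      ‖f (Γ y) - f (Γ x)‖ < ε)
    (hΓx : ∀ ε > (0:ℝ), ∃ θ > (0:ℝ), ∀ y ∈ Icc a b, |y - x| < θ →
      ‖Γ y - Γ x‖ < ε)
    (H : ∀ d₀, c < d₀ → d₀ < x → IsRSIntegral Γ c d₀ g (f (Γ d₀) - f (Γ c))) :
    IsRSIntegral Γ c x g (f (Γ x) - f (Γ c)) := by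
  intro ε hε
  have hD : (0:ℝ) < Vb + 4 * Bnd + 1 := by linarith
  set ε' := ε / (8 * (Vb + 4 * Bnd + 1)) with hε'
  have hε'pos : 0 < ε' := by apply div_pos hε; linarith
  obtain ⟨η, hηpos, hUC'⟩ := hUC ε' hε'pos
  obtain ⟨θ₁, hθ₁pos, hfx'⟩ := hfx (ε/8) (by positivity)
  have hGb1 : (0:ℝ) < 8 * (Gb + 1) := by linarith
  obtain ⟨θ₂, hθ₂pos, hΓx'⟩ := hΓx (ε/(8*(Gb+1))) (by positivity)
  set θ := min (min θ₁ θ₂) (min η (x - c)) / 2 with hθ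
  have hmm1 := min_le_left (min θ₁ θ₂) (min η (x - c))
  have hmm2 := min_le_right (min θ₁ θ₂) (min η (x - c))
  have hmm3 := min_le_left θ₁ θ₂; have hmm4 := min_le_right θ₁ θ₂
  have hmm5 := min_le_left η (x - c); have hmm6 := min_le_right η (x - c)
  have hθpos : 0 < θ := by
    apply div_pos _ two_pos
    exact lt_min (lt_min hθ₁pos hθ₂pos) (lt_min hηpos (by linarith))
  have hθθ₁ : θ < θ₁ := by rw [hθ]; linarith
  have hθθ₂ : θ < θ₂ := by rw [hθ]; linarith
  have hθη : θ < η := by rw [hθ]; linarith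
  have hθxc : θ < x - c := by rw [hθ]; linarith
  set d₀ := x - θ with hd₀
  have hcd₀ : c < d₀ := by rw [hd₀]; linarith
  have hd₀x : d₀ < x := by rw [hd₀]; linarith
  obtain ⟨δ₀, hδ₀pos, H₀⟩ := H d₀ hcd₀ hd₀x (ε/8) (by positivity)
  refine ⟨min δ₀ θ, lt_min hδ₀pos hθpos, ?_⟩
  intro n t s ht0 htn hmono hmesh htag
  obtain ⟨k, hkn, hk1, hk2, t₁, s₁, t₂, s₂, hP1, hP2, hs₁k, hs₂0, ht₂mem, hs₂mem, _, _, hsum⟩ :=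
    exists_split Γ g hcd₀.le hd₀x ht0 htn hmono hmesh htag
  have htin : ∀ i ≤ n, t i ∈ Icc c x := fun i hi =>
    ⟨ht0 ▸ ptmono hmono 0 i (Nat.zero_le _) hi, htn ▸ ptmono hmono i n hi le_rfl⟩
  have hsub : Icc c x ⊆ Icc a b := Icc_subset_Icc hac hxb
  have hsub2 : Icc d₀ x ⊆ Icc a b := Icc_subset_Icc (le_trans hac hcd₀.le) hxb
  have hS₁ : ‖RSsum Γ g t₁ s₁ (k + 1) - (f (Γ d₀) - f (Γ c))‖ < ε/8 :=
    H₀ (k+1) t₁ s₁ hP1.1 hP1.2.1 hP1.2.2.1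
      (fun i hi => lt_of_lt_of_le (hP1.2.2.2.1 i hi) (min_le_left _ _)) hP1.2.2.2.2
  have hskmem := htag k hkn
  have htk : t k ∈ Icc a b := hsub (htin k hkn.le)
  have htk1 : t (k+1) ∈ Icc a b := hsub (htin (k+1) hkn)
  have hxab : x ∈ Icc a b := ⟨le_trans hac hcx.le, hxb⟩
  have hd₀ab : d₀ ∈ Icc a b := ⟨le_trans hac hcd₀.le, le_trans hd₀x.le hxb⟩
  have hIcck : Icc (t k) (t (k+1)) ⊆ Icc a b := Icc_subset_Icc htk.1 htk1.2
  have hmeshk : t (k+1) - t k < η :=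
    lt_of_lt_of_le (hmesh k hkn) (le_trans (min_le_right _ _) hθη.le)
  have hg1 : ‖g (Γ (s k)) - g (Γ (s₁ k))‖ < ε' := by
    apply hUC' _ (hIcck hskmem) _ (hIcck hs₁k)
    rw [abs_lt]
    exact ⟨by linarith [hskmem.1, hskmem.2, hs₁k.1, hs₁k.2],
      by linarith [hskmem.1, hskmem.2, hs₁k.1, hs₁k.2]⟩
  have hg2 : ‖g (Γ (s k)) - g (Γ (s₂ 0))‖ < ε' := by
    apply hUC' _ (hIcck hskmem) _ (hIcck hs₂0)
    rw [abs_lt]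
    exact ⟨by linarith [hskmem.1, hskmem.2, hs₂0.1, hs₂0.2],
      by linarith [hskmem.1, hskmem.2, hs₂0.1, hs₂0.2]⟩
  have hM1 : ‖Γ d₀ - Γ (t k)‖ ≤ 2 * Bnd := by
    have := abs_sub_le' (Γ d₀) (Γ (t k))
    have h1 := hBnd d₀ hd₀ab; have h2 := hBnd (t k) htk; linarith
  have hM2 : ‖Γ (t (k+1)) - Γ d₀‖ ≤ 2 * Bnd := by
    have := abs_sub_le' (Γ (t (k+1))) (Γ d₀)
    have h1 := hBnd (t (k+1)) htk1; have h2 := hBnd d₀ hd₀ab; linarith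
  -- S₂ decomposition
  set N := n - k with hN
  have htel : ∑ i ∈ Finset.range N, (Γ (t₂ (i+1)) - Γ (t₂ i)) = Γ x - Γ d₀ := by
    rw [Finset.sum_range_sub (fun i => Γ (t₂ i)) N, hP2.2.1, hP2.1]
  have hS₂dec : RSsum Γ g t₂ s₂ N
      = (∑ i ∈ Finset.range N, (g (Γ (s₂ i)) - g (Γ x)) * (Γ (t₂ (i+1)) - Γ (t₂ i)))
        + g (Γ x) * (Γ x - Γ d₀) := by
    rw [RSsum, ← htel, Finset.mul_sum, ← Finset.sum_add_distrib]
    apply Finset.sum_congr rfl; intro i _; ring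
  have hDbound : ‖∑ i ∈ Finset.range N,
      (g (Γ (s₂ i)) - g (Γ x)) * (Γ (t₂ (i+1)) - Γ (t₂ i))‖ ≤ ε' * Vb := by
    calc ‖∑ i ∈ Finset.range N, (g (Γ (s₂ i)) - g (Γ x)) * (Γ (t₂ (i+1)) - Γ (t₂ i))‖
        ≤ ∑ i ∈ Finset.range N,
            ‖(g (Γ (s₂ i)) - g (Γ x)) * (Γ (t₂ (i+1)) - Γ (t₂ i))‖ :=
          norm_sum_le _ _
      _ ≤ ∑ i ∈ Finset.range N, ε' * ‖Γ (t₂ (i+1)) - Γ (t₂ i)‖ := by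
          apply Finset.sum_le_sum
          intro i hi
          rw [norm_mul]
          apply mul_le_mul _ le_rfl (by positivity) hε'pos.le
          apply le_of_lt
          apply hUC' _ (hsub2 (hs₂mem i (Finset.mem_range.mp hi))) _ hxab
          have hm := hs₂mem i (Finset.mem_range.mp hi)
          have hm1 := hm.1
          have hm2 := hm.2
          rw [abs_lt]
          exact ⟨by linarith, by linarith⟩
      _ = ε' * ∑ i ∈ Finset.range N, ‖Γ (t₂ (i+1)) - Γ (t₂ i)‖ :=
          (Finset.mul_sum _ _ _).symm
      _ ≤ ε' * Vb := by
          apply mul_le_mul_of_nonneg_left _ hε'pos.le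
          exact hVar N t₂ hP2.2.2.1 (fun i hi => hsub2 (ht₂mem i hi))
  have hgx : ‖g (Γ x)‖ ≤ Gb := hGb x hxab
  have hΓd₀x : ‖Γ x - Γ d₀‖ < ε/(8*(Gb+1)) := by
    have h := hΓx' d₀ hd₀ab (by rw [hd₀]; rw [abs_lt]; constructor <;> linarith)
    rwa [norm_sub_rev] at h
  have hterm : ‖g (Γ x) * (Γ x - Γ d₀)‖ ≤ ε/8 := by
    rw [norm_mul]
    have h1 : ‖g (Γ x)‖ * ‖Γ x - Γ d₀‖ ≤ Gb * (ε/(8*(Gb+1))) :=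
      mul_le_mul hgx hΓd₀x.le (by positivity) hGb0
    have h2 : Gb * (ε/(8*(Gb+1))) ≤ ε/8 := by
      rw [mul_div_assoc', div_le_div_iff₀ hGb1 (by norm_num : (0:ℝ) < 8)]
      nlinarith
    linarith
  have hfd₀ : ‖f (Γ d₀) - f (Γ x)‖ < ε/8 :=
    hfx' d₀ hd₀ab (by rw [hd₀]; rw [abs_lt]; constructor <;> linarith)
  have hre : RSsum Γ g t s n - (f (Γ x) - f (Γ c))
      = (RSsum Γ g t₁ s₁ (k+1) - (f (Γ d₀) - f (Γ c)))
        + (∑ i ∈ Finset.range N, (g (Γ (s₂ i)) - g (Γ x)) * (Γ (t₂ (i+1)) - Γ (t₂ i)))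
        + g (Γ x) * (Γ x - Γ d₀)
        + (f (Γ d₀) - f (Γ x))
        + (g (Γ (s k)) - g (Γ (s₁ k))) * (Γ d₀ - Γ (t k))
        + (g (Γ (s k)) - g (Γ (s₂ 0))) * (Γ (t (k+1)) - Γ d₀) := by
    rw [hsum, hS₂dec]; ring
  show ‖RSsum Γ g t s n - (f (Γ x) - f (Γ c))‖ < ε
  rw [hre]
  have h5 : ‖(g (Γ (s k)) - g (Γ (s₁ k))) * (Γ d₀ - Γ (t k))‖ ≤ ε' * (2 * Bnd) := by
    rw [norm_mul]; exact mul_le_mul hg1.le hM1 (by positivity) hε'pos.le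
  have h6 : ‖(g (Γ (s k)) - g (Γ (s₂ 0))) * (Γ (t (k+1)) - Γ d₀)‖ ≤ ε' * (2 * Bnd) := by
    rw [norm_mul]; exact mul_le_mul hg2.le hM2 (by positivity) hε'pos.le
  have hkey : ε' * (Vb + 4 * Bnd + 1) = ε / 8 := by
    rw [hε']; field_simp
  have hkey2 : ε' * Vb + ε' * (2 * Bnd) + ε' * (2 * Bnd) ≤ ε / 8 := by nlinarith
  calc ‖_‖ ≤ _ := abs_add6 _ _ _ _ _ _
    _ < ε := by linarith [hS₁, hDbound, hterm, hfd₀, h5, h6]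
set_option maxHeartbeats 1000000 in
lemma llimit {a b : ℝ} {Γ : ℝ → ℂ} {f g : ℂ → ℂ} {Gb Bnd Vb : ℝ}
    (hGb0 : 0 ≤ Gb) (hBnd0 : 0 ≤ Bnd) (hVb0 : 0 ≤ Vb)
    (hGb : ∀ y ∈ Icc a b, ‖g (Γ y)‖ ≤ Gb)
    (hBnd : ∀ y ∈ Icc a b, ‖Γ y‖ ≤ Bnd)
    (hVar : ∀ (n : ℕ) (t : ℕ → ℝ), (∀ i < n, t i ≤ t (i+1)) → (∀ i ≤ n, t i ∈ Icc a b) →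
      ∑ i ∈ Finset.range n, ‖Γ (t (i+1)) - Γ (t i)‖ ≤ Vb)
    (hUC : ∀ ε > (0:ℝ), ∃ η > (0:ℝ), ∀ x ∈ Icc a b, ∀ y ∈ Icc a b,
      |x - y| < η → ‖g (Γ x) - g (Γ y)‖ < ε)
    {c x : ℝ} (hac : a ≤ c) (hxb : x ≤ b) (hcx : c < x)
    (hfc : ∀ ε > (0:ℝ), ∃ θ > (0:ℝ), ∀ y ∈ Icc a b, |y - c| < θ →
      ‖f (Γ y) - f (Γ c)‖ < ε)
    (hΓcc : ∀ ε > (0:ℝ), ∃ θ > (0:ℝ), ∀ y ∈ Icc a b, |y - c| < θ →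
      ‖Γ y - Γ c‖ < ε)
    (H : ∀ c₀, c < c₀ → c₀ < x → IsRSIntegral Γ c₀ x g (f (Γ x) - f (Γ c₀))) :
    IsRSIntegral Γ c x g (f (Γ x) - f (Γ c)) := by
  intro ε hε
  have hD : (0:ℝ) < Vb + 4 * Bnd + 1 := by linarith
  set ε' := ε / (8 * (Vb + 4 * Bnd + 1)) with hε'
  have hε'pos : 0 < ε' := by apply div_pos hε; linarith
  obtain ⟨η, hηpos, hUC'⟩ := hUC ε' hε'pos
  obtain ⟨θ₁, hθ₁pos, hfc'⟩ := hfc (ε/8) (by positivity)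
  have hGb1 : (0:ℝ) < 8 * (Gb + 1) := by linarith
  obtain ⟨θ₂, hθ₂pos, hΓc'⟩ := hΓcc (ε/(8*(Gb+1))) (by positivity)
  set θ := min (min θ₁ θ₂) (min η (x - c)) / 2 with hθ
  have hmm1 := min_le_left (min θ₁ θ₂) (min η (x - c))
  have hmm2 := min_le_right (min θ₁ θ₂) (min η (x - c))
  have hmm3 := min_le_left θ₁ θ₂; have hmm4 := min_le_right θ₁ θ₂
  have hmm5 := min_le_left η (x - c); have hmm6 := min_le_right η (x - c)
  have hθpos : 0 < θ := by
    apply div_pos _ two_pos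
    exact lt_min (lt_min hθ₁pos hθ₂pos) (lt_min hηpos (by linarith))
  have hθθ₁ : θ < θ₁ := by rw [hθ]; linarith
  have hθθ₂ : θ < θ₂ := by rw [hθ]; linarith
  have hθη : θ < η := by rw [hθ]; linarith
  have hθxc : θ < x - c := by rw [hθ]; linarith
  set m := c + θ with hm
  have hcm : c < m := by rw [hm]; linarith
  have hmx : m < x := by rw [hm]; linarith
  obtain ⟨δ₀, hδ₀pos, H₀⟩ := H m hcm hmx (ε/8) (by positivity)
  refine ⟨min δ₀ θ, lt_min hδ₀pos hθpos, ?_⟩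
  intro n t s ht0 htn hmono hmesh htag
  obtain ⟨k, hkn, hk1, hk2, t₁, s₁, t₂, s₂, hP1, hP2, hs₁k, hs₂0, ht₂mem, hs₂mem,
      ht₁mem, hs₁mem, hsum⟩ :=
    exists_split Γ g hcm.le hmx ht0 htn hmono hmesh htag
  have htin : ∀ i ≤ n, t i ∈ Icc c x := fun i hi =>
    ⟨ht0 ▸ ptmono hmono 0 i (Nat.zero_le _) hi, htn ▸ ptmono hmono i n hi le_rfl⟩
  have hsub : Icc c x ⊆ Icc a b := Icc_subset_Icc hac hxb
  have hsub1 : Icc c m ⊆ Icc a b := Icc_subset_Icc hac (le_trans hmx.le hxb)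
  have hS₂ : ‖RSsum Γ g t₂ s₂ (n - k) - (f (Γ x) - f (Γ m))‖ < ε/8 :=
    H₀ (n - k) t₂ s₂ hP2.1 hP2.2.1 hP2.2.2.1
      (fun i hi => lt_of_lt_of_le (hP2.2.2.2.1 i hi) (min_le_left _ _)) hP2.2.2.2.2
  have hskmem := htag k hkn
  have htk : t k ∈ Icc a b := hsub (htin k hkn.le)
  have htk1 : t (k+1) ∈ Icc a b := hsub (htin (k+1) hkn)
  have hcab : c ∈ Icc a b := ⟨hac, le_trans hcx.le hxb⟩
  have hmab : m ∈ Icc a b := ⟨le_trans hac hcm.le, le_trans hmx.le hxb⟩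
  have hIcck : Icc (t k) (t (k+1)) ⊆ Icc a b := Icc_subset_Icc htk.1 htk1.2
  have hg1 : ‖g (Γ (s k)) - g (Γ (s₁ k))‖ < ε' := by
    apply hUC' _ (hIcck hskmem) _ (hIcck hs₁k)
    have hmk := lt_of_lt_of_le (hmesh k hkn) (le_trans (min_le_right _ _) hθη.le)
    rw [abs_lt]
    exact ⟨by linarith [hskmem.1, hskmem.2, hs₁k.1, hs₁k.2],
      by linarith [hskmem.1, hskmem.2, hs₁k.1, hs₁k.2]⟩
  have hg2 : ‖g (Γ (s k)) - g (Γ (s₂ 0))‖ < ε' := by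
    apply hUC' _ (hIcck hskmem) _ (hIcck hs₂0)
    have hmk := lt_of_lt_of_le (hmesh k hkn) (le_trans (min_le_right _ _) hθη.le)
    rw [abs_lt]
    exact ⟨by linarith [hskmem.1, hskmem.2, hs₂0.1, hs₂0.2],
      by linarith [hskmem.1, hskmem.2, hs₂0.1, hs₂0.2]⟩
  have hM1 : ‖Γ m - Γ (t k)‖ ≤ 2 * Bnd := by
    have := abs_sub_le' (Γ m) (Γ (t k))
    have h1 := hBnd m hmab; have h2 := hBnd (t k) htk; linarith
  have hM2 : ‖Γ (t (k+1)) - Γ m‖ ≤ 2 * Bnd := by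
    have := abs_sub_le' (Γ (t (k+1))) (Γ m)
    have h1 := hBnd (t (k+1)) htk1; have h2 := hBnd m hmab; linarith
  -- S₁ decomposition around the point c
  have htel : ∑ i ∈ Finset.range (k+1), (Γ (t₁ (i+1)) - Γ (t₁ i)) = Γ m - Γ c := by
    rw [Finset.sum_range_sub (fun i => Γ (t₁ i)) (k+1), hP1.2.1, hP1.1]
  have hS₁dec : RSsum Γ g t₁ s₁ (k+1)
      = (∑ i ∈ Finset.range (k+1), (g (Γ (s₁ i)) - g (Γ c)) * (Γ (t₁ (i+1)) - Γ (t₁ i)))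
        + g (Γ c) * (Γ m - Γ c) := by
    rw [RSsum, ← htel, Finset.mul_sum, ← Finset.sum_add_distrib]
    apply Finset.sum_congr rfl; intro i _; ring
  have hDbound : ‖∑ i ∈ Finset.range (k+1),
      (g (Γ (s₁ i)) - g (Γ c)) * (Γ (t₁ (i+1)) - Γ (t₁ i))‖ ≤ ε' * Vb := by
    calc ‖∑ i ∈ Finset.range (k+1),
          (g (Γ (s₁ i)) - g (Γ c)) * (Γ (t₁ (i+1)) - Γ (t₁ i))‖
        ≤ ∑ i ∈ Finset.range (k+1),
            ‖(g (Γ (s₁ i)) - g (Γ c)) * (Γ (t₁ (i+1)) - Γ (t₁ i))‖ :=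
          norm_sum_le _ _
      _ ≤ ∑ i ∈ Finset.range (k+1), ε' * ‖Γ (t₁ (i+1)) - Γ (t₁ i)‖ := by
          apply Finset.sum_le_sum
          intro i hi
          rw [norm_mul]
          apply mul_le_mul _ le_rfl (by positivity) hε'pos.le
          apply le_of_lt
          apply hUC' _ (hsub1 (hs₁mem i (Finset.mem_range.mp hi))) _ hcab
          have hmem := hs₁mem i (Finset.mem_range.mp hi)
          have hm1 := hmem.1; have hm2 := hmem.2
          rw [abs_lt]
          exact ⟨by linarith, by linarith⟩
      _ = ε' * ∑ i ∈ Finset.range (k+1), ‖Γ (t₁ (i+1)) - Γ (t₁ i)‖ :=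
          (Finset.mul_sum _ _ _).symm
      _ ≤ ε' * Vb := by
          apply mul_le_mul_of_nonneg_left _ hε'pos.le
          exact hVar (k+1) t₁ hP1.2.2.1 (fun i hi => hsub1 (ht₁mem i hi))
  have hgc : ‖g (Γ c)‖ ≤ Gb := hGb c hcab
  have hΓmc : ‖Γ m - Γ c‖ < ε/(8*(Gb+1)) :=
    hΓc' m hmab (by rw [hm]; rw [abs_lt]; constructor <;> linarith)
  have hterm : ‖g (Γ c) * (Γ m - Γ c)‖ ≤ ε/8 := by
    rw [norm_mul]
    have h1 : ‖g (Γ c)‖ * ‖Γ m - Γ c‖ ≤ Gb * (ε/(8*(Gb+1))) :=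
      mul_le_mul hgc hΓmc.le (by positivity) hGb0
    have h2 : Gb * (ε/(8*(Gb+1))) ≤ ε/8 := by
      rw [mul_div_assoc', div_le_div_iff₀ hGb1 (by norm_num : (0:ℝ) < 8)]
      nlinarith
    linarith
  have hfm : ‖f (Γ c) - f (Γ m)‖ < ε/8 := by
    have h := hfc' m hmab (by rw [hm]; rw [abs_lt]; constructor <;> linarith)
    rwa [norm_sub_rev] at h
  have hre : RSsum Γ g t s n - (f (Γ x) - f (Γ c))
      = (RSsum Γ g t₂ s₂ (n-k) - (f (Γ x) - f (Γ m)))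
        + (∑ i ∈ Finset.range (k+1), (g (Γ (s₁ i)) - g (Γ c)) * (Γ (t₁ (i+1)) - Γ (t₁ i)))
        + g (Γ c) * (Γ m - Γ c)
        + (f (Γ c) - f (Γ m))
        + (g (Γ (s k)) - g (Γ (s₁ k))) * (Γ m - Γ (t k))
        + (g (Γ (s k)) - g (Γ (s₂ 0))) * (Γ (t (k+1)) - Γ m) := by
    rw [hsum, hS₁dec]; ring
  show ‖RSsum Γ g t s n - (f (Γ x) - f (Γ c))‖ < ε
  rw [hre]
  have h5 : ‖(g (Γ (s k)) - g (Γ (s₁ k))) * (Γ m - Γ (t k))‖ ≤ ε' * (2 * Bnd) := by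
    rw [norm_mul]; exact mul_le_mul hg1.le hM1 (by positivity) hε'pos.le
  have h6 : ‖(g (Γ (s k)) - g (Γ (s₂ 0))) * (Γ (t (k+1)) - Γ m)‖ ≤ ε' * (2 * Bnd) := by
    rw [norm_mul]; exact mul_le_mul hg2.le hM2 (by positivity) hε'pos.le
  have hkey : ε' * (Vb + 4 * Bnd + 1) = ε / 8 := by
    rw [hε']; field_simp
  have hkey2 : ε' * Vb + ε' * (2 * Bnd) + ε' * (2 * Bnd) ≤ ε / 8 := by nlinarith
  calc ‖_‖ ≤ _ := abs_add6 _ _ _ _ _ _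
    _ < ε := by linarith [hS₂, hDbound, hterm, hfm, h5, h6]
set_option maxHeartbeats 1000000 in
theorem sierpinski {ι : Type} [Countable ι] {α β : ℝ} (hαβ : α < β) {F : ι → Set ℝ}
    (hcl : ∀ i, IsClosed (F i)) (hpw : ∀ i j, F i = F j ∨ Disjoint (F i) (F j))
    (hcov : ⋃ i, F i = Icc α β) : ∃ i, F i = Icc α β := by
  by_contra hno
  push_neg at hno
  set K := Icc α β with hK
  have hsub : ∀ i, F i ⊆ K := fun i => hcov ▸ subset_iUnion F i
  have hmem : ∀ x ∈ K, ∃ i, x ∈ F i := by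
    intro x hx
    have : x ∈ ⋃ i, F i := hcov ▸ hx
    exact mem_iUnion.mp this
  have key1 : ∀ i j (x : ℝ), x ∈ F i → x ∈ F j → F i = F j := by
    intro i j x hxi hxj
    rcases hpw i j with h | h
    · exact h
    · exact absurd hxj (Set.disjoint_left.mp h hxi)
  set Fr : ι → Set ℝ := fun i => F i ∩ closure (K \ F i) with hFr
  have hFrcl : ∀ i, IsClosed (Fr i) := fun i => (hcl i).inter isClosed_closure
  have hFrF : ∀ i, Fr i ⊆ F i := fun i => inter_subset_left
  set B := ⋃ i, Fr i with hB
  have hBK : B ⊆ K := by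
    intro x hx
    obtain ⟨i, hi⟩ := mem_iUnion.mp hx
    exact hsub i (hFrF i hi)
  have hBcl : IsClosed B := by
    rw [← closure_subset_iff_isClosed]
    intro x hx
    have hxK : x ∈ K := closure_minimal hBK isClosed_Icc hx
    obtain ⟨i, hxFi⟩ := hmem x hxK
    by_cases hxFr : x ∈ closure (K \ F i)
    · exact mem_iUnion.mpr ⟨i, hxFi, hxFr⟩
    · exfalso
      rw [Metric.mem_closure_iff] at hxFr
      push_neg at hxFr
      obtain ⟨ε, hεpos, hεsep⟩ := hxFr
      rw [Metric.mem_closure_iff] at hx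
      obtain ⟨y, hyB, hxy⟩ := hx (ε/2) (by positivity)
      obtain ⟨j, hyj⟩ := mem_iUnion.mp hyB
      have hyK : y ∈ K := hBK hyB
      have hyFi : y ∈ F i := by
        by_contra hyn
        exact absurd hxy (not_lt.mpr (le_trans (by linarith) (hεsep y ⟨hyK, hyn⟩)))
      have hFij : F j = F i := key1 j i y (hFrF j hyj) hyFi
      have hycl : y ∈ closure (K \ F i) := by
        have := hyj.2; rwa [hFij] at this
      rw [Metric.mem_closure_iff] at hycl
      obtain ⟨z, hz, hyz⟩ := hycl (ε/2) (by positivity)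
      have : dist x z < ε := by
        calc dist x z ≤ dist x y + dist y z := dist_triangle _ _ _
          _ < ε := by linarith
      exact absurd this (not_lt.mpr (hεsep z hz))
  have hBne : B.Nonempty := by
    by_contra hBe
    rw [not_nonempty_iff_eq_empty] at hBe
    obtain ⟨i₀, hi₀⟩ := hmem α ⟨le_refl α, hαβ.le⟩
    have hproper : ∃ w ∈ K, w ∉ F i₀ :=
      Set.exists_of_ssubset ((hsub i₀).ssubset_of_ne (hno i₀))
    obtain ⟨w, hwK, hwn⟩ := hproper
    have hconn := isPreconnected_Icc (a := α) (b := β)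
    rw [isPreconnected_iff_subset_of_fully_disjoint_closed isClosed_Icc] at hconn
    have hdisj : Disjoint (F i₀) (closure (K \ F i₀)) := by
      rw [disjoint_iff_inter_eq_empty]
      have : F i₀ ∩ closure (K \ F i₀) = Fr i₀ := rfl
      rw [this]
      have : Fr i₀ ⊆ B := subset_iUnion Fr i₀
      rw [hBe] at this
      exact eq_empty_of_subset_empty this
    have hcover : K ⊆ F i₀ ∪ closure (K \ F i₀) := by
      intro z hz
      by_cases hzF : z ∈ F i₀
      · exact Or.inl hzF
      · exact Or.inr (subset_closure ⟨hz, hzF⟩)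
    rcases hconn (F i₀) (closure (K \ F i₀)) (hcl i₀) isClosed_closure hcover hdisj with h | h
    · exact hwn (h hwK)
    · have : α ∈ Fr i₀ := ⟨hi₀, h ⟨le_refl α, hαβ.le⟩⟩
      have : α ∈ B := mem_iUnion.mpr ⟨i₀, this⟩
      rw [hBe] at this; exact this
  -- Baire category on B
  haveI : CompleteSpace B := hBcl.completeSpace_coe
  haveI : Nonempty B := hBne.to_subtype
  obtain ⟨i, hint⟩ := nonempty_interior_of_iUnion_of_closed
    (f := fun i => (Subtype.val ⁻¹' (Fr i) : Set B))
    (fun i => (hFrcl i).preimage continuous_subtype_val)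
    (by
      rw [eq_univ_iff_forall]
      intro z
      have : (z : ℝ) ∈ B := z.2
      obtain ⟨j, hj⟩ := mem_iUnion.mp this
      exact mem_iUnion.mpr ⟨j, hj⟩)
  obtain ⟨x, hx⟩ := hint
  rw [mem_interior_iff_mem_nhds] at hx
  have hxFr : (x : ℝ) ∈ Fr i := by
    have h := mem_of_mem_nhds hx
    exact h
  obtain ⟨u, hu, hus⟩ := (mem_nhds_subtype B x _).mp hx
  obtain ⟨ε, hεpos, hball⟩ := Metric.mem_nhds_iff.mp hu
  have hloc : ∀ z ∈ B, dist z (x : ℝ) < ε → z ∈ Fr i := by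
    intro z hzB hd
    have : (⟨z, hzB⟩ : B) ∈ Subtype.val ⁻¹' u := hball (Metric.mem_ball.mpr hd)
    exact hus this
  set x₀ := (x : ℝ) with hx₀
  have hx₀K : x₀ ∈ K := hsub i (hFrF i hxFr)
  obtain ⟨y, hy, hdxy⟩ := Metric.mem_closure_iff.mp hxFr.2 ε hεpos
  obtain ⟨j, hyFj⟩ := hmem y hy.1
  have hdisjij : Disjoint (F i) (F j) := by
    rcases hpw i j with h | h
    · exact absurd (h ▸ hyFj) hy.2
    · exact h
  have hyK : y ∈ K := hy.1
  rcases lt_trichotomy y x₀ with hlt | heq | hgt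
  · -- y < x₀
    set T := F j ∩ Icc y x₀ with hT
    have hTcomp : IsCompact T := isCompact_Icc.inter_left (hcl j)
    have hTne : T.Nonempty := ⟨y, hyFj, le_refl y, hlt.le⟩
    set z := sSup T with hz
    have hzT : z ∈ T := hTcomp.sSup_mem hTne
    have hzFj : z ∈ F j := hzT.1
    have hzy : y ≤ z := hzT.2.1
    have hzx₀ : z ≤ x₀ := hzT.2.2
    have hzne : z ≠ x₀ := fun h => (Set.disjoint_left.mp hdisjij hxFr.1) (h ▸ hzFj)
    have hzlt : z < x₀ := lt_of_le_of_ne hzx₀ hzne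
    have hzK : z ∈ K := ⟨le_trans hyK.1 hzy, le_trans hzx₀ hx₀K.2⟩
    have hzcl : z ∈ closure (K \ F j) := by
      rw [Metric.mem_closure_iff]
      intro ε' hε'
      refine ⟨min (z + ε'/2) ((z + x₀)/2), ⟨⟨?_, ?_⟩, ?_⟩, ?_⟩
      · have : z ≤ min (z + ε'/2) ((z + x₀)/2) := le_min (by linarith) (by linarith)
        linarith [hzK.1]
      · calc min (z + ε'/2) ((z + x₀)/2) ≤ (z + x₀)/2 := min_le_right _ _
          _ ≤ β := by linarith [hx₀K.2]
      · intro hwF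
        have hwT : min (z + ε'/2) ((z + x₀)/2) ∈ T := by
          refine ⟨hwF, ?_, ?_⟩
          · exact le_trans hzy (le_min (by linarith) (by linarith))
          · calc min (z + ε'/2) ((z + x₀)/2) ≤ (z + x₀)/2 := min_le_right _ _
              _ ≤ x₀ := by linarith
        have := le_csSup hTcomp.bddAbove hwT
        have hgtz : z < min (z + ε'/2) ((z + x₀)/2) := lt_min (by linarith) (by linarith)
        rw [← hz] at this
        linarith
      · rw [Real.dist_eq, abs_lt]
        constructor
        · have : min (z + ε'/2) ((z + x₀)/2) ≤ z + ε'/2 := min_le_left _ _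
          linarith
        · have : z < min (z + ε'/2) ((z + x₀)/2) := lt_min (by linarith) (by linarith)
          linarith
    have hzB : z ∈ B := mem_iUnion.mpr ⟨j, hzFj, hzcl⟩
    have hdzx : dist z x₀ < ε := by
      rw [Real.dist_eq, abs_lt]
      rw [Real.dist_eq] at hdxy
      have : |x₀ - y| < ε := hdxy
      rw [abs_lt] at this
      constructor <;> linarith
    have : z ∈ Fr i := hloc z hzB hdzx
    exact Set.disjoint_left.mp hdisjij this.1 hzFj
  · exact hy.2 (heq ▸ hxFr.1)
  · -- x₀ < y
    set T := F j ∩ Icc x₀ y with hT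
    have hTcomp : IsCompact T := isCompact_Icc.inter_left (hcl j)
    have hTne : T.Nonempty := ⟨y, hyFj, hgt.le, le_refl y⟩
    set z := sInf T with hz
    have hzT : z ∈ T := hTcomp.sInf_mem hTne
    have hzFj : z ∈ F j := hzT.1
    have hzy : z ≤ y := hzT.2.2
    have hzx₀ : x₀ ≤ z := hzT.2.1
    have hzne : z ≠ x₀ := fun h => (Set.disjoint_left.mp hdisjij hxFr.1) (h ▸ hzFj)
    have hzgt : x₀ < z := lt_of_le_of_ne hzx₀ (Ne.symm hzne)
    have hzK : z ∈ K := ⟨le_trans hx₀K.1 hzx₀, le_trans hzy hyK.2⟩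
    have hzcl : z ∈ closure (K \ F j) := by
      rw [Metric.mem_closure_iff]
      intro ε' hε'
      refine ⟨max (z - ε'/2) ((z + x₀)/2), ⟨⟨?_, ?_⟩, ?_⟩, ?_⟩
      · calc α ≤ x₀ := hx₀K.1
          _ ≤ (z + x₀)/2 := by linarith
          _ ≤ max (z - ε'/2) ((z + x₀)/2) := le_max_right _ _
      · have : max (z - ε'/2) ((z + x₀)/2) ≤ z := max_le (by linarith) (by linarith)
        linarith [hzK.2]
      · intro hwF
        have hwT : max (z - ε'/2) ((z + x₀)/2) ∈ T := by
          refine ⟨hwF, ?_, ?_⟩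
          · exact le_trans (by linarith : x₀ ≤ (z + x₀)/2) (le_max_right _ _)
          · exact le_trans (max_le (by linarith) (by linarith)) hzy
        have := csInf_le hTcomp.bddBelow hwT
        have hltz : max (z - ε'/2) ((z + x₀)/2) < z := max_lt (by linarith) (by linarith)
        rw [← hz] at this
        linarith
      · rw [Real.dist_eq, abs_lt]
        constructor
        · have : max (z - ε'/2) ((z + x₀)/2) < z := max_lt (by linarith) (by linarith)
          linarith
        · have : z - ε'/2 ≤ max (z - ε'/2) ((z + x₀)/2) := le_max_left _ _
          linarith
    have hzB : z ∈ B := mem_iUnion.mpr ⟨j, hzFj, hzcl⟩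
    have hdzx : dist z x₀ < ε := by
      rw [Real.dist_eq, abs_lt]
      rw [Real.dist_eq] at hdxy
      have : |x₀ - y| < ε := hdxy
      rw [abs_lt] at this
      constructor <;> linarith
    have : z ∈ Fr i := hloc z hzB hdzx
    exact Set.disjoint_left.mp hdisjij this.1 hzFj
def Ploc (Γ : ℝ → ℂ) (f g : ℂ → ℂ) (c d : ℝ) : Prop :=
  ∀ c' d', c ≤ c' → c' < d' → d' ≤ d → IsRSIntegral Γ c' d' g (f (Γ d') - f (Γ c'))

lemma Pmono {Γ : ℝ → ℂ} {f g : ℂ → ℂ} {c d c'' d'' : ℝ} (h : Ploc Γ f g c d)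
    (h1 : c ≤ c'') (h2 : d'' ≤ d) : Ploc Γ f g c'' d'' :=
  fun c' d' hc hcd hd => h c' d' (le_trans h1 hc) hcd (le_trans hd h2)

lemma Pglue {a b : ℝ} {Γ : ℝ → ℂ} {f g : ℂ → ℂ} {Bnd : ℝ} (hBnd0 : 0 ≤ Bnd)
    (hBnd : ∀ y ∈ Icc a b, ‖Γ y‖ ≤ Bnd)
    (hUC : ∀ ε > (0:ℝ), ∃ η > (0:ℝ), ∀ x ∈ Icc a b, ∀ y ∈ Icc a b,
      |x - y| < η → ‖g (Γ x) - g (Γ y)‖ < ε)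
    {c m d : ℝ} (hac : a ≤ c) (hdb : d ≤ b) (hcm : c ≤ m) (hmd : m ≤ d)
    (h1 : Ploc Γ f g c m) (h2 : Ploc Γ f g m d) : Ploc Γ f g c d := by
  intro c' d' hcc' hc'd' hd'd
  rcases le_or_gt d' m with h | h
  · exact h1 c' d' hcc' hc'd' h
  rcases le_or_gt m c' with h' | h'
  · exact h2 c' d' h' hc'd' hd'd
  · have hI := concat hBnd0 hBnd hUC (le_trans hac hcc') (le_trans hd'd hdb) h'.le h
      (h1 c' m hcc' h' le_rfl) (h2 m d' le_rfl h hd'd)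
    have heq : (f (Γ m) - f (Γ c')) + (f (Γ d') - f (Γ m)) = f (Γ d') - f (Γ c') := by ring
    rwa [heq] at hI

lemma Psup {a b : ℝ} {Γ : ℝ → ℂ} {f g : ℂ → ℂ} {Gb Bnd Vb : ℝ}
    (hGb0 : 0 ≤ Gb) (hBnd0 : 0 ≤ Bnd) (hVb0 : 0 ≤ Vb)
    (hGb : ∀ y ∈ Icc a b, ‖g (Γ y)‖ ≤ Gb)
    (hBnd : ∀ y ∈ Icc a b, ‖Γ y‖ ≤ Bnd)
    (hVar : ∀ (n : ℕ) (t : ℕ → ℝ), (∀ i < n, t i ≤ t (i+1)) → (∀ i ≤ n, t i ∈ Icc a b) →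
      ∑ i ∈ Finset.range n, ‖Γ (t (i+1)) - Γ (t i)‖ ≤ Vb)
    (hUC : ∀ ε > (0:ℝ), ∃ η > (0:ℝ), ∀ x ∈ Icc a b, ∀ y ∈ Icc a b,
      |x - y| < η → ‖g (Γ x) - g (Γ y)‖ < ε)
    (hfpt : ∀ x ∈ Icc a b, ∀ ε > (0:ℝ), ∃ θ > (0:ℝ), ∀ y ∈ Icc a b, |y - x| < θ →
      ‖f (Γ y) - f (Γ x)‖ < ε)
    (hΓpt : ∀ x ∈ Icc a b, ∀ ε > (0:ℝ), ∃ θ > (0:ℝ), ∀ y ∈ Icc a b, |y - x| < θ →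
      ‖Γ y - Γ x‖ < ε)
    {c x : ℝ} (hac : a ≤ c) (hxb : x ≤ b) (hcx : c < x)
    (H : ∀ d₀, c < d₀ → d₀ < x → Ploc Γ f g c d₀) : Ploc Γ f g c x := by
  intro c' d' hcc' hc'd' hd'x
  rcases lt_or_ge d' x with h | h
  · exact H ((d' + x)/2) (by linarith) (by linarith) c' d' hcc' hc'd' (by linarith)
  · have hd'eq : d' = x := le_antisymm hd'x h
    subst hd'eq
    have hxab : d' ∈ Icc a b := ⟨le_trans hac hcx.le, hxb⟩
    exact rlimit hGb0 hBnd0 hVb0 hGb hBnd hVar hUC (le_trans hac hcc') hxb hc'd'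
      (hfpt d' hxab) (hΓpt d' hxab)
      (fun d₀ h1 h2 => H ((d₀ + d')/2) (lt_of_le_of_lt hcc' (by linarith)) (by linarith)
        c' d₀ hcc' h1 (by linarith))

lemma Pinf {a b : ℝ} {Γ : ℝ → ℂ} {f g : ℂ → ℂ} {Gb Bnd Vb : ℝ}
    (hGb0 : 0 ≤ Gb) (hBnd0 : 0 ≤ Bnd) (hVb0 : 0 ≤ Vb)
    (hGb : ∀ y ∈ Icc a b, ‖g (Γ y)‖ ≤ Gb)
    (hBnd : ∀ y ∈ Icc a b, ‖Γ y‖ ≤ Bnd)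
    (hVar : ∀ (n : ℕ) (t : ℕ → ℝ), (∀ i < n, t i ≤ t (i+1)) → (∀ i ≤ n, t i ∈ Icc a b) →
      ∑ i ∈ Finset.range n, ‖Γ (t (i+1)) - Γ (t i)‖ ≤ Vb)
    (hUC : ∀ ε > (0:ℝ), ∃ η > (0:ℝ), ∀ x ∈ Icc a b, ∀ y ∈ Icc a b,
      |x - y| < η → ‖g (Γ x) - g (Γ y)‖ < ε)
    (hfpt : ∀ x ∈ Icc a b, ∀ ε > (0:ℝ), ∃ θ > (0:ℝ), ∀ y ∈ Icc a b, |y - x| < θ →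
      ‖f (Γ y) - f (Γ x)‖ < ε)
    (hΓpt : ∀ x ∈ Icc a b, ∀ ε > (0:ℝ), ∃ θ > (0:ℝ), ∀ y ∈ Icc a b, |y - x| < θ →
      ‖Γ y - Γ x‖ < ε)
    {c x : ℝ} (hac : a ≤ c) (hxb : x ≤ b) (hcx : c < x)
    (H : ∀ c₀, c < c₀ → c₀ < x → Ploc Γ f g c₀ x) : Ploc Γ f g c x := by
  intro c' d' hcc' hc'd' hd'x
  rcases lt_or_ge c c' with h | h
  · exact H ((c + c')/2) (by linarith) (by linarith) c' d' (by linarith) hc'd' hd'x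
  · have hceq : c' = c := le_antisymm h hcc'
    subst hceq
    have hcab : c' ∈ Icc a b := ⟨hac, le_trans hcx.le hxb⟩
    rcases lt_or_ge d' x with hd | hd
    · exact llimit hGb0 hBnd0 hVb0 hGb hBnd hVar hUC hac (le_trans hd.le hxb) hc'd'
        (hfpt c' hcab) (hΓpt c' hcab)
        (fun c₀ h1 h2 => H c₀ h1 (lt_trans h2 hd) c₀ d' le_rfl h2 hd.le)
    · have : d' = x := le_antisymm hd'x hd
      subst this
      exact llimit hGb0 hBnd0 hVb0 hGb hBnd hVar hUC hac hxb hc'd'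
        (hfpt c' hcab) (hΓpt c' hcab)
        (fun c₀ h1 h2 => H c₀ h1 h2 c₀ d' le_rfl h2 le_rfl)
set_option maxHeartbeats 1000000 in
lemma exists_max {a b : ℝ} {Γ : ℝ → ℂ} {f g : ℂ → ℂ} {Gb Bnd Vb : ℝ}
    (hGb0 : 0 ≤ Gb) (hBnd0 : 0 ≤ Bnd) (hVb0 : 0 ≤ Vb)
    (hGb : ∀ y ∈ Icc a b, ‖g (Γ y)‖ ≤ Gb)
    (hBnd : ∀ y ∈ Icc a b, ‖Γ y‖ ≤ Bnd)
    (hVar : ∀ (n : ℕ) (t : ℕ → ℝ), (∀ i < n, t i ≤ t (i+1)) → (∀ i ≤ n, t i ∈ Icc a b) →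
      ∑ i ∈ Finset.range n, ‖Γ (t (i+1)) - Γ (t i)‖ ≤ Vb)
    (hUC : ∀ ε > (0:ℝ), ∃ η > (0:ℝ), ∀ x ∈ Icc a b, ∀ y ∈ Icc a b,
      |x - y| < η → ‖g (Γ x) - g (Γ y)‖ < ε)
    (hfpt : ∀ x ∈ Icc a b, ∀ ε > (0:ℝ), ∃ θ > (0:ℝ), ∀ y ∈ Icc a b, |y - x| < θ →
      ‖f (Γ y) - f (Γ x)‖ < ε)
    (hΓpt : ∀ x ∈ Icc a b, ∀ ε > (0:ℝ), ∃ θ > (0:ℝ), ∀ y ∈ Icc a b, |y - x| < θ →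
      ‖Γ y - Γ x‖ < ε)
    {y c0 d0 : ℝ} (hac0 : a ≤ c0) (hc0d0 : c0 < d0) (hd0b : d0 ≤ b)
    (hy0 : y ∈ Icc c0 d0) (hP0 : Ploc Γ f g c0 d0) :
    ∃ p q, (a ≤ p ∧ p < q ∧ q ≤ b ∧ Ploc Γ f g p q) ∧ y ∈ Icc p q ∧
      ∀ p' q', a ≤ p' → q' ≤ b → Ploc Γ f g p' q' →
        (Icc p' q' ∩ Icc p q).Nonempty → Icc p' q' ⊆ Icc p q := by
  have hyab : y ∈ Icc a b := ⟨le_trans hac0 hy0.1, le_trans hy0.2 hd0b⟩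
  set U := {w | w ∈ Icc y b ∧ (w = y ∨ Ploc Γ f g y w)} with hU
  have hUne : U.Nonempty := ⟨y, ⟨le_refl y, hyab.2⟩, Or.inl rfl⟩
  have hUbdd : BddAbove U := ⟨b, fun w hw => hw.1.2⟩
  set q := sSup U with hq
  have hyq : y ≤ q := le_csSup hUbdd ⟨⟨le_refl y, hyab.2⟩, Or.inl rfl⟩
  have hqb : q ≤ b := csSup_le hUne (fun w hw => hw.1.2)
  have hPyq : Ploc Γ f g y q := by
    rcases eq_or_lt_of_le hyq with heq | hlt
    · intro c' d' h1 h2 h3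
      exact absurd h2 (not_lt.mpr (le_trans h3 (le_trans heq.symm.le h1)))
    · apply Psup hGb0 hBnd0 hVb0 hGb hBnd hVar hUC hfpt hΓpt hyab.1 hqb hlt
      intro d₀ h1 h2
      obtain ⟨w, hwU, hw⟩ := exists_lt_of_lt_csSup hUne h2
      rcases hwU.2 with rfl | hPw
      · exact absurd h1 (not_lt.mpr hw.le)
      · exact Pmono hPw le_rfl hw.le
  set L := {w | w ∈ Icc a y ∧ (w = y ∨ Ploc Γ f g w y)} with hL
  have hLne : L.Nonempty := ⟨y, ⟨hyab.1, le_refl y⟩, Or.inl rfl⟩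
  have hLbdd : BddBelow L := ⟨a, fun w hw => hw.1.1⟩
  set p := sInf L with hp
  have hpy : p ≤ y := csInf_le hLbdd ⟨⟨hyab.1, le_refl y⟩, Or.inl rfl⟩
  have hap : a ≤ p := le_csInf hLne (fun w hw => hw.1.1)
  have hPpy : Ploc Γ f g p y := by
    rcases eq_or_lt_of_le hpy with heq | hlt
    · intro c' d' h1 h2 h3
      exact absurd h2 (not_lt.mpr (le_trans h3 (le_trans heq.ge h1)))
    · apply Pinf hGb0 hBnd0 hVb0 hGb hBnd hVar hUC hfpt hΓpt hap hyab.2 hlt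
      intro c₀ h1 h2
      obtain ⟨w, hwL, hw⟩ := exists_lt_of_csInf_lt hLne h1
      rcases hwL.2 with rfl | hPw
      · exact absurd h2 (not_lt.mpr hw.le)
      · exact Pmono hPw hw.le le_rfl
  have hPpq : Ploc Γ f g p q :=
    Pglue hBnd0 hBnd hUC hap hqb hpy hyq hPpy hPyq
  have hpq : p < q := by
    rcases lt_or_ge y d0 with h | h
    · have hd0U : d0 ∈ U := ⟨⟨h.le, hd0b⟩, Or.inr (Pmono hP0 hy0.1 le_rfl)⟩
      have := le_csSup hUbdd hd0U
      linarith
    · have hyd0 : y = d0 := le_antisymm hy0.2 h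
      have hc0L : c0 ∈ L := by
        refine ⟨⟨hac0, hy0.1⟩, Or.inr ?_⟩
        rw [hyd0]
        exact hP0
      have := csInf_le hLbdd hc0L
      linarith
  refine ⟨p, q, ⟨hap, hpq, hqb, hPpq⟩, ⟨hpy, hyq⟩, ?_⟩
  intro p' q' hap' hq'b hP' ⟨z, hz1, hz2⟩
  have hPunion : Ploc Γ f g (min p p') (max q q') := by
    apply Pglue hBnd0 hBnd hUC (le_min hap hap') (max_le hqb hq'b)
      (le_trans (min_le_left _ _) hz2.1) (le_trans hz2.2 (le_max_left _ _))
    · rcases le_total p p' with h | h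
      · rw [min_eq_left h]; exact Pmono hPpq le_rfl hz2.2
      · rw [min_eq_right h]; exact Pmono hP' le_rfl hz1.2
    · rcases le_total q q' with h | h
      · rw [max_eq_right h]; exact Pmono hP' hz1.1 le_rfl
      · rw [max_eq_left h]; exact Pmono hPpq hz2.1 le_rfl
  have hmaxU : max q q' ∈ U := by
    refine ⟨⟨le_trans hyq (le_max_left _ _), max_le hqb hq'b⟩, Or.inr ?_⟩
    exact Pmono hPunion (le_trans (min_le_left _ _) hpy) le_rfl
  have hminL : min p p' ∈ L := by
    refine ⟨⟨le_min hap hap', le_trans (min_le_left _ _) hpy⟩, Or.inr ?_⟩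
    exact Pmono hPunion le_rfl (le_trans hyq (le_max_left _ _))
  have h1 : max q q' ≤ q := le_csSup hUbdd hmaxU
  have h2 : p ≤ min p p' := csInf_le hLbdd hminL
  exact Icc_subset_Icc (le_trans h2 (min_le_right _ _)) (le_trans (le_max_right _ _) h1)
end Stmt11Aux

open Stmt11Aux in
set_option maxHeartbeats 2000000 in
/-- With `E = ⋃𝓘` the union of all good intervals, either `E = [a,b]` or
`[a,b] \ E` is uncountable. -/
theorem stmt11 (a b : ℝ) (hab : a < b) (Γ : ℝ → ℂ)
    (hΓc : ContinuousOn Γ (Set.Icc a b)) (hΓbv : BoundedVariationOn Γ (Set.Icc a b))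
    (f g : ℂ → ℂ) (hf : ContinuousOn f (Γ '' Set.Icc a b))
    (hg : ContinuousOn g (Γ '' Set.Icc a b)) :
    ⋃₀ {J | GoodInterval Γ f g a b J} = Set.Icc a b ∨
      ¬ (Set.Icc a b \ ⋃₀ {J | GoodInterval Γ f g a b J}).Countable := by
  classical
  set ES := ⋃₀ {J | GoodInterval Γ f g a b J} with hES
  by_cases hcnt : (Set.Icc a b \ ES).Countable
  swap
  · exact Or.inr hcnt
  left
  have hEsub : ES ⊆ Icc a b := by
    rintro w ⟨J, hJ, hwJ⟩
    obtain ⟨c, d, hac, hcd, hdb, rfl, -⟩ := hJ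
    exact Icc_subset_Icc hac hdb hwJ
  refine Subset.antisymm hEsub ?_
  intro z hz
  by_contra hzE
  set S := Icc a b \ ES with hS
  have hSne : S.Nonempty := ⟨z, hz, hzE⟩
  -- constants and continuity facts
  have hcomp : IsCompact (Icc a b) := isCompact_Icc
  have hgΓ : ContinuousOn (fun y => g (Γ y)) (Icc a b) := hg.comp hΓc (mapsTo_image Γ _)
  have hfΓ : ContinuousOn (fun y => f (Γ y)) (Icc a b) := hf.comp hΓc (mapsTo_image Γ _)
  obtain ⟨G₀, hG₀⟩ := hcomp.exists_bound_of_continuousOn hgΓ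
  obtain ⟨B₀, hB₀⟩ := hcomp.exists_bound_of_continuousOn hΓc
  set Gb := max G₀ 0 with hGbdef
  set Bnd := max B₀ 0 with hBnddef
  have hGb0 : 0 ≤ Gb := le_max_right _ _
  have hBnd0 : 0 ≤ Bnd := le_max_right _ _
  have hGb : ∀ y ∈ Icc a b, ‖g (Γ y)‖ ≤ Gb := fun y hy =>
    le_trans (by exact hG₀ y hy) (le_max_left _ _)
  have hBnd : ∀ y ∈ Icc a b, ‖Γ y‖ ≤ Bnd := fun y hy =>
    le_trans (by exact hB₀ y hy) (le_max_left _ _)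
  set Vb := (eVariationOn Γ (Icc a b)).toReal with hVbdef
  have hVb0 : 0 ≤ Vb := ENNReal.toReal_nonneg
  have hVar : ∀ (n : ℕ) (t : ℕ → ℝ), (∀ i < n, t i ≤ t (i+1)) → (∀ i ≤ n, t i ∈ Icc a b) →
      ∑ i ∈ Finset.range n, ‖Γ (t (i+1)) - Γ (t i)‖ ≤ Vb := by
    intro n t hmono hmem
    set u : ℕ → ℝ := fun i => t (min i n) with hu
    have humono : Monotone u := fun i j hij =>
      ptmono hmono (min i n) (min j n) (min_le_min hij le_rfl) (min_le_right _ _)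
    have husmem : ∀ i, u i ∈ Icc a b := fun i => hmem _ (min_le_right _ _)
    have hsum := eVariationOn.sum_le (f := Γ) (n := n) humono husmem
    have h1 : ∀ i ∈ Finset.range n, ‖Γ (t (i+1)) - Γ (t i)‖
        = (edist (Γ (u (i+1))) (Γ (u i))).toReal := by
      intro i hi
      have hi' := Finset.mem_range.mp hi
      have e1 : u (i+1) = t (i+1) := by simp only [hu]; rw [min_eq_left (by omega)]
      have e2 : u i = t i := by simp only [hu]; rw [min_eq_left (by omega)]
      rw [e1, e2, edist_dist, ENNReal.toReal_ofReal dist_nonneg, Complex.dist_eq]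
    rw [Finset.sum_congr rfl h1, ← ENNReal.toReal_sum (fun i _ => edist_ne_top _ _)]
    exact ENNReal.toReal_mono hΓbv hsum
  have hUC : ∀ ε > (0:ℝ), ∃ η > (0:ℝ), ∀ x ∈ Icc a b, ∀ y ∈ Icc a b,
      |x - y| < η → ‖g (Γ x) - g (Γ y)‖ < ε := by
    intro ε hε
    obtain ⟨δ, hδ, h⟩ :=
      (Metric.uniformContinuousOn_iff.mp (hcomp.uniformContinuousOn_of_continuous hgΓ)) ε hε
    refine ⟨δ, hδ, fun x hx y hy hxy => ?_⟩
    have := h x hx y hy (by rwa [Real.dist_eq])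
    rwa [Complex.dist_eq] at this
  have hfpt : ∀ x ∈ Icc a b, ∀ ε > (0:ℝ), ∃ θ > (0:ℝ), ∀ y ∈ Icc a b, |y - x| < θ →
      ‖f (Γ y) - f (Γ x)‖ < ε := by
    intro x hx ε hε
    have hc := hfΓ x hx
    rw [Metric.continuousWithinAt_iff] at hc
    obtain ⟨δ, hδ, h⟩ := hc ε hε
    refine ⟨δ, hδ, fun y hy hyx => ?_⟩
    have := h hy (by rwa [Real.dist_eq])
    rwa [Complex.dist_eq] at this
  have hΓpt : ∀ x ∈ Icc a b, ∀ ε > (0:ℝ), ∃ θ > (0:ℝ), ∀ y ∈ Icc a b, |y - x| < θ →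
      ‖Γ y - Γ x‖ < ε := by
    intro x hx ε hε
    have hc := hΓc x hx
    rw [Metric.continuousWithinAt_iff] at hc
    obtain ⟨δ, hδ, h⟩ := hc ε hε
    refine ⟨δ, hδ, fun y hy hyx => ?_⟩
    have := h hy (by rwa [Real.dist_eq])
    rwa [Complex.dist_eq] at this
  -- enumeration of the exceptional set
  obtain ⟨σ, hσ⟩ := hcnt.exists_eq_range hSne
  -- maximal intervals
  set MP : ℝ × ℝ → Prop := fun pr =>
    (a ≤ pr.1 ∧ pr.1 < pr.2 ∧ pr.2 ≤ b ∧ Ploc Γ f g pr.1 pr.2) ∧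
    ∀ p' q', a ≤ p' → q' ≤ b → Ploc Γ f g p' q' →
      (Icc p' q' ∩ Icc pr.1 pr.2).Nonempty → Icc p' q' ⊆ Icc pr.1 pr.2 with hMP
  have hMaxI : ∀ w ∈ ES, ∃ pr : ℝ × ℝ, MP pr ∧ w ∈ Icc pr.1 pr.2 := by
    rintro w ⟨J, hJ, hwJ⟩
    obtain ⟨c0, d0, hac0, hc0d0, hd0b, rfl, hP0⟩ := hJ
    obtain ⟨p, q, hpq1, hpq2, hpq3⟩ := exists_max hGb0 hBnd0 hVb0 hGb hBnd hVar hUC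
      hfpt hΓpt hac0 hc0d0 hd0b hwJ hP0
    exact ⟨(p, q), ⟨⟨hpq1.1, hpq1.2.1, hpq1.2.2.1, hpq1.2.2.2⟩, hpq3⟩, hpq2⟩
  have hMPsub : ∀ pr : ℝ × ℝ, MP pr → Icc pr.1 pr.2 ⊆ ES := by
    intro pr hpr w hw
    exact ⟨Icc pr.1 pr.2, ⟨pr.1, pr.2, hpr.1.1, hpr.1.2.1, hpr.1.2.2.1, rfl, hpr.1.2.2.2⟩, hw⟩
  have hMaxEq : ∀ pr pr' : ℝ × ℝ, MP pr → MP pr' →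
      (Icc pr.1 pr.2 ∩ Icc pr'.1 pr'.2).Nonempty → Icc pr.1 pr.2 = Icc pr'.1 pr'.2 := by
    rintro pr pr' h h' ⟨w, hw1, hw2⟩
    apply Subset.antisymm
    · exact h'.2 pr.1 pr.2 h.1.1 h.1.2.2.1 h.1.2.2.2 ⟨w, hw1, hw2⟩
    · exact h.2 pr'.1 pr'.2 h'.1.1 h'.1.2.2.1 h'.1.2.2.2 ⟨w, hw2, hw1⟩
  -- the countable closed family
  set F : ℚ ⊕ ℕ → Set ℝ := fun i => Sum.elim
    (fun qq : ℚ => if h : ∃ pr : ℝ × ℝ, MP pr ∧ pr.1 < (qq:ℝ) ∧ (qq:ℝ) < pr.2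
      then Icc (Classical.choose h).1 (Classical.choose h).2 else ∅)
    (fun n => {σ n}) i with hF
  have hFinl : ∀ (qq : ℚ) (h : ∃ pr : ℝ × ℝ, MP pr ∧ pr.1 < (qq:ℝ) ∧ (qq:ℝ) < pr.2),
      F (Sum.inl qq) = Icc (Classical.choose h).1 (Classical.choose h).2 := by
    intro qq h
    simp only [hF, Sum.elim_inl]
    rw [dif_pos h]
  have hFinl' : ∀ qq : ℚ, ¬ (∃ pr : ℝ × ℝ, MP pr ∧ pr.1 < (qq:ℝ) ∧ (qq:ℝ) < pr.2) →
      F (Sum.inl qq) = ∅ := by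
    intro qq h
    simp only [hF, Sum.elim_inl]
    rw [dif_neg h]
  have hFinr : ∀ n, F (Sum.inr n) = {σ n} := by
    intro n; simp only [hF, Sum.elim_inr]
  have hFshape : ∀ i, F i = ∅ ∨ (∃ pr : ℝ × ℝ, MP pr ∧ F i = Icc pr.1 pr.2) ∨
      (∃ x ∈ S, F i = {x}) := by
    intro i
    rcases i with qq | n
    · by_cases h : ∃ pr : ℝ × ℝ, MP pr ∧ pr.1 < (qq:ℝ) ∧ (qq:ℝ) < pr.2
      · exact Or.inr (Or.inl ⟨Classical.choose h, (Classical.choose_spec h).1, hFinl qq h⟩)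
      · exact Or.inl (hFinl' qq h)
    · refine Or.inr (Or.inr ⟨σ n, ?_, hFinr n⟩)
      rw [hσ]; exact mem_range_self n
  have hcl : ∀ i, IsClosed (F i) := by
    intro i
    rcases hFshape i with h | ⟨pr, _, h⟩ | ⟨x, _, h⟩ <;> rw [h]
    · exact isClosed_empty
    · exact isClosed_Icc
    · exact isClosed_singleton
  have hpw : ∀ i j, F i = F j ∨ Disjoint (F i) (F j) := by
    intro i j
    rcases hFshape i with hi | ⟨pr, hpr, hi⟩ | ⟨x, hxS, hi⟩
    · right; rw [hi]; exact Set.empty_disjoint _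
    · rcases hFshape j with hj | ⟨pr', hpr', hj⟩ | ⟨x', hx'S, hj⟩
      · right; rw [hj]; exact (Set.empty_disjoint _).symm
      · by_cases hne : (Icc pr.1 pr.2 ∩ Icc pr'.1 pr'.2).Nonempty
        · left; rw [hi, hj]; exact hMaxEq pr pr' hpr hpr' hne
        · right; rw [hi, hj, Set.disjoint_iff_inter_eq_empty]
          exact not_nonempty_iff_eq_empty.mp hne
      · right; rw [hi, hj, Set.disjoint_singleton_right]
        exact fun hmem => hx'S.2 (hMPsub pr hpr hmem)
    · rcases hFshape j with hj | ⟨pr', hpr', hj⟩ | ⟨x', hx'S, hj⟩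
      · right; rw [hj]; exact (Set.empty_disjoint _).symm
      · right; rw [hi, hj, Set.disjoint_singleton_left]
        exact fun hmem => hxS.2 (hMPsub pr' hpr' hmem)
      · by_cases hxx : x = x'
        · left; rw [hi, hj, hxx]
        · right; rw [hi, hj, Set.disjoint_singleton_left, mem_singleton_iff]
          exact hxx
  have hcov : ⋃ i, F i = Icc a b := by
    apply Subset.antisymm
    · apply iUnion_subset
      intro i
      rcases hFshape i with h | ⟨pr, hpr, h⟩ | ⟨x, hxS, h⟩ <;> rw [h]
      · exact empty_subset _
      · exact subset_trans (hMPsub pr hpr) hEsub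
      · exact singleton_subset_iff.mpr hxS.1
    · intro w hw
      by_cases hwE : w ∈ ES
      · obtain ⟨pr, hpr, hwpr⟩ := hMaxI w hwE
        obtain ⟨qq, hq1, hq2⟩ := exists_rat_btwn hpr.1.2.1
        have hex : ∃ pr' : ℝ × ℝ, MP pr' ∧ pr'.1 < (qq:ℝ) ∧ (qq:ℝ) < pr'.2 :=
          ⟨pr, hpr, hq1, hq2⟩
        refine mem_iUnion.mpr ⟨Sum.inl qq, ?_⟩
        rw [hFinl qq hex]
        have hspec := Classical.choose_spec hex
        have heq := hMaxEq _ _ hspec.1 hpr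
          ⟨(qq:ℝ), ⟨hspec.2.1.le, hspec.2.2.le⟩, ⟨hq1.le, hq2.le⟩⟩
        rw [heq]
        exact hwpr
      · have hwr : w ∈ range σ := by rw [← hσ]; exact ⟨hw, hwE⟩
        obtain ⟨n, hn⟩ := hwr
        exact mem_iUnion.mpr ⟨Sum.inr n, by rw [hFinr n]; exact mem_singleton_iff.mpr hn.symm⟩
  obtain ⟨i, hi⟩ := sierpinski hab hcl hpw hcov
  rcases hFshape i with h | ⟨pr, hpr, h⟩ | ⟨x, hxS, h⟩
  · rw [h] at hi
    have hne : (Icc a b).Nonempty := nonempty_Icc.mpr hab.le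
    rw [← hi] at hne
    exact Set.not_nonempty_empty hne
  · rw [h] at hi
    have hsub2 := hMPsub pr hpr
    rw [hi] at hsub2
    obtain ⟨w, hwS⟩ := hSne
    exact hwS.2 (hsub2 hwS.1)
  · rw [h] at hi
    have ha : a ∈ ({x} : Set ℝ) := hi.symm ▸ (⟨le_refl a, hab.le⟩ : a ∈ Icc a b)
    have hb : b ∈ ({x} : Set ℝ) := hi.symm ▸ (⟨hab.le, le_refl b⟩ : b ∈ Icc a b)
    rw [mem_singleton_iff] at ha hb
    exact absurd (ha.trans hb.symm) (ne_of_lt hab)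
end

section
/- Let F(z) = z^{1+i} on D₀, and let z, w ∈ D₀ with z in the second quadrant and w in the third quadrant. Then |F(z) − F(w)| ≥ |z| − e^{π}|z − w|. -/
open Complex Set

/-- For `F(z) = z^{1+i}` on `D₀ = ℂ \ (−∞,0]`, if `z` lies in the second quadrant and
`w` in the third quadrant, then `|F(z) − F(w)| ≥ |z| − e^{π}|z − w|`. -/
theorem stmt15 (z w : ℂ)
    (hz : 0 < z.re ∨ z.im ≠ 0) (hz2 : z.re ≤ 0) (hz3 : 0 ≤ z.im)
    (hw : 0 < w.re ∨ w.im ≠ 0) (hw2 : w.re ≤ 0) (hw3 : w.im < 0) :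
    ‖z‖ - Real.exp Real.pi * ‖z - w‖ ≤
      ‖z ^ ((1 : ℂ) + Complex.I) - w ^ ((1 : ℂ) + Complex.I)‖ := by
  have hzim : 0 < z.im := lt_of_le_of_ne hz3 (by
    rcases hz with h | h
    · exact absurd hz2 h.not_ge
    · exact Ne.symm h)
  have hzne : z ≠ 0 := fun h => by simp [h] at hzim
  have hwne : w ≠ 0 := fun h => by simp [h] at hw3
  set a := z ^ Complex.I with ha
  set b := w ^ Complex.I with hb
  -- abs of a and b
  have habs_a : ‖a‖ = 1 / Real.exp (Complex.arg z) := by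
    rw [ha, Complex.norm_cpow_of_ne_zero hzne]
    simp
  have habs_b : ‖b‖ = 1 / Real.exp (Complex.arg w) := by
    rw [hb, Complex.norm_cpow_of_ne_zero hwne]
    simp
  -- arg bounds
  have hargz : Real.pi / 2 ≤ Complex.arg z := by
    by_contra h
    push_neg at h
    rw [Complex.arg_lt_pi_div_two_iff] at h
    rcases h with h | h | h
    · exact absurd hz2 h.not_ge
    · exact absurd hz3 h.not_ge
    · exact hzne h
  have hargw_le : Complex.arg w ≤ -(Real.pi / 2) := by
    by_contra h
    push_neg at h
    rw [Complex.neg_pi_div_two_lt_arg_iff] at h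
    rcases h with h | h
    · exact absurd hw2 h.not_ge
    · exact absurd h hw3.not_ge
  have hargw_gt : -Real.pi < Complex.arg w := Complex.neg_pi_lt_arg w
  have hpi : (1 : ℝ) ≤ Real.pi / 2 := by
    linarith [Real.pi_gt_three]
  -- |a| ≤ exp(-(π/2)) ≤ 1
  have ha_le : ‖a‖ ≤ Real.exp (-(Real.pi / 2)) := by
    rw [habs_a, Real.exp_neg, one_div]
    exact inv_anti₀ (Real.exp_pos _) (Real.exp_le_exp.2 hargz)
  have ha_le1 : ‖a‖ ≤ 1 := ha_le.trans (by
    rw [Real.exp_le_one_iff]; linarith)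
  -- |b| ≥ exp(π/2) ≥ 2, |b| ≤ exp π
  have hb_ge : Real.exp (Real.pi / 2) ≤ ‖b‖ := by
    rw [habs_b, one_div, ← Real.exp_neg]
    exact Real.exp_le_exp.2 (by linarith)
  have hb_ge2 : (2 : ℝ) ≤ ‖b‖ := by
    have := Real.add_one_le_exp (1 : ℝ)
    have h2 : Real.exp 1 ≤ Real.exp (Real.pi / 2) := Real.exp_le_exp.2 hpi
    linarith
  have hb_le : ‖b‖ ≤ Real.exp Real.pi := by
    rw [habs_b, one_div, ← Real.exp_neg]
    exact Real.exp_le_exp.2 (by linarith)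
  -- |a - b| ≥ 1
  have hab : (1 : ℝ) ≤ ‖a - b‖ := by
    have h := norm_sub_norm_le b a
    rw [norm_sub_rev b a] at h
    linarith
  -- decomposition
  have hdecomp : z ^ ((1 : ℂ) + Complex.I) - w ^ ((1 : ℂ) + Complex.I)
      = (a - b) * z + b * (z - w) := by
    rw [Complex.cpow_add _ _ hzne, Complex.cpow_add _ _ hwne, Complex.cpow_one,
      Complex.cpow_one, ← ha, ← hb]
    ring
  rw [hdecomp]
  have h1 : ‖(a - b) * z‖ - ‖b * (z - w)‖
      ≤ ‖(a - b) * z + b * (z - w)‖ := by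
    have h := norm_sub_norm_le ((a - b) * z) (-(b * (z - w)))
    simp only [sub_neg_eq_add, norm_neg] at h
    exact h
  have h2 : ‖z‖ ≤ ‖(a - b) * z‖ := by
    rw [norm_mul]
    nlinarith [norm_nonneg z, norm_nonneg (a - b)]
  have h3 : ‖b * (z - w)‖ ≤ Real.exp Real.pi * ‖z - w‖ := by
    rw [norm_mul]
    exact mul_le_mul_of_nonneg_right hb_le (norm_nonneg _)
  linarith
end
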